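/- arXiv:2012.14992 — 7 statements merged into one kernel-verified Lean document; each statement's English description precedes it below -/
import Mathlib

section
/- Let G be a (simple, undirected) graph and let F_1, …, F_n be matchings in G, each of size n. Then there exists a rainbow matching of size at least (2/3)n − 4/3; that is, there exist indices i_1 < i_2 < … < i_k with k ≥ (2/3)n − 4/3 and edges e_{i_j} ∈ F_{i_j} that are pairwise disjoint. -/
set_option linter.unusedSectionVars false
set_option maxHeartbeats 1000000

section Helpers
variable {V : Type*} [DecidableEq V]

/-- The pair of vertices of an unordered pair, as a `Finset`. -/
def s2F (e : Sym2 V) : Finset V :=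
  Sym2.lift ⟨fun a b => {a, b}, fun a b => Finset.pair_comm a b⟩ e

@[simp] lemma mem_s2F {e : Sym2 V} {v : V} : v ∈ s2F e ↔ v ∈ e := by
  induction e using Sym2.ind with
  | _ a b => simp [s2F, Sym2.mem_iff]

lemma s2F_card {e : Sym2 V} (h : ¬ e.IsDiag) : (s2F e).card = 2 := by
  induction e using Sym2.ind with
  | _ a b =>
    rw [Sym2.mk_isDiag_iff] at h
    simp [s2F, Finset.card_pair h]

lemma sym2_rep (e : Sym2 V) : ∃ a b, e = s(a, b) := by
  induction e using Sym2.ind with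
  | _ a b => exact ⟨a, b, rfl⟩

lemma sym2_mem_elim {e : Sym2 V} {a b : V} (ha : a ∈ e) (hb : b ∈ e) (hab : a ≠ b) :
    ∀ c ∈ e, c = a ∨ c = b := by
  have he : e = s(a, b) := (Sym2.mem_and_mem_iff hab).mp ⟨ha, hb⟩
  subst he
  intro c hc
  exact Sym2.mem_iff.mp hc

end Helpers

/-- If `F₁, …, Fₙ` are matchings of size `n` in a simple graph `G`,
then there is a rainbow matching of size at least `(2/3)n - 4/3`. -/
theorem stmt_0 {V : Type*} (G : SimpleGraph V) (n : ℕ)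
    (F : Fin n → Finset (Sym2 V))
    (hedges : ∀ i, ∀ e ∈ F i, e ∈ G.edgeSet)
    (hmatch : ∀ i, ∀ e ∈ F i, ∀ f ∈ F i, e ≠ f → ∀ v, v ∈ e → v ∉ f)
    (hsize : ∀ i, (F i).card = n) :
    ∃ (I : Finset (Fin n)) (c : Fin n → Sym2 V),
      (∀ i ∈ I, c i ∈ F i) ∧
      (∀ i ∈ I, ∀ j ∈ I, i ≠ j → ∀ v, v ∈ c i → v ∉ c j) ∧
      (2 / 3 : ℝ) * n - 4 / 3 ≤ (I.card : ℝ) := by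
  classical
  -- trivial case n = 0
  rcases Nat.eq_zero_or_pos n with hn | hnpos
  · subst hn
    refine ⟨∅, fun i => i.elim0, by simp, by simp, by norm_num⟩
  -- a default edge
  obtain ⟨e₀, he₀⟩ : ∃ e, e ∈ F ⟨0, hnpos⟩ :=
    Finset.card_pos.mp (by rw [hsize]; exact hnpos)
  haveI hV : Nonempty V := by
    obtain ⟨a, b, -⟩ := sym2_rep e₀
    exact ⟨a⟩
  -- valid rainbow matchings
  set Valid : Finset (Fin n) → Prop := fun I => ∃ c : Fin n → Sym2 V,
    (∀ i ∈ I, c i ∈ F i) ∧ (∀ i ∈ I, ∀ j ∈ I, i ≠ j → ∀ v, v ∈ c i → v ∉ c j) with hValid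
  have hval0 : Valid ∅ := ⟨fun _ => e₀, by simp, by simp⟩
  -- a maximum rainbow matching
  obtain ⟨I₀, hI₀v, hI₀max⟩ : ∃ I, Valid I ∧ ∀ J, Valid J → J.card ≤ I.card := by
    obtain ⟨I₀, hmem, hmax⟩ := Finset.exists_max_image
      (Finset.univ.filter fun I => Valid I) Finset.card
      ⟨∅, by simp [hval0]⟩
    exact ⟨I₀, (Finset.mem_filter.mp hmem).2,
      fun J hJ => hmax J (Finset.mem_filter.mpr ⟨Finset.mem_univ J, hJ⟩)⟩
  obtain ⟨c₀, hc₀F, hc₀d⟩ := hI₀v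
  set k := I₀.card with hk
  -- reduce to a counting statement
  suffices hfin : 2 * n ≤ 3 * k + 4 by
    refine ⟨I₀, c₀, hc₀F, hc₀d, ?_⟩
    have : (2 * n : ℝ) ≤ 3 * k + 4 := by exact_mod_cast hfin
    linarith
  by_contra hbig
  have h5 : 3 * k + 5 ≤ 2 * n := by omega
  have hkn : k ≤ n := by
    calc k ≤ (Finset.univ : Finset (Fin n)).card := Finset.card_le_univ I₀
    _ = n := by simp
  -- the vertex set of the maximum rainbow matching
  set W : Finset V := I₀.biUnion (fun i => s2F (c₀ i)) with hW
  have hWmem : ∀ v, v ∈ W ↔ ∃ i ∈ I₀, v ∈ c₀ i := by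
    intro v; simp [hW]
  have hnd : ∀ i ∈ I₀, ¬ (c₀ i).IsDiag := fun i hi =>
    G.not_isDiag_of_mem_edgeSet (hedges i _ (hc₀F i hi))
  have hndF : ∀ x, ∀ f ∈ F x, ¬ (f : Sym2 V).IsDiag := fun x f hf =>
    G.not_isDiag_of_mem_edgeSet (hedges x f hf)
  have hWcard : W.card ≤ 2 * k := by
    calc W.card ≤ ∑ i ∈ I₀, (s2F (c₀ i)).card := Finset.card_biUnion_le
    _ ≤ ∑ _i ∈ I₀, 2 := Finset.sum_le_sum (fun i hi => le_of_eq (s2F_card (hnd i hi)))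
    _ = 2 * k := by rw [Finset.sum_const, smul_eq_mul, mul_comm]
  -- Fact (1): every edge of a free colour meets W
  have key1 : ∀ x, x ∉ I₀ → ∀ f ∈ F x, ∃ v, v ∈ f ∧ v ∈ W := by
    intro x hx f hf
    by_contra hcon
    push_neg at hcon
    have hval : Valid (insert x I₀) := by
      refine ⟨Function.update c₀ x f, ?_, ?_⟩
      · intro i hi
        rcases Finset.mem_insert.mp hi with rfl | hi'
        · rw [Function.update_self]; exact hf
        · rw [Function.update_of_ne (by rintro rfl; exact hx hi')]
          exact hc₀F i hi'
      · intro i hi j hj hij w hwi hwj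
        rcases Finset.mem_insert.mp hi with rfl | hi' <;>
          rcases Finset.mem_insert.mp hj with rfl | hj'
        · exact hij rfl
        · rw [Function.update_self] at hwi
          rw [Function.update_of_ne (by rintro rfl; exact hx hj')] at hwj
          exact hcon w hwi ((hWmem w).mpr ⟨j, hj', hwj⟩)
        · rw [Function.update_of_ne (by rintro rfl; exact hx hi')] at hwi
          rw [Function.update_self] at hwj
          exact hcon w hwj ((hWmem w).mpr ⟨i, hi', hwi⟩)
        · rw [Function.update_of_ne (by rintro rfl; exact hx hi')] at hwi
          rw [Function.update_of_ne (by rintro rfl; exact hx hj')] at hwj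
          exact hc₀d i hi' j hj' hij w hwi hwj
    have hle := hI₀max _ hval
    rw [Finset.card_insert_of_notMem hx] at hle
    omega
  -- Fact (2): outer vertices of single-touch edges of two distinct free colours touching
  -- distinct endpoints of a common rainbow edge coincide
  have key2 : ∀ x y : Fin n, x ∉ I₀ → y ∉ I₀ → x ≠ y → ∀ i ∈ I₀, ∀ u v : V,
      u ∈ c₀ i → v ∈ c₀ i → u ≠ v →
      ∀ f ∈ F x, ∀ g ∈ F y, s2F f ∩ W = {u} → s2F g ∩ W = {v} →
      ∀ t, t ∈ f → t ∉ W → ∀ r, r ∈ g → r ∉ W → t = r := by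
    intro x y hx hy hxy i hi u v hu hv huv f hf g hg hfW hgW t htf htW r hrg hrW
    by_contra htr
    have huf : u ∈ f := by
      have h1 : u ∈ s2F f ∩ W := by rw [hfW]; exact Finset.mem_singleton_self u
      exact mem_s2F.mp (Finset.mem_inter.mp h1).1
    have hvg : v ∈ g := by
      have h1 : v ∈ s2F g ∩ W := by rw [hgW]; exact Finset.mem_singleton_self v
      exact mem_s2F.mp (Finset.mem_inter.mp h1).1
    have huW : u ∈ W := (hWmem u).mpr ⟨i, hi, hu⟩
    have hvW : v ∈ W := (hWmem v).mpr ⟨i, hi, hv⟩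
    have hut : u ≠ t := fun h => htW (h ▸ huW)
    have hvr : v ≠ r := fun h => hrW (h ▸ hvW)
    have hfmem : ∀ w ∈ f, w = u ∨ w = t := sym2_mem_elim huf htf hut
    have hgmem : ∀ w ∈ g, w = v ∨ w = r := sym2_mem_elim hvg hrg hvr
    have hedgeW : ∀ j ∈ I₀, ∀ w, w ∈ c₀ j → w ∈ W := fun j hj w hw => (hWmem w).mpr ⟨j, hj, hw⟩
    -- pairwise disjointness facts
    have hfg : ∀ w, w ∈ f → w ∈ g → False := by
      intro w hwf hwg
      rcases hfmem w hwf with rfl | rfl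
      · rcases hgmem _ hwg with h1 | h1
        · exact huv h1
        · exact hrW (h1 ▸ huW)
      · rcases hgmem _ hwg with h1 | h1
        · exact htW (by rw [h1]; exact hvW)
        · exact htr h1
    have hfj : ∀ j ∈ I₀, j ≠ i → ∀ w, w ∈ f → w ∈ c₀ j → False := by
      intro j hj hji w hwf hwj
      rcases hfmem w hwf with rfl | rfl
      · exact hc₀d i hi j hj (Ne.symm hji) w hu hwj
      · exact htW (hedgeW j hj _ hwj)
    have hgj : ∀ j ∈ I₀, j ≠ i → ∀ w, w ∈ g → w ∈ c₀ j → False := by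
      intro j hj hji w hwg hwj
      rcases hgmem w hwg with rfl | rfl
      · exact hc₀d i hi j hj (Ne.symm hji) w hv hwj
      · exact hrW (hedgeW j hj _ hwj)
    -- the augmented rainbow matching
    set c' := Function.update (Function.update c₀ y g) x f with hc'
    have hc'x : c' x = f := by rw [hc', Function.update_self]
    have hc'y : c' y = g := by
      rw [hc', Function.update_of_ne (Ne.symm hxy), Function.update_self]
    have hc'j : ∀ j ∈ I₀.erase i, c' j = c₀ j := by
      intro j hj
      have hjI : j ∈ I₀ := Finset.mem_of_mem_erase hj
      rw [hc', Function.update_of_ne (fun h => hx (by rw [← h]; exact hjI)),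
        Function.update_of_ne (fun h => hy (by rw [← h]; exact hjI))]
    have hyE : y ∉ I₀.erase i := fun h => hy (Finset.mem_of_mem_erase h)
    have hxE : x ∉ insert y (I₀.erase i) := by
      intro h
      rcases Finset.mem_insert.mp h with h1 | h1
      · exact hxy h1
      · exact hx (Finset.mem_of_mem_erase h1)
    have hval : Valid (insert x (insert y (I₀.erase i))) := by
      refine ⟨c', ?_, ?_⟩
      · intro j hj
        rcases Finset.mem_insert.mp hj with rfl | hj1
        · rw [hc'x]; exact hf
        rcases Finset.mem_insert.mp hj1 with rfl | hj2
        · rw [hc'y]; exact hg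
        · rw [hc'j j hj2]; exact hc₀F j (Finset.mem_of_mem_erase hj2)
      · intro p hp q hq hpq w hwp hwq
        rcases Finset.mem_insert.mp hp with rfl | hp1
        · rw [hc'x] at hwp
          rcases Finset.mem_insert.mp hq with rfl | hq1
          · exact hpq rfl
          rcases Finset.mem_insert.mp hq1 with rfl | hq2
          · rw [hc'y] at hwq; exact hfg w hwp hwq
          · rw [hc'j q hq2] at hwq
            exact hfj q (Finset.mem_of_mem_erase hq2) (Finset.ne_of_mem_erase hq2) w hwp hwq
        rcases Finset.mem_insert.mp hp1 with rfl | hp2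
        · rw [hc'y] at hwp
          rcases Finset.mem_insert.mp hq with rfl | hq1
          · rw [hc'x] at hwq; exact hfg w hwq hwp
          rcases Finset.mem_insert.mp hq1 with rfl | hq2
          · exact hpq rfl
          · rw [hc'j q hq2] at hwq
            exact hgj q (Finset.mem_of_mem_erase hq2) (Finset.ne_of_mem_erase hq2) w hwp hwq
        · rw [hc'j p hp2] at hwp
          rcases Finset.mem_insert.mp hq with rfl | hq1
          · rw [hc'x] at hwq
            exact hfj p (Finset.mem_of_mem_erase hp2) (Finset.ne_of_mem_erase hp2) w hwq hwp
          rcases Finset.mem_insert.mp hq1 with rfl | hq2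
          · rw [hc'y] at hwq
            exact hgj p (Finset.mem_of_mem_erase hp2) (Finset.ne_of_mem_erase hp2) w hwq hwp
          · rw [hc'j q hq2] at hwq
            exact hc₀d p (Finset.mem_of_mem_erase hp2) q (Finset.mem_of_mem_erase hq2)
              hpq w hwp hwq
    have hle := hI₀max _ hval
    have hk1 : 1 ≤ k := Finset.card_pos.mpr ⟨i, hi⟩
    rw [Finset.card_insert_of_notMem hxE, Finset.card_insert_of_notMem hyE,
      Finset.card_erase_of_mem hi] at hle
    omega
  -- single-touch vertices / edges of a free colour
  set A : Fin n → Finset V := fun x => W.filter (fun u => ∃ f ∈ F x, s2F f ∩ W = {u}) with hA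
  set S : Fin n → Finset (Sym2 V) := fun x => (F x).filter (fun f => (s2F f ∩ W).card = 1)
    with hS
  have hS_lower : ∀ x, x ∉ I₀ → 2 * n ≤ 2 * k + (S x).card := by
    intro x hx
    have hdisj : ∀ f ∈ F x, ∀ g ∈ F x, f ≠ g → Disjoint (s2F f ∩ W) (s2F g ∩ W) := by
      intro f hf g hg hfg
      rw [Finset.disjoint_left]
      intro w hwf hwg
      exact hmatch x f hf g hg hfg w (mem_s2F.mp (Finset.mem_inter.mp hwf).1)
        (mem_s2F.mp (Finset.mem_inter.mp hwg).1)
    have hsum_le : ∑ f ∈ F x, (s2F f ∩ W).card ≤ 2 * k := by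
      rw [← Finset.card_biUnion hdisj]
      refine le_trans (Finset.card_le_card ?_) hWcard
      exact Finset.biUnion_subset.mpr (fun f _ => Finset.inter_subset_right)
    have hcard12 : ∀ f ∈ F x, (s2F f ∩ W).card = 1 ∨ (s2F f ∩ W).card = 2 := by
      intro f hf
      have h1 : 1 ≤ (s2F f ∩ W).card := by
        obtain ⟨v, hvf, hvW⟩ := key1 x hx f hf
        exact Finset.card_pos.mpr ⟨v, Finset.mem_inter.mpr ⟨mem_s2F.mpr hvf, hvW⟩⟩
      have h2 : (s2F f ∩ W).card ≤ 2 := by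
        calc (s2F f ∩ W).card ≤ (s2F f).card := Finset.card_le_card Finset.inter_subset_left
        _ = 2 := s2F_card (hndF x f hf)
      omega
    have hsplit := Finset.sum_filter_add_sum_filter_not (F x)
      (fun f => (s2F f ∩ W).card = 1) (fun f => (s2F f ∩ W).card)
    have hA1 : ∑ f ∈ (F x).filter (fun f => (s2F f ∩ W).card = 1), (s2F f ∩ W).card
        = (S x).card := by
      rw [hS]
      calc ∑ f ∈ (F x).filter (fun f => (s2F f ∩ W).card = 1), (s2F f ∩ W).card
          = ∑ _f ∈ (F x).filter (fun f => (s2F f ∩ W).card = 1), 1 :=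
            Finset.sum_congr rfl (fun f hf => (Finset.mem_filter.mp hf).2)
      _ = _ := by simp
    have hA2 : ∑ f ∈ (F x).filter (fun f => ¬ (s2F f ∩ W).card = 1), (s2F f ∩ W).card
        = 2 * ((F x).filter (fun f => ¬ (s2F f ∩ W).card = 1)).card := by
      calc ∑ f ∈ (F x).filter (fun f => ¬ (s2F f ∩ W).card = 1), (s2F f ∩ W).card
          = ∑ _f ∈ (F x).filter (fun f => ¬ (s2F f ∩ W).card = 1), 2 := by
            refine Finset.sum_congr rfl (fun f hf => ?_)
            have h1 := hcard12 f (Finset.mem_filter.mp hf).1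
            have h2 := (Finset.mem_filter.mp hf).2
            omega
      _ = _ := by rw [Finset.sum_const, smul_eq_mul, mul_comm]
    have hcards : (S x).card + ((F x).filter (fun f => ¬ (s2F f ∩ W).card = 1)).card = n := by
      rw [hS]
      rw [Finset.card_filter_add_card_filter_not]
      exact hsize x
    omega
  have hA_lower : ∀ x, x ∉ I₀ → (S x).card ≤ (A x).card := by
    intro x hx
    have hex : ∀ f ∈ S x, ∃ u, s2F f ∩ W = {u} := fun f hf =>
      Finset.card_eq_one.mp (Finset.mem_filter.mp hf).2
    choose! φ hφ using hex
    have hmemf : ∀ f ∈ S x, φ f ∈ f := by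
      intro f hf
      have h1 : φ f ∈ s2F f ∩ W := by rw [hφ f hf]; exact Finset.mem_singleton_self _
      exact mem_s2F.mp (Finset.mem_inter.mp h1).1
    refine Finset.card_le_card_of_injOn φ ?_ ?_
    · intro f hf
      have h1 : φ f ∈ s2F f ∩ W := by rw [hφ f hf]; exact Finset.mem_singleton_self _
      refine Finset.mem_filter.mpr ⟨(Finset.mem_inter.mp h1).2, f,
        (Finset.mem_filter.mp hf).1, hφ f hf⟩
    · intro f hf g hg heq
      by_contra hne
      exact hmatch x f (Finset.mem_filter.mp hf).1 g (Finset.mem_filter.mp hg).1 hne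
        (φ f) (hmemf f hf) (heq ▸ hmemf g hg)
  set full : Fin n → Finset (Fin n) := fun x => I₀.filter (fun i => s2F (c₀ i) ⊆ A x)
    with hfull
  have hfull_low : ∀ x, x ∉ I₀ → (A x).card ≤ k + (full x).card := by
    intro x hx
    have hAW : A x ⊆ W := Finset.filter_subset _ _
    have hcover : A x = I₀.biUnion (fun i => A x ∩ s2F (c₀ i)) := by
      ext u
      simp only [Finset.mem_biUnion, Finset.mem_inter]
      constructor
      · intro hu
        obtain ⟨i, hi, hui⟩ := (hWmem u).mp (hAW hu)
        exact ⟨i, hi, hu, mem_s2F.mpr hui⟩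
      · rintro ⟨i, hi, hu, -⟩; exact hu
    have hdisjE : ∀ i ∈ I₀, ∀ j ∈ I₀, i ≠ j →
        Disjoint (A x ∩ s2F (c₀ i)) (A x ∩ s2F (c₀ j)) := by
      intro i hi j hj hij
      rw [Finset.disjoint_left]
      intro w hwi hwj
      exact hc₀d i hi j hj hij w (mem_s2F.mp (Finset.mem_inter.mp hwi).2)
        (mem_s2F.mp (Finset.mem_inter.mp hwj).2)
    have hcardsum : (A x).card = ∑ i ∈ I₀, (A x ∩ s2F (c₀ i)).card := by
      conv_lhs => rw [hcover]
      exact Finset.card_biUnion hdisjE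
    have hterm : ∀ i ∈ I₀, (A x ∩ s2F (c₀ i)).card ≤ 1 + (if i ∈ full x then 1 else 0) := by
      intro i hi
      by_cases hfi : i ∈ full x
      · simp only [hfi, if_true]
        calc (A x ∩ s2F (c₀ i)).card ≤ (s2F (c₀ i)).card :=
            Finset.card_le_card Finset.inter_subset_right
        _ = 2 := s2F_card (hnd i hi)
      · simp only [hfi, if_false]
        by_contra hcon
        push_neg at hcon
        have h2 : (A x ∩ s2F (c₀ i)).card ≤ (s2F (c₀ i)).card :=
          Finset.card_le_card Finset.inter_subset_right
        have h3 : (s2F (c₀ i)).card = 2 := s2F_card (hnd i hi)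
        have heq : A x ∩ s2F (c₀ i) = s2F (c₀ i) :=
          Finset.eq_of_subset_of_card_le Finset.inter_subset_right (by omega)
        have hsub : s2F (c₀ i) ⊆ A x := by
          intro w hw
          have : w ∈ A x ∩ s2F (c₀ i) := by rw [heq]; exact hw
          exact (Finset.mem_inter.mp this).1
        exact hfi (Finset.mem_filter.mpr ⟨hi, hsub⟩)
    have hfullI : full x ⊆ I₀ := by rw [hfull]; exact Finset.filter_subset _ _
    have hfullsub : I₀.filter (fun i => i ∈ full x) = full x := by
      rw [Finset.filter_mem_eq_inter, Finset.inter_eq_right.mpr hfullI]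
    calc (A x).card = ∑ i ∈ I₀, (A x ∩ s2F (c₀ i)).card := hcardsum
    _ ≤ ∑ i ∈ I₀, (1 + (if i ∈ full x then 1 else 0)) := Finset.sum_le_sum hterm
    _ = k + ∑ i ∈ I₀, (if i ∈ full x then 1 else 0) := by
        rw [Finset.sum_add_distrib, Finset.sum_const, smul_eq_mul, mul_one]
    _ = k + (full x).card := by
        rw [← Finset.card_filter, hfullsub]
  have hfull5 : ∀ x, x ∉ I₀ → 5 ≤ (full x).card := by
    intro x hx
    have h1 := hS_lower x hx
    have h2 := hA_lower x hx
    have h3 := hfull_low x hx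
    omega
  -- no rainbow edge has three full free colours
  have hcap : ∀ i ∈ I₀, ((Finset.univ \ I₀).filter (fun x => s2F (c₀ i) ⊆ A x)).card ≤ 2 := by
    intro i hi
    by_contra hgt
    push_neg at hgt
    obtain ⟨x, hxmem, y, hymem, z, hzmem, hxy, hxz, hyz⟩ := Finset.two_lt_card.mp hgt
    have hxI : x ∉ I₀ := (Finset.mem_sdiff.mp (Finset.mem_filter.mp hxmem).1).2
    have hyI : y ∉ I₀ := (Finset.mem_sdiff.mp (Finset.mem_filter.mp hymem).1).2
    have hzI : z ∉ I₀ := (Finset.mem_sdiff.mp (Finset.mem_filter.mp hzmem).1).2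
    have hsubx : s2F (c₀ i) ⊆ A x := (Finset.mem_filter.mp hxmem).2
    have hsuby : s2F (c₀ i) ⊆ A y := (Finset.mem_filter.mp hymem).2
    have hsubz : s2F (c₀ i) ⊆ A z := (Finset.mem_filter.mp hzmem).2
    obtain ⟨u, v, he⟩ := sym2_rep (c₀ i)
    have huv : u ≠ v := by
      have h1 := hnd i hi
      rw [he, Sym2.mk_isDiag_iff] at h1
      exact h1
    have hu : u ∈ c₀ i := by rw [he]; exact Sym2.mem_mk_left u v
    have hv : v ∈ c₀ i := by rw [he]; exact Sym2.mem_mk_right u v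
    have hwit : ∀ x' : Fin n, s2F (c₀ i) ⊆ A x' → ∀ p, p ∈ c₀ i →
        ∃ f ∈ F x', s2F f ∩ W = {p} := by
      intro x' hsub p hp
      have h1 : p ∈ A x' := hsub (mem_s2F.mpr hp)
      exact (Finset.mem_filter.mp h1).2
    obtain ⟨fxu, hfxu, hfxuW⟩ := hwit x hsubx u hu
    obtain ⟨fxv, hfxv, hfxvW⟩ := hwit x hsubx v hv
    obtain ⟨fyu, hfyu, hfyuW⟩ := hwit y hsuby u hu
    obtain ⟨fzv, hfzv, hfzvW⟩ := hwit z hsubz v hv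
    have houter : ∀ x' : Fin n, ∀ f ∈ F x', ∀ p : V, s2F f ∩ W = {p} →
        ∃ t, t ∈ f ∧ t ∉ W := by
      intro x' f hf p hfW
      have hpf : p ∈ f := by
        have h1 : p ∈ s2F f ∩ W := by rw [hfW]; exact Finset.mem_singleton_self p
        exact mem_s2F.mp (Finset.mem_inter.mp h1).1
      refine ⟨Sym2.Mem.other hpf, Sym2.other_mem hpf, fun hW' => ?_⟩
      have h2 : Sym2.Mem.other hpf ∈ s2F f ∩ W :=
        Finset.mem_inter.mpr ⟨mem_s2F.mpr (Sym2.other_mem hpf), hW'⟩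
      rw [hfW, Finset.mem_singleton] at h2
      exact Sym2.other_ne (hndF x' f hf) hpf h2
    obtain ⟨txu, htxu_f, htxu_W⟩ := houter x fxu hfxu u hfxuW
    obtain ⟨txv, htxv_f, htxv_W⟩ := houter x fxv hfxv v hfxvW
    obtain ⟨tyu, htyu_f, htyu_W⟩ := houter y fyu hfyu u hfyuW
    obtain ⟨tzv, htzv_f, htzv_W⟩ := houter z fzv hfzv v hfzvW
    have e1 : txu = tzv := key2 x z hxI hzI hxz i hi u v hu hv huv fxu hfxu fzv hfzv
      hfxuW hfzvW txu htxu_f htxu_W tzv htzv_f htzv_W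
    have e2 : tyu = tzv := key2 y z hyI hzI hyz i hi u v hu hv huv fyu hfyu fzv hfzv
      hfyuW hfzvW tyu htyu_f htyu_W tzv htzv_f htzv_W
    have e3 : tyu = txv := key2 y x hyI hxI (Ne.symm hxy) i hi u v hu hv huv fyu hfyu fxv hfxv
      hfyuW hfxvW tyu htyu_f htyu_W txv htxv_f htxv_W
    have hne_f : fxu ≠ fxv := by
      intro h
      rw [h, hfxvW] at hfxuW
      exact huv (Finset.singleton_injective hfxuW.symm)
    have hnotin : txu ∉ fxv := hmatch x fxu hfxu fxv hfxv hne_f txu htxu_f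
    have : txu = txv := by rw [e1, ← e2, e3]
    exact hnotin (this ▸ htxv_f)
  -- double counting
  set Φ : Finset (Fin n) := Finset.univ \ I₀ with hΦ
  have hΦcard : Φ.card = n - k := by
    rw [hΦ, Finset.card_sdiff_of_subset (Finset.subset_univ I₀)]
    simp [hk]
  have hsum : ∑ x ∈ Φ, (full x).card
      = ∑ i ∈ I₀, (Φ.filter (fun x => s2F (c₀ i) ⊆ A x)).card := by
    simp only [hfull, Finset.card_filter]
    rw [Finset.sum_comm]
  have hlhs : 5 * Φ.card ≤ ∑ x ∈ Φ, (full x).card := by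
    calc 5 * Φ.card = ∑ _x ∈ Φ, 5 := by rw [Finset.sum_const, smul_eq_mul, mul_comm]
    _ ≤ ∑ x ∈ Φ, (full x).card := Finset.sum_le_sum (fun x hx => hfull5 x (by
        rw [hΦ] at hx; exact (Finset.mem_sdiff.mp hx).2))
  have hrhs : ∑ i ∈ I₀, (Φ.filter (fun x => s2F (c₀ i) ⊆ A x)).card ≤ 2 * k := by
    calc ∑ i ∈ I₀, (Φ.filter (fun x => s2F (c₀ i) ⊆ A x)).card
        ≤ ∑ _i ∈ I₀, 2 := Finset.sum_le_sum (fun i hi => hcap i hi)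
    _ = 2 * k := by rw [Finset.sum_const, smul_eq_mul, mul_comm]
  have hfinal : 5 * (n - k) ≤ 2 * k := by
    rw [← hΦcard]
    exact le_trans hlhs (le_trans (le_of_eq hsum) hrhs)
  omega
end

section
/- Let r ≥ 2 and let F_1, …, F_n be matchings, each of size n, in an r-uniform hypergraph. Then there exists a rainbow matching of size at least (n − 1/2 − 3/(4r−6))/(r − 1/2). -/
set_option maxHeartbeats 1000000 in
/-- If `r ≥ 2` and `F₁, …, Fₙ` are matchings of size `n` in an
`r`-uniform hypergraph, then there is a rainbow matching of size at least
`(n - 1/2 - 3/(4r-6)) / (r - 1/2)`. -/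
theorem stmt_1 {V : Type*} (r n : ℕ) (hr : 2 ≤ r)
    (E : Set (Finset V)) (hunifE : ∀ e ∈ E, e.card = r)
    (F : Fin n → Finset (Finset V))
    (hedges : ∀ i, ∀ e ∈ F i, e ∈ E)
    (hmatch : ∀ i, ∀ e ∈ F i, ∀ f ∈ F i, e ≠ f → Disjoint e f)
    (hsize : ∀ i, (F i).card = n) :
    ∃ (I : Finset (Fin n)) (c : Fin n → Finset V),
      (∀ i ∈ I, c i ∈ F i) ∧
      (∀ i ∈ I, ∀ j ∈ I, i ≠ j → Disjoint (c i) (c j)) ∧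
      ((n : ℝ) - 1 / 2 - 3 / (4 * (r : ℝ) - 6)) / ((r : ℝ) - 1 / 2) ≤ (I.card : ℝ) := by
  classical
  set P : ℕ → Prop := fun m => ∃ (I : Finset (Fin n)) (c : Fin n → Finset V),
      (∀ i ∈ I, c i ∈ F i) ∧
      (∀ i ∈ I, ∀ j ∈ I, i ≠ j → Disjoint (c i) (c j)) ∧ I.card = m with hPdef
  have hP0 : P 0 := ⟨∅, fun _ => ∅, by simp, by simp, rfl⟩
  set k := Nat.findGreatest P n with hkdef
  have hPk : P k := Nat.findGreatest_spec (Nat.zero_le n) hP0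
  have hmax : ∀ m, P m → m ≤ k := by
    intro m hm
    by_contra hlt
    push_neg at hlt
    have hmn : m ≤ n := by
      obtain ⟨I, c, _, _, hc⟩ := hm
      calc m = I.card := hc.symm
        _ ≤ n := by simpa using I.card_le_univ
    exact Nat.findGreatest_is_greatest hlt hmn hm
  obtain ⟨I₀, c₀, hF₀, hD₀, hk₀⟩ := hPk
  refine ⟨I₀, c₀, hF₀, hD₀, ?_⟩
  rw [hk₀]
  have hkn : k ≤ n := by
    rw [← hk₀]; simpa using I₀.card_le_univ
  have hrR : (2:ℝ) ≤ (r:ℝ) := by exact_mod_cast hr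
  have hden : (0:ℝ) < (r:ℝ) - 1/2 := by linarith
  have h23 : (0:ℝ) < 2*(r:ℝ) - 3 := by linarith
  have h46 : (0:ℝ) < 4*(r:ℝ) - 6 := by linarith
  -- master inequality
  have master : 2*(n:ℝ) ≤ (2*(r:ℝ)-1)*(k:ℝ) + 2*(r:ℝ)/(2*(r:ℝ)-3) := by
    rcases eq_or_lt_of_le hkn with hkeq | hklt
    · -- k = n
      have hdivpos : (0:ℝ) ≤ 2*(r:ℝ)/(2*(r:ℝ)-3) := by positivity
      have hN : (0:ℝ) ≤ (n:ℝ) := Nat.cast_nonneg n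
      rw [hkeq]
      nlinarith [mul_nonneg (show (0:ℝ) ≤ 2*(r:ℝ)-3 by linarith) hN]
    · -- k < n : the real work
      -- basic setup
      set Uc : Finset (Fin n) := Finset.univ \ I₀ with hUcdef
      have hUccard : Uc.card = n - k := by
        rw [hUcdef, Finset.card_sdiff_of_subset (Finset.subset_univ I₀), hk₀]
        simp
      have hUcne : Uc.Nonempty := by
        rw [← Finset.card_pos, hUccard]; omega
      obtain ⟨i1, hi1⟩ := hUcne
      have hFne : (F i1).Nonempty := by
        rw [← Finset.card_pos, hsize]; omega
      obtain ⟨g1, hg1⟩ := hFne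
      have hk1 : 1 ≤ k := by
        refine hmax 1 ⟨{i1}, fun _ => g1, ?_, ?_, Finset.card_singleton i1⟩
        · intro i hi; rw [Finset.mem_singleton] at hi; subst hi; exact hg1
        · intro i hi j hj hij
          rw [Finset.mem_singleton] at hi hj
          exact absurd (hi.trans hj.symm) hij
      have hNV : Nonempty V := by
        have hcard : g1.card = r := hunifE g1 (hedges i1 g1 hg1)
        have : g1.Nonempty := by rw [← Finset.card_pos, hcard]; omega
        exact ⟨this.choose⟩
      set Vset : Finset V := I₀.biUnion c₀ with hVdef
      have hsubV : ∀ j ∈ I₀, c₀ j ⊆ Vset := fun j hj => Finset.subset_biUnion_of_mem c₀ hj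
      have hcard_c : ∀ j ∈ I₀, (c₀ j).card = r := fun j hj => hunifE _ (hedges j _ (hF₀ j hj))
      have hVcard : Vset.card ≤ k * r := by
        calc Vset.card ≤ ∑ j ∈ I₀, (c₀ j).card := Finset.card_biUnion_le
          _ = ∑ j ∈ I₀, r := Finset.sum_congr rfl hcard_c
          _ = k * r := by rw [Finset.sum_const, hk₀, smul_eq_mul]
      -- every edge of an uncolored matching meets Vset
      have hmeets : ∀ i ∈ Uc, ∀ g ∈ F i, (g ∩ Vset).Nonempty := by
        intro i hi g hg
        rw [hUcdef, Finset.mem_sdiff] at hi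
        by_contra hne
        rw [Finset.not_nonempty_iff_eq_empty, ← Finset.disjoint_iff_inter_eq_empty] at hne
        have hP1 : ∃ (I : Finset (Fin n)) (c : Fin n → Finset V),
            (∀ m ∈ I, c m ∈ F m) ∧
            (∀ a ∈ I, ∀ b ∈ I, a ≠ b → Disjoint (c a) (c b)) ∧ I.card = k + 1 := by
          refine ⟨insert i I₀, fun m => if m = i then g else c₀ m, ?_, ?_, ?_⟩
          · intro m hm
            rcases Finset.mem_insert.mp hm with h | h
            · subst h; simp only [eq_self_iff_true, if_true]; exact hg
            · have hmi : m ≠ i := fun he => hi.2 (he ▸ h)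
              simp only [if_neg hmi]; exact hF₀ m h
          · intro a ha b hb hab
            rcases Finset.mem_insert.mp ha with h | h <;>
              rcases Finset.mem_insert.mp hb with h' | h'
            · exact absurd (h.trans h'.symm) hab
            · have hbne : b ≠ i := fun he => hi.2 (he ▸ h')
              subst h
              simp only [eq_self_iff_true, if_true, if_neg hbne]
              exact hne.mono_right (hsubV b h')
            · have hane : a ≠ i := fun he => hi.2 (he ▸ h)
              subst h'
              simp only [eq_self_iff_true, if_true, if_neg hane]
              exact (hne.mono_right (hsubV a h)).symm
            · have hane : a ≠ i := fun he => hi.2 (he ▸ h)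
              have hbne : b ≠ i := fun he => hi.2 (he ▸ h')
              simp only [if_neg hane, if_neg hbne]
              exact hD₀ a h b h' hab
          · rw [Finset.card_insert_of_notMem hi.2, hk₀]
        have := hmax (k+1) hP1
        omega
      -- the cross-intersection property from maximality
      have hcross : ∀ i ∈ Uc, ∀ i' ∈ Uc, i ≠ i' → ∀ j ∈ I₀, ∀ v ∈ c₀ j, ∀ u ∈ c₀ j,
          v ≠ u → ∀ g ∈ F i, ∀ g' ∈ F i', g ∩ Vset = {v} → g' ∩ Vset = {u} →
          ¬ Disjoint g g' := by
        intro i hi i' hi' hii' j hj v hv u hu hvu g hg g' hg' hgV hg'V hdis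
        rw [hUcdef, Finset.mem_sdiff] at hi hi'
        -- g is disjoint from all other matched edges
        have hgm : ∀ m ∈ I₀, m ≠ j → Disjoint g (c₀ m) := by
          intro m hm hmj
          rw [Finset.disjoint_left]
          intro a hag ham
          have haV : a ∈ Vset := hsubV m hm ham
          have hmem : a ∈ g ∩ Vset := Finset.mem_inter.mpr ⟨hag, haV⟩
          rw [hgV, Finset.mem_singleton] at hmem
          subst hmem
          exact Finset.disjoint_left.mp (hD₀ j hj m hm (Ne.symm hmj)) hv ham
        have hg'm : ∀ m ∈ I₀, m ≠ j → Disjoint g' (c₀ m) := by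
          intro m hm hmj
          rw [Finset.disjoint_left]
          intro a hag ham
          have haV : a ∈ Vset := hsubV m hm ham
          have hmem : a ∈ g' ∩ Vset := Finset.mem_inter.mpr ⟨hag, haV⟩
          rw [hg'V, Finset.mem_singleton] at hmem
          subst hmem
          exact Finset.disjoint_left.mp (hD₀ j hj m hm (Ne.symm hmj)) hu ham
        have hinotmem : i ∉ insert i' (I₀.erase j) := by
          rw [Finset.mem_insert]
          rintro (h | h)
          · exact hii' h
          · exact hi.2 (Finset.mem_of_mem_erase h)
        have hi'notmem : i' ∉ I₀.erase j := fun h => hi'.2 (Finset.mem_of_mem_erase h)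
        have hP1 : ∃ (I : Finset (Fin n)) (c : Fin n → Finset V),
            (∀ m ∈ I, c m ∈ F m) ∧
            (∀ a ∈ I, ∀ b ∈ I, a ≠ b → Disjoint (c a) (c b)) ∧ I.card = k + 1 := by
          refine ⟨insert i (insert i' (I₀.erase j)),
            fun m => if m = i then g else if m = i' then g' else c₀ m, ?_, ?_, ?_⟩
          · intro m hm
            rcases Finset.mem_insert.mp hm with h | h
            · subst h; simp only [eq_self_iff_true, if_true]; exact hg
            rcases Finset.mem_insert.mp h with h' | h'
            · subst h'
              simp only [if_neg (Ne.symm hii'), eq_self_iff_true, if_true]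
              exact hg'
            · have hmI : m ∈ I₀ := Finset.mem_of_mem_erase h'
              have hmi : m ≠ i := fun he => hi.2 (he ▸ hmI)
              have hmi' : m ≠ i' := fun he => hi'.2 (he ▸ hmI)
              simp only [if_neg hmi, if_neg hmi']
              exact hF₀ m hmI
          · intro a ha b hb hab
            have hval : ∀ m ∈ insert i (insert i' (I₀.erase j)),
                ((fun m => if m = i then g else if m = i' then g' else c₀ m) m = g ∧ m = i) ∨
                ((fun m => if m = i then g else if m = i' then g' else c₀ m) m = g' ∧ m = i') ∨
                ((fun m => if m = i then g else if m = i' then g' else c₀ m) m = c₀ m ∧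
                  m ∈ I₀ ∧ m ≠ j) := by
              intro m hm
              rcases Finset.mem_insert.mp hm with h | h
              · left; subst h
                exact ⟨by simp only [eq_self_iff_true, if_true], rfl⟩
              rcases Finset.mem_insert.mp h with h' | h'
              · right; left
                subst h'
                exact ⟨by simp only [if_neg (Ne.symm hii'), eq_self_iff_true, if_true], rfl⟩
              · right; right
                have hmI : m ∈ I₀ := Finset.mem_of_mem_erase h'
                have hmi : m ≠ i := fun he => hi.2 (he ▸ hmI)
                have hmi' : m ≠ i' := fun he => hi'.2 (he ▸ hmI)
                exact ⟨by simp only [if_neg hmi, if_neg hmi'], hmI, (Finset.mem_erase.mp h').1⟩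
            rcases hval a ha with ⟨ea, ha'⟩ | ⟨ea, ha'⟩ | ⟨ea, haI, haj⟩ <;>
              rcases hval b hb with ⟨eb, hb'⟩ | ⟨eb, hb'⟩ | ⟨eb, hbI, hbj⟩ <;>
              rw [ea, eb]
            · exact absurd (ha'.trans hb'.symm) hab
            · exact hdis
            · exact hgm b hbI hbj
            · exact hdis.symm
            · exact absurd (ha'.trans hb'.symm) hab
            · exact hg'm b hbI hbj
            · exact (hgm a haI haj).symm
            · exact (hg'm a haI haj).symm
            · exact hD₀ a haI b hbI hab
          · rw [Finset.card_insert_of_notMem hinotmem,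
              Finset.card_insert_of_notMem hi'notmem,
              Finset.card_erase_of_mem hj, hk₀]
            omega
        have := hmax (k+1) hP1
        omega
      -- attachment sets
      set A : Fin n → Finset V := fun i => Vset.filter (fun v => ∃ g ∈ F i, g ∩ Vset = {v})
        with hAdef
      -- counting: 2n ≤ kr + (r-1)k + x_i for each uncolored i
      -- pendant count: number of pendants is at most the number of attachment vertices
      have hp_le_A : ∀ i ∈ Uc, ((F i).filter (fun g => (g ∩ Vset).card = 1)).card ≤ (A i).card := by
        intro i _hi
        refine Finset.card_le_card_of_injOn
          (fun g => if h : (g ∩ Vset).Nonempty then h.choose else Classical.arbitrary V) ?_ ?_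
        · intro g hg
          rw [Finset.mem_coe, Finset.mem_filter] at hg
          have hne : (g ∩ Vset).Nonempty := by rw [← Finset.card_pos, hg.2]; omega
          obtain ⟨a, ha⟩ := Finset.card_eq_one.mp hg.2
          simp only [dif_pos hne]
          have hch : hne.choose ∈ g ∩ Vset := hne.choose_spec
          rw [Finset.mem_coe, hAdef, Finset.mem_filter]
          refine ⟨(Finset.mem_inter.mp hch).2, g, hg.1, ?_⟩
          have hmem : hne.choose ∈ ({a} : Finset V) := by rw [← ha]; exact hch
          have hea : hne.choose = a := Finset.mem_singleton.mp hmem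
          rw [hea]; exact ha
        · intro g hg g' hg' heq
          rw [Finset.mem_coe, Finset.mem_filter] at hg hg'
          by_contra hne
          have h1 : (g ∩ Vset).Nonempty := by rw [← Finset.card_pos, hg.2]; omega
          have h2 : (g' ∩ Vset).Nonempty := by rw [← Finset.card_pos, hg'.2]; omega
          simp only [dif_pos h1, dif_pos h2] at heq
          exact Finset.disjoint_left.mp (hmatch i g hg.1 g' hg'.1 hne)
            (Finset.mem_inter.mp h1.choose_spec).1
            (heq ▸ (Finset.mem_inter.mp h2.choose_spec).1)
      -- lower bound via pendants: 2n ≤ |B i| + p i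
      have hBp : ∀ i ∈ Uc, 2*n ≤ ((F i).biUnion (fun g => g ∩ Vset)).card
          + ((F i).filter (fun g => (g ∩ Vset).card = 1)).card := by
        intro i hi
        have hdisj : ∀ g ∈ F i, ∀ g' ∈ F i, g ≠ g' → Disjoint (g ∩ Vset) (g' ∩ Vset) :=
          fun g hg g' hg' hne => (hmatch i g hg g' hg' hne).mono
            Finset.inter_subset_left Finset.inter_subset_left
        rw [Finset.card_biUnion hdisj, Finset.card_filter]
        have hpt : ∀ g ∈ F i, 2 ≤ (g ∩ Vset).card + (if (g ∩ Vset).card = 1 then 1 else 0) := by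
          intro g hg
          have hpos := (hmeets i hi g hg).card_pos
          by_cases h1 : (g ∩ Vset).card = 1
          · rw [if_pos h1]; omega
          · rw [if_neg h1]; omega
        calc 2*n = ∑ _g ∈ F i, 2 := by rw [Finset.sum_const, hsize, smul_eq_mul, mul_comm]
          _ ≤ ∑ g ∈ F i, ((g ∩ Vset).card + (if (g ∩ Vset).card = 1 then 1 else 0)) :=
              Finset.sum_le_sum hpt
          _ = _ := Finset.sum_add_distrib
      -- attachment sets bound via saturated edges
      have hA_le : ∀ i, (A i).card ≤ (r-1)*k + (I₀.filter (fun j => c₀ j ⊆ A i)).card := by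
        intro i
        have hbound : ∀ j ∈ I₀, (c₀ j ∩ A i).card ≤ (r-1) + (if c₀ j ⊆ A i then 1 else 0) := by
          intro j hj
          by_cases hs : c₀ j ⊆ A i
          · rw [if_pos hs]
            have h1 : (c₀ j ∩ A i).card ≤ (c₀ j).card := Finset.card_le_card Finset.inter_subset_left
            rw [hcard_c j hj] at h1
            omega
          · rw [if_neg hs]
            obtain ⟨v, hvj, hvA⟩ := Finset.not_subset.mp hs
            have hsubE : c₀ j ∩ A i ⊆ (c₀ j).erase v := by
              intro a ha
              rw [Finset.mem_inter] at ha
              exact Finset.mem_erase.mpr ⟨fun he => hvA (he ▸ ha.2), ha.1⟩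
            have h2 := Finset.card_le_card hsubE
            rw [Finset.card_erase_of_mem hvj, hcard_c j hj] at h2
            omega
        have hsub : A i ⊆ I₀.biUnion (fun j => c₀ j ∩ A i) := by
          intro v hv
          have hvV : v ∈ Vset := by
            rw [hAdef] at hv
            exact (Finset.mem_filter.mp hv).1
          rw [hVdef] at hvV
          obtain ⟨j, hj, hvj⟩ := Finset.mem_biUnion.mp hvV
          exact Finset.mem_biUnion.mpr ⟨j, hj, Finset.mem_inter.mpr ⟨hvj, hv⟩⟩
        calc (A i).card ≤ (I₀.biUnion fun j => c₀ j ∩ A i).card := Finset.card_le_card hsub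
          _ ≤ ∑ j ∈ I₀, (c₀ j ∩ A i).card := Finset.card_biUnion_le
          _ ≤ ∑ j ∈ I₀, ((r-1) + (if c₀ j ⊆ A i then 1 else 0)) := Finset.sum_le_sum hbound
          _ = (r-1)*k + (I₀.filter (fun j => c₀ j ⊆ A i)).card := by
              rw [Finset.sum_add_distrib, Finset.sum_const, ← Finset.card_filter, hk₀,
                smul_eq_mul, Nat.mul_comm k (r-1)]
      have hper : ∀ i ∈ Uc, 2*n ≤ k*r + (r-1)*k + (I₀.filter (fun j => c₀ j ⊆ A i)).card := by
        intro i hi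
        have h1 := hBp i hi
        have h2 : ((F i).biUnion fun g => g ∩ Vset).card ≤ k*r := by
          refine le_trans (Finset.card_le_card ?_) hVcard
          exact Finset.biUnion_subset.mpr (fun g _ => Finset.inter_subset_right)
        have h3 := hp_le_A i hi
        have h4 := hA_le i
        omega
      -- saturation bound: each matched edge is fully saturated by at most r uncolored colors
      have hsatbound : ∀ j ∈ I₀, (Uc.filter (fun i => c₀ j ⊆ A i)).card ≤ r := by
        intro j hj
        by_contra hgt
        push_neg at hgt
        obtain ⟨T, hTsub, hTcard⟩ := Finset.exists_subset_card_eq (n := r+1) hgt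
        -- choose, for each color i in T and each vertex v of c₀ j, a pendant edge of F i at v
        have hsel : ∀ i v, ∃ g, i ∈ T → v ∈ c₀ j → g ∈ F i ∧ g ∩ Vset = {v} := by
          intro i v
          by_cases hiv : i ∈ T ∧ v ∈ c₀ j
          · have hfil := hTsub hiv.1
            rw [Finset.mem_filter] at hfil
            have hvA : v ∈ A i := hfil.2 hiv.2
            rw [hAdef, Finset.mem_filter] at hvA
            obtain ⟨g, hgF, hgV⟩ := hvA.2
            exact ⟨g, fun _ _ => ⟨hgF, hgV⟩⟩
          · exact ⟨∅, fun h1 h2 => absurd ⟨h1, h2⟩ hiv⟩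
        choose f hf using hsel
        have hTU : ∀ i ∈ T, i ∈ Uc := fun i hi => (Finset.mem_filter.mp (hTsub hi)).1
        have hfF : ∀ i ∈ T, ∀ v ∈ c₀ j, f i v ∈ F i := fun i hi v hv => (hf i v hi hv).1
        have hfV : ∀ i ∈ T, ∀ v ∈ c₀ j, f i v ∩ Vset = {v} := fun i hi v hv => (hf i v hi hv).2
        have hvf : ∀ i ∈ T, ∀ v ∈ c₀ j, v ∈ f i v := by
          intro i hi v hv
          have hmem : v ∈ f i v ∩ Vset := by
            rw [hfV i hi v hv]; exact Finset.mem_singleton_self v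
          exact (Finset.mem_inter.mp hmem).1
        have hfcard : ∀ i ∈ T, ∀ v ∈ c₀ j, (f i v).card = r :=
          fun i hi v hv => hunifE _ (hedges i _ (hfF i hi v hv))
        -- a vertex belongs to the selected pendants of a color at most at one position
        have huniq : ∀ i ∈ T, ∀ u ∈ c₀ j, ∀ u' ∈ c₀ j, ∀ z, z ∈ f i u → z ∈ f i u' → u = u' := by
          intro i hi u hu u' hu' z hz hz'
          by_contra hne
          have hfne : f i u ≠ f i u' := by
            intro he
            have h1 : ({u} : Finset V) = {u'} := by
              rw [← hfV i hi u hu, he, hfV i hi u' hu']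
            exact hne (Finset.singleton_inj.mp h1)
          exact Finset.disjoint_left.mp
            (hmatch i _ (hfF i hi u hu) _ (hfF i hi u' hu') hfne) hz hz'
        -- key surjectivity step
        have hBJ : ∀ i ∈ T, ∀ i' ∈ T, i ≠ i' → ∀ v ∈ c₀ j, ∀ z ∈ f i v, z ≠ v →
            ∃ u ∈ c₀ j, u ≠ v ∧ z ∈ f i' u := by
          intro i hi i' hi' hii' v hv z hz hzv
          have hWcard : ((f i v).erase v).card = r - 1 := by
            rw [Finset.card_erase_of_mem (hvf i hi v hv), hfcard i hi v hv]
          have hEcard : ((c₀ j).erase v).card = r - 1 := by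
            rw [Finset.card_erase_of_mem hv, hcard_c j hj]
          have hnonempty : ∀ u ∈ (c₀ j).erase v, (f i' u ∩ (f i v).erase v).Nonempty := by
            intro u hu
            obtain ⟨huv, huj⟩ := Finset.mem_erase.mp hu
            have hcr := hcross i (hTU i hi) i' (hTU i' hi') hii' j hj v hv u huj (Ne.symm huv)
              (f i v) (hfF i hi v hv) (f i' u) (hfF i' hi' u huj)
              (hfV i hi v hv) (hfV i' hi' u huj)
            obtain ⟨z', hz'1, hz'2⟩ := Finset.not_disjoint_iff.mp hcr
            have hz'v : z' ≠ v := by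
              intro he
              subst he
              have : z' ∈ f i' u ∩ Vset := Finset.mem_inter.mpr ⟨hz'2, hsubV j hj hv⟩
              rw [hfV i' hi' u huj, Finset.mem_singleton] at this
              exact huv this.symm
            exact ⟨z', Finset.mem_inter.mpr ⟨hz'2, Finset.mem_erase.mpr ⟨hz'v, hz'1⟩⟩⟩
          have hdisjU : ∀ u ∈ (c₀ j).erase v, ∀ u' ∈ (c₀ j).erase v, u ≠ u' →
              Disjoint (f i' u ∩ (f i v).erase v) (f i' u' ∩ (f i v).erase v) := by
            intro u hu u' hu' huu'
            have huj := (Finset.mem_erase.mp hu).2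
            have hu'j := (Finset.mem_erase.mp hu').2
            have hfne : f i' u ≠ f i' u' := by
              intro he
              have h1 : ({u} : Finset V) = {u'} := by
                rw [← hfV i' hi' u huj, he, hfV i' hi' u' hu'j]
              exact huu' (Finset.singleton_inj.mp h1)
            exact (hmatch i' _ (hfF i' hi' u huj) _ (hfF i' hi' u' hu'j) hfne).mono
              Finset.inter_subset_left Finset.inter_subset_left
          have hbU : ((c₀ j).erase v).biUnion (fun u => f i' u ∩ (f i v).erase v)
              = (f i v).erase v := by
            apply Finset.eq_of_subset_of_card_le
            · exact Finset.biUnion_subset.mpr (fun u _ => Finset.inter_subset_right)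
            · rw [Finset.card_biUnion hdisjU, hWcard]
              calc r - 1 = ((c₀ j).erase v).card := hEcard.symm
                _ = ∑ _u ∈ (c₀ j).erase v, 1 := by rw [Finset.sum_const, smul_eq_mul, mul_one]
                _ ≤ ∑ u ∈ (c₀ j).erase v, (f i' u ∩ (f i v).erase v).card :=
                    Finset.sum_le_sum (fun u hu => (hnonempty u hu).card_pos)
          have hzW : z ∈ ((c₀ j).erase v).biUnion (fun u => f i' u ∩ (f i v).erase v) := by
            rw [hbU]
            exact Finset.mem_erase.mpr ⟨hzv, hz⟩
          obtain ⟨u, hu, hzu⟩ := Finset.mem_biUnion.mp hzW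
          obtain ⟨huv, huj⟩ := Finset.mem_erase.mp hu
          exact ⟨u, huj, huv, (Finset.mem_inter.mp hzu).1⟩
        -- now build an injection from T into c₀ j
        have hTpos : T.Nonempty := by rw [← Finset.card_pos, hTcard]; omega
        obtain ⟨i₀, hi₀⟩ := hTpos
        have hepos : (c₀ j).Nonempty := by
          rw [← Finset.card_pos, hcard_c j hj]; omega
        obtain ⟨v₀, hv₀⟩ := hepos
        have hzex : ((f i₀ v₀).erase v₀).Nonempty := by
          rw [← Finset.card_pos, Finset.card_erase_of_mem (hvf i₀ hi₀ v₀ hv₀),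
            hfcard i₀ hi₀ v₀ hv₀]
          omega
        obtain ⟨z, hz⟩ := hzex
        obtain ⟨hzv₀, hzf⟩ := Finset.mem_erase.mp hz
        have hzV : z ∉ Vset := by
          intro hzV
          have hmem : z ∈ f i₀ v₀ ∩ Vset := Finset.mem_inter.mpr ⟨hzf, hzV⟩
          rw [hfV i₀ hi₀ v₀ hv₀, Finset.mem_singleton] at hmem
          exact hzv₀ hmem
        have hpos' : ∀ i, ∃ u, i ∈ T → (u ∈ c₀ j ∧ z ∈ f i u) := by
          intro i
          by_cases hiT : i ∈ T
          · by_cases hii₀ : i = i₀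
            · exact ⟨v₀, fun _ => ⟨hv₀, hii₀ ▸ hzf⟩⟩
            · obtain ⟨u, hu, _huv, hzu⟩ :=
                hBJ i₀ hi₀ i hiT (fun he => hii₀ he.symm) v₀ hv₀ z hzf hzv₀
              exact ⟨u, fun _ => ⟨hu, hzu⟩⟩
          · exact ⟨v₀, fun h => absurd h hiT⟩
        choose pos hpos using hpos'
        have hinj : Set.InjOn pos T := by
          intro i hi i' hi' heq
          by_contra hne
          rw [Finset.mem_coe] at hi hi'
          obtain ⟨hposm, hzpos⟩ := hpos i hi
          obtain ⟨hposm', hzpos'⟩ := hpos i' hi'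
          have hzne : z ≠ pos i := fun he => hzV (he ▸ hsubV j hj hposm)
          obtain ⟨u, hu, hune, hzu⟩ := hBJ i hi i' hi' hne (pos i) hposm z hzpos hzne
          have : u = pos i' := huniq i' hi' u hu (pos i') hposm' z hzu hzpos'
          exact hune (this.trans heq.symm)
        have hle := Finset.card_le_card_of_injOn pos (fun i hi => (hpos i hi).1) hinj
        rw [hTcard, hcard_c j hj] at hle
        omega
      -- summation
      have hsum : (n - k) * (2*n) ≤ (n - k) * (k*r + (r-1)*k) + k*r := by
        have h1 : ∑ _i ∈ Uc, 2*n ≤ ∑ i ∈ Uc, (k*r + (r-1)*k + (I₀.filter (fun j => c₀ j ⊆ A i)).card) :=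
          Finset.sum_le_sum hper
        have h2 : ∑ i ∈ Uc, (k*r + (r-1)*k + (I₀.filter (fun j => c₀ j ⊆ A i)).card)
            = (n-k) * (k*r + (r-1)*k) + ∑ i ∈ Uc, (I₀.filter (fun j => c₀ j ⊆ A i)).card := by
          rw [Finset.sum_add_distrib, Finset.sum_const, hUccard, smul_eq_mul]
        have h3 : ∑ i ∈ Uc, (I₀.filter (fun j => c₀ j ⊆ A i)).card ≤ k * r := by
          calc ∑ i ∈ Uc, (I₀.filter (fun j => c₀ j ⊆ A i)).card
              = ∑ i ∈ Uc, ∑ j ∈ I₀, (if c₀ j ⊆ A i then 1 else 0) := by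
                refine Finset.sum_congr rfl fun i _ => Finset.card_filter _ _
            _ = ∑ j ∈ I₀, ∑ i ∈ Uc, (if c₀ j ⊆ A i then 1 else 0) := Finset.sum_comm
            _ = ∑ j ∈ I₀, (Uc.filter (fun i => c₀ j ⊆ A i)).card := by
                refine Finset.sum_congr rfl fun j _ => (Finset.card_filter _ _).symm
            _ ≤ ∑ _j ∈ I₀, r := Finset.sum_le_sum hsatbound
            _ = k * r := by rw [Finset.sum_const, hk₀, smul_eq_mul]
        have h0 : ∑ _i ∈ Uc, 2*n = (n-k)*(2*n) := by
          rw [Finset.sum_const, hUccard, smul_eq_mul]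
        omega
      -- pass to the reals
      have hkn : k ≤ n := le_of_lt hklt
      have hcast : ((n:ℝ) - k) * (2*(n:ℝ)) ≤ ((n:ℝ) - k) * ((k:ℝ)*(r:ℝ) + ((r:ℝ)-1)*(k:ℝ)) + (k:ℝ)*(r:ℝ) := by
        have h := (Nat.cast_le (α := ℝ)).mpr hsum
        have e1 : ((n - k : ℕ) : ℝ) = (n:ℝ) - (k:ℝ) := Nat.cast_sub hkn
        have e2 : ((r - 1 : ℕ) : ℝ) = (r:ℝ) - 1 := by
          rw [Nat.cast_sub (by omega : 1 ≤ r)]; norm_num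
        push_cast [e1, e2] at h
        linarith
      have hk1R : (1:ℝ) ≤ (k:ℝ) := by exact_mod_cast hk1
      -- case on the sign of s = 2n - (2r-1)k
      by_cases hs : 2*n ≤ k*r + (r-1)*k
      · have hsR : 2*(n:ℝ) ≤ (k:ℝ)*(r:ℝ) + ((r:ℝ)-1)*(k:ℝ) := by
          have h := (Nat.cast_le (α := ℝ)).mpr hs
          have e2 : ((r - 1 : ℕ) : ℝ) = (r:ℝ) - 1 := by
            rw [Nat.cast_sub (by omega : 1 ≤ r)]; norm_num
          push_cast [e2] at h
          linarith
        have hdivpos : (0:ℝ) ≤ 2*(r:ℝ)/(2*(r:ℝ)-3) := by positivity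
        nlinarith
      · push_neg at hs
        have hsR : (k:ℝ)*(r:ℝ) + ((r:ℝ)-1)*(k:ℝ) + 1 ≤ 2*(n:ℝ) := by
          have h := (Nat.cast_le (α := ℝ)).mpr (Nat.succ_le_of_lt hs)
          have e2 : ((r - 1 : ℕ) : ℝ) = (r:ℝ) - 1 := by
            rw [Nat.cast_sub (by omega : 1 ≤ r)]; norm_num
          push_cast [e2] at h
          linarith
        set N := (n:ℝ) with hN
        set K := (k:ℝ) with hK
        set R := (r:ℝ) with hR
        have hs1 : (1:ℝ) ≤ 2*N - (2*R-1)*K := by linarith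
        have h2 : (2*N - (2*R-1)*K)^2 + (2*R-3)*K*(2*N - (2*R-1)*K) ≤ 2*K*R := by
          nlinarith [hcast]
        have h3 : K*((2*N - (2*R-1)*K)*(2*R-3) - 2*R) ≤ -(2*N - (2*R-1)*K)^2 := by
          nlinarith [h2]
        have h4 : (2*N - (2*R-1)*K)*(2*R-3) ≤ 2*R := by
          by_contra h
          push_neg at h
          have hpos : 0 < (2*N - (2*R-1)*K)*(2*R-3) - 2*R := by linarith
          have hmul : 1*((2*N - (2*R-1)*K)*(2*R-3) - 2*R)
              ≤ K*((2*N - (2*R-1)*K)*(2*R-3) - 2*R) :=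
            mul_le_mul_of_nonneg_right hk1R hpos.le
          nlinarith [sq_nonneg (2*N - (2*R-1)*K)]
        have h5 : 2*N - (2*R-1)*K ≤ 2*R/(2*R-3) := (le_div_iff₀ h23).mpr h4
        linarith
  -- conclude from the master inequality
  rw [div_le_iff₀ hden]
  have hid : (1:ℝ)/2 + 3/(4*(r:ℝ)-6) = (r:ℝ)/(2*(r:ℝ)-3) := by
    field_simp
    ring
  have hdd : 2*(r:ℝ)/(2*(r:ℝ)-3) = 2*((r:ℝ)/(2*(r:ℝ)-3)) := by ring
  nlinarith [master, hid, hdd]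
end

section
/- Let G be a graph containing no cycle of length 3 and no cycle of length 5, and let F_1, …, F_n be matchings in G, each of size n. Then there exists a rainbow matching of size at least (3/4)n − 9/4. -/
open SimpleGraph Finset

def IsRB {V : Type*} {n : ℕ} (F : Fin n → Finset (Sym2 V)) (I : Finset (Fin n))
    (c : Fin n → Sym2 V) : Prop :=
  (∀ i ∈ I, c i ∈ F i) ∧ ∀ i ∈ I, ∀ j ∈ I, i ≠ j → ∀ v, v ∈ c i → v ∉ c j


lemma card_erase_ge {α : Type*} [DecidableEq α] (s : Finset α) (x : α) :
    s.card - 1 ≤ (s.erase x).card := by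
  rcases em (x ∈ s) with h | h
  · rw [Finset.card_erase_of_mem h]
  · rw [Finset.erase_eq_of_notMem h]
    omega

lemma rb_subset {V : Type*} {n : ℕ} {F : Fin n → Finset (Sym2 V)} {I J : Finset (Fin n)}
    {c : Fin n → Sym2 V} (h : IsRB F I c) (hJ : J ⊆ I) : IsRB F J c :=
  ⟨fun i hi => h.1 i (hJ hi), fun i hi j hj => h.2 i (hJ hi) j (hJ hj)⟩

lemma rb_extend {V : Type*} {n : ℕ} {F : Fin n → Finset (Sym2 V)} {I : Finset (Fin n)}
    {c : Fin n → Sym2 V} (h : IsRB F I c) {a : Fin n} (ha : a ∉ I) {g : Sym2 V}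
    (hg : g ∈ F a) (hd : ∀ k ∈ I, ∀ v, v ∈ g → v ∉ c k) :
    IsRB F (insert a I) (Function.update c a g) := by
  have hne : ∀ k ∈ I, k ≠ a := fun k hk he => ha (he ▸ hk)
  constructor
  · intro i hi
    rcases Finset.mem_insert.mp hi with rfl | hi'
    · simpa using hg
    · rw [Function.update_of_ne (hne i hi')]; exact h.1 i hi'
  · intro i hi j hj hij v hvi
    rcases Finset.mem_insert.mp hi with rfl | hi' <;>
      rcases Finset.mem_insert.mp hj with rfl | hj'
    · exact absurd rfl hij
    · rw [Function.update_of_ne (hne j hj')]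
      rw [Function.update_self] at hvi
      exact hd j hj' v hvi
    · rw [Function.update_self]
      rw [Function.update_of_ne (hne i hi')] at hvi
      exact fun hvg => hd i hi' v hvg hvi
    · rw [Function.update_of_ne (hne j hj')]
      rw [Function.update_of_ne (hne i hi')] at hvi
      exact h.2 i hi' j hj' hij v hvi

lemma no3 {V : Type*} {G : SimpleGraph V}
    (hfree : ∀ (v : V) (w : G.Walk v v), w.IsCycle → w.length ≠ 3 ∧ w.length ≠ 5)
    {x y z : V} (h1 : G.Adj x y) (h2 : G.Adj y z) (h3 : G.Adj z x) : False := by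
  have e1 := h1.ne; have e1' := h1.ne'; have e2 := h2.ne; have e2' := h2.ne'
  have e3 := h3.ne; have e3' := h3.ne'
  have hc : (Walk.cons h1 (Walk.cons h2 (Walk.cons h3 Walk.nil))).IsCycle := by
    simp only [Walk.isCycle_def, Walk.isTrail_def, Walk.edges_cons, Walk.edges_nil,
      Walk.support_cons, Walk.support_nil, List.tail_cons, List.nodup_cons, List.mem_cons,
      List.not_mem_nil, Sym2.eq_iff, List.nodup_nil, List.mem_singleton, List.mem_nil_iff]
    refine ⟨?_, by simp, ?_⟩ <;> tauto
  exact (hfree x _ hc).1 (by simp)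

lemma no5 {V : Type*} {G : SimpleGraph V}
    (hfree : ∀ (v : V) (w : G.Walk v v), w.IsCycle → w.length ≠ 3 ∧ w.length ≠ 5)
    {a b c d e : V} (h1 : G.Adj a b) (h2 : G.Adj b c) (h3 : G.Adj c d) (h4 : G.Adj d e)
    (h5 : G.Adj e a) (nac : a ≠ c) (nad : a ≠ d) (nbd : b ≠ d) (nbe : b ≠ e) (nce : c ≠ e) :
    False := by
  have e1 := h1.ne; have e1' := h1.ne'; have e2 := h2.ne; have e2' := h2.ne'
  have e3 := h3.ne; have e3' := h3.ne'; have e4 := h4.ne; have e4' := h4.ne'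
  have e5 := h5.ne; have e5' := h5.ne'
  have nca := nac.symm; have nda := nad.symm; have ndb := nbd.symm
  have neb := nbe.symm; have nec := nce.symm
  have hc : (Walk.cons h1 (Walk.cons h2 (Walk.cons h3 (Walk.cons h4
      (Walk.cons h5 Walk.nil))))).IsCycle := by
    simp only [Walk.isCycle_def, Walk.isTrail_def, Walk.edges_cons, Walk.edges_nil,
      Walk.support_cons, Walk.support_nil, List.tail_cons, List.nodup_cons, List.mem_cons,
      List.not_mem_nil, Sym2.eq_iff, List.nodup_nil, List.mem_singleton, List.mem_nil_iff]
    refine ⟨?_, by simp, ?_⟩ <;> tauto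
  exact (hfree a _ hc).2 (by simp)

/-- If `G` contains no cycle of length 3 and no cycle of length 5, and
`F₁, …, Fₙ` are matchings of size `n` in `G`, then there is a rainbow matching of size
at least `(3/4)n - 9/4`. -/
theorem stmt_2 {V : Type*} (G : SimpleGraph V) (n : ℕ)
    (hfree : ∀ (v : V) (w : G.Walk v v), w.IsCycle → w.length ≠ 3 ∧ w.length ≠ 5)
    (F : Fin n → Finset (Sym2 V))
    (hedges : ∀ i, ∀ e ∈ F i, e ∈ G.edgeSet)
    (hmatch : ∀ i, ∀ e ∈ F i, ∀ f ∈ F i, e ≠ f → ∀ v, v ∈ e → v ∉ f)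
    (hsize : ∀ i, (F i).card = n) :
    ∃ (I : Finset (Fin n)) (c : Fin n → Sym2 V),
      (∀ i ∈ I, c i ∈ F i) ∧
      (∀ i ∈ I, ∀ j ∈ I, i ≠ j → ∀ v, v ∈ c i → v ∉ c j) ∧
      (3 / 4 : ℝ) * n - 9 / 4 ≤ (I.card : ℝ) := by
  classical
  rcases Nat.eq_zero_or_pos n with hn0 | hn0
  · subst hn0
    exact ⟨∅, Fin.elim0, by simp, by simp, by norm_num⟩
  obtain ⟨e₀, -⟩ := Finset.card_pos.mp (by rw [hsize ⟨0, hn0⟩]; exact hn0 :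
      0 < (F ⟨0, hn0⟩).card) |>.exists_mem
  set P : ℕ → Prop := fun k => ∃ I c, IsRB F I c ∧ I.card = k with hPdef
  have hP0 : P 0 := ⟨∅, fun _ => e₀, ⟨by simp, by simp⟩, by simp⟩
  set r := Nat.findGreatest P n with hrdef
  have hPr : P r := Nat.findGreatest_spec (Nat.zero_le n) hP0
  obtain ⟨I₀, c₀, hRB, hcard⟩ := hPr
  have hmax : ∀ (I : Finset (Fin n)) (c : Fin n → Sym2 V), IsRB F I c → I.card ≤ r := by
    intro I c h
    by_contra hgt
    push_neg at hgt
    exact Nat.findGreatest_is_greatest hgt (Finset.card_le_univ I |>.trans (by simp))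
      ⟨I, c, h, rfl⟩
  refine ⟨I₀, c₀, hRB.1, hRB.2, ?_⟩
  have key : 3 * n ≤ 4 * r + 9 := by
    by_contra hlt
    push_neg at hlt
    have hrn : r ≤ n := hcard ▸ (Finset.card_le_univ I₀).trans (by simp)
    set u := n - r with hu
    have hu4 : 4 ≤ u := by omega
    have hmemF := hRB.1
    have hdisj := hRB.2
    set U : Finset (Fin n) := I₀ᶜ with hUdef
    have hUcard : U.card = u := by
      rw [hUdef, Finset.card_compl, hcard]; simp [hu]
    have hanotin : ∀ a ∈ U, a ∉ I₀ := fun a ha => Finset.mem_compl.mp ha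
    set xx : Fin n → V := fun i => (c₀ i).out.1 with hxxdef
    set yy : Fin n → V := fun i => (c₀ i).out.2 with hyydef
    have hxy : ∀ i, c₀ i = s(xx i, yy i) := fun i => by
      conv_lhs => rw [← (c₀ i).out_eq]
    have hne : ∀ i ∈ I₀, xx i ≠ yy i := by
      intro i hi h
      have hd := G.not_isDiag_of_mem_edgeSet (hedges i _ (hmemF i hi))
      rw [hxy i] at hd; exact hd (Sym2.mk_isDiag_iff.mpr h)
    set W : Finset V := I₀.biUnion (fun i => {xx i, yy i}) with hWdef
    have hpm : ∀ i v, v ∈ ({xx i, yy i} : Finset V) ↔ v ∈ c₀ i := by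
      intro i v; rw [hxy i]; simp [Sym2.mem_iff]
    have hmemW : ∀ v, v ∈ W ↔ ∃ i ∈ I₀, v ∈ c₀ i := by
      intro v
      simp only [hWdef, Finset.mem_biUnion]
      constructor
      · rintro ⟨i, hi, h⟩; exact ⟨i, hi, (hpm i v).mp h⟩
      · rintro ⟨i, hi, h⟩; exact ⟨i, hi, (hpm i v).mpr h⟩
    have hinW : ∀ k ∈ I₀, ∀ v, v ∈ c₀ k → v ∈ W := fun k hk v hv => (hmemW v).mpr ⟨k, hk, hv⟩
    have hpairdisj : ∀ i ∈ I₀, ∀ j ∈ I₀, i ≠ j →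
        Disjoint ({xx i, yy i} : Finset V) {xx j, yy j} := by
      intro i hi j hj hij
      rw [Finset.disjoint_left]
      intro v hv hv'
      exact hdisj i hi j hj hij v ((hpm i v).mp hv) ((hpm j v).mp hv')
    have hWcard : W.card = 2 * r := by
      rw [hWdef, Finset.card_biUnion hpairdisj]
      calc ∑ i ∈ I₀, ({xx i, yy i} : Finset V).card = ∑ i ∈ I₀, 2 := by
            refine Finset.sum_congr rfl (fun i hi => ?_)
            rw [Finset.card_insert_of_notMem (by simp [hne i hi]), Finset.card_singleton]
        _ = 2 * r := by rw [Finset.sum_const, hcard, smul_eq_mul]; ring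
    set extV : Fin n → V → Prop := fun a v => ∃ q, q ∉ W ∧ s(v, q) ∈ F a with hextVdef
    set ExtS : V → Finset (Fin n) := fun v => U.filter (fun a => extV a v) with hExtSdef
    -- every edge of an unused matching hits W
    have hHit : ∀ a ∈ U, ∀ g ∈ F a, ∃ x, x ∈ g ∧ x ∈ W := by
      intro a ha g hg
      by_contra hno
      push_neg at hno
      have hext := rb_extend hRB (hanotin a ha) hg
        (fun k hk z hz hzc => hno z hz (hinW k hk z hzc))
      have hle := hmax _ _ hext
      rw [Finset.card_insert_of_notMem (hanotin a ha), hcard] at hle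
      omega
    -- augmentation using two external edges at the two ends of a rainbow edge (C3)
    have hAUGB : ∀ i ∈ I₀, ∀ v w, c₀ i = s(v, w) → ∀ a ∈ U, ∀ b ∈ U, a ≠ b →
        extV a v → extV b w → False := by
      rintro i hi v w hvw a ha b hb hab ⟨q, hqW, hqF⟩ ⟨t, htW, htF⟩
      have hAdjvw : G.Adj v w := by
        have h := hedges i _ (hmemF i hi); rw [hvw] at h; exact h
      have hAdjvq : G.Adj v q := hedges a _ hqF
      have hAdjwt : G.Adj w t := hedges b _ htF
      have hvC : v ∈ c₀ i := by rw [hvw]; simp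
      have hwC : w ∈ c₀ i := by rw [hvw]; simp
      have hvW : v ∈ W := hinW i hi v hvC
      have hwW : w ∈ W := hinW i hi w hwC
      by_cases hqt : q = t
      · subst hqt
        exact no3 hfree hAdjvw hAdjwt hAdjvq.symm
      · have h0 : IsRB F (I₀.erase i) c₀ := rb_subset hRB (Finset.erase_subset _ _)
        have hai : a ∉ I₀.erase i := fun h => hanotin a ha (Finset.mem_of_mem_erase h)
        have hd1 : ∀ k ∈ I₀.erase i, ∀ z, z ∈ s(v, q) → z ∉ c₀ k := by
          intro k hk z hz hzc
          have hki : k ≠ i := Finset.ne_of_mem_erase hk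
          have hkI : k ∈ I₀ := Finset.mem_of_mem_erase hk
          rcases Sym2.mem_iff.mp hz with rfl | rfl
          · exact hdisj i hi k hkI (Ne.symm hki) z hvC hzc
          · exact hqW (hinW k hkI z hzc)
        have h1 := rb_extend h0 hai hqF hd1
        have hbi : b ∉ insert a (I₀.erase i) := by
          simp only [Finset.mem_insert]
          push_neg
          exact ⟨Ne.symm hab, fun h => hanotin b hb (Finset.mem_of_mem_erase h)⟩
        have hd2 : ∀ k ∈ insert a (I₀.erase i), ∀ z, z ∈ s(w, t) →
            z ∉ Function.update c₀ a s(v, q) k := by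
          intro k hk z hz
          rcases Finset.mem_insert.mp hk with rfl | hk'
          · rw [Function.update_self]
            intro hzc
            rcases Sym2.mem_iff.mp hz with rfl | rfl <;> rcases Sym2.mem_iff.mp hzc with h' | h'
            · exact hAdjvw.ne' h'
            · exact hqW (h' ▸ hwW)
            · exact htW (h' ▸ hvW)
            · exact hqt h'.symm
          · have hka : k ≠ a := fun h => hai (h ▸ hk')
            rw [Function.update_of_ne hka]
            intro hzc
            have hkI : k ∈ I₀ := Finset.mem_of_mem_erase hk'
            have hkii : k ≠ i := Finset.ne_of_mem_erase hk'
            rcases Sym2.mem_iff.mp hz with rfl | rfl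
            · exact hdisj i hi k hkI (Ne.symm hkii) z hwC hzc
            · exact htW (hinW k hkI z hzc)
        have h2 := rb_extend h1 hbi htF hd2
        have hle := hmax _ _ h2
        have hiI : 1 ≤ I₀.card := Finset.card_pos.mpr ⟨i, hi⟩
        rw [Finset.card_insert_of_notMem hbi, Finset.card_insert_of_notMem hai,
          Finset.card_erase_of_mem hi, hcard] at hle
        omega
    -- augmentation using an internal edge plus two external edges (C5)
    have hAUGC : ∀ i ∈ I₀, ∀ j ∈ I₀, i ≠ j → ∀ v y, c₀ i = s(v, y) → ∀ v' w,
        c₀ j = s(v', w) → ∀ a ∈ U, ∀ b ∈ U, ∀ d ∈ U, a ≠ b → a ≠ d → b ≠ d →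
        s(v, v') ∈ F a → extV b y → extV d w → False := by
      rintro i hi j hj hij v y hvy v' w hv'w a ha b hb d hd hab had hbd haF ⟨q, hqW, hqF⟩
        ⟨t, htW, htF⟩
      have hAdjvy : G.Adj v y := by
        have h := hedges i _ (hmemF i hi); rw [hvy] at h; exact h
      have hAdjv'w : G.Adj v' w := by
        have h := hedges j _ (hmemF j hj); rw [hv'w] at h; exact h
      have hAdjvv' : G.Adj v v' := hedges a _ haF
      have hAdjyq : G.Adj y q := hedges b _ hqF
      have hAdjwt : G.Adj w t := hedges d _ htF
      have hvC : v ∈ c₀ i := by rw [hvy]; simp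
      have hyC : y ∈ c₀ i := by rw [hvy]; simp
      have hv'C : v' ∈ c₀ j := by rw [hv'w]; simp
      have hwC : w ∈ c₀ j := by rw [hv'w]; simp
      have hvW : v ∈ W := hinW i hi v hvC
      have hyW : y ∈ W := hinW i hi y hyC
      have hv'W : v' ∈ W := hinW j hj v' hv'C
      have hwW : w ∈ W := hinW j hj w hwC
      have hvv' : v ≠ v' := fun h => hdisj i hi j hj hij v hvC (h ▸ hv'C)
      have hvw2 : v ≠ w := fun h => hdisj i hi j hj hij v hvC (h ▸ hwC)
      have hyv' : y ≠ v' := fun h => hdisj i hi j hj hij y hyC (h ▸ hv'C)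
      have hyw : y ≠ w := fun h => hdisj i hi j hj hij y hyC (h ▸ hwC)
      by_cases hqt : q = t
      · subst hqt
        exact no5 hfree hAdjvy hAdjyq hAdjwt.symm hAdjv'w.symm hAdjvv'.symm
          (fun h => hqW (h ▸ hvW)) hvw2 hyw hyv' (fun h => hqW (h.symm ▸ hv'W))
      · have h0 : IsRB F ((I₀.erase i).erase j) c₀ :=
          rb_subset hRB ((Finset.erase_subset _ _).trans (Finset.erase_subset _ _))
        have hjm : j ∈ I₀.erase i := Finset.mem_erase.mpr ⟨Ne.symm hij, hj⟩
        have hmem2 : ∀ k ∈ (I₀.erase i).erase j, k ∈ I₀ ∧ k ≠ i ∧ k ≠ j := by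
          intro k hk
          have h1 := Finset.mem_of_mem_erase hk
          exact ⟨Finset.mem_of_mem_erase h1, Finset.ne_of_mem_erase h1,
            Finset.ne_of_mem_erase hk⟩
        have hdi : d ∉ (I₀.erase i).erase j :=
          fun h => hanotin d hd (hmem2 d h).1
        have hd1 : ∀ k ∈ (I₀.erase i).erase j, ∀ z, z ∈ s(w, t) → z ∉ c₀ k := by
          intro k hk z hz hzc
          obtain ⟨hkI, hki, hkj⟩ := hmem2 k hk
          rcases Sym2.mem_iff.mp hz with rfl | rfl
          · exact hdisj j hj k hkI (Ne.symm hkj) z hwC hzc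
          · exact htW (hinW k hkI z hzc)
        have h1 := rb_extend h0 hdi htF hd1
        have hbi : b ∉ insert d ((I₀.erase i).erase j) := by
          simp only [Finset.mem_insert]
          push_neg
          exact ⟨hbd, fun h => hanotin b hb (hmem2 b h).1⟩
        have hd2 : ∀ k ∈ insert d ((I₀.erase i).erase j), ∀ z, z ∈ s(y, q) →
            z ∉ Function.update c₀ d s(w, t) k := by
          intro k hk z hz
          rcases Finset.mem_insert.mp hk with rfl | hk'
          · rw [Function.update_self]
            intro hzc
            rcases Sym2.mem_iff.mp hz with rfl | rfl <;> rcases Sym2.mem_iff.mp hzc with h' | h'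
            · exact hyw h'
            · exact htW (h' ▸ hyW)
            · exact hqW (h' ▸ hwW)
            · exact hqt h'
          · have hkd : k ≠ d := fun h => hdi (h ▸ hk')
            rw [Function.update_of_ne hkd]
            intro hzc
            obtain ⟨hkI, hki, hkj⟩ := hmem2 k hk'
            rcases Sym2.mem_iff.mp hz with rfl | rfl
            · exact hdisj i hi k hkI (Ne.symm hki) z hyC hzc
            · exact hqW (hinW k hkI z hzc)
        have h2 := rb_extend h1 hbi hqF hd2
        have hAi : a ∉ insert b (insert d ((I₀.erase i).erase j)) := by
          simp only [Finset.mem_insert]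
          push_neg
          exact ⟨hab, had, fun h => hanotin a ha (hmem2 a h).1⟩
        have hd3 : ∀ k ∈ insert b (insert d ((I₀.erase i).erase j)), ∀ z, z ∈ s(v, v') →
            z ∉ Function.update (Function.update c₀ d s(w, t)) b s(y, q) k := by
          intro k hk z hz
          rcases Finset.mem_insert.mp hk with rfl | hk'
          · rw [Function.update_self]
            intro hzc
            rcases Sym2.mem_iff.mp hz with rfl | rfl <;> rcases Sym2.mem_iff.mp hzc with h' | h'
            · exact hAdjvy.ne h'
            · exact hqW (h' ▸ hvW)
            · exact hyv' h'.symm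
            · exact hqW (h' ▸ hv'W)
          · have hkb : k ≠ b := fun h => hbi (h ▸ hk')
            rw [Function.update_of_ne hkb]
            rcases Finset.mem_insert.mp hk' with rfl | hk''
            · rw [Function.update_self]
              intro hzc
              rcases Sym2.mem_iff.mp hz with rfl | rfl <;>
                rcases Sym2.mem_iff.mp hzc with h' | h'
              · exact hvw2 h'
              · exact htW (h' ▸ hvW)
              · exact hAdjv'w.ne h'
              · exact htW (h' ▸ hv'W)
            · have hkd : k ≠ d := fun h => hdi (h ▸ hk'')
              rw [Function.update_of_ne hkd]
              intro hzc
              obtain ⟨hkI, hki, hkj⟩ := hmem2 k hk''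
              rcases Sym2.mem_iff.mp hz with rfl | rfl
              · exact hdisj i hi k hkI (Ne.symm hki) z hvC hzc
              · exact hdisj j hj k hkI (Ne.symm hkj) z hv'C hzc
        have h3 := rb_extend h2 hAi haF hd3
        have hle := hmax _ _ h3
        have hiI : 2 ≤ I₀.card := Finset.one_lt_card.mpr ⟨i, hi, j, hj, hij⟩
        rw [Finset.card_insert_of_notMem hAi, Finset.card_insert_of_notMem hbi,
          Finset.card_insert_of_notMem hdi, Finset.card_erase_of_mem hjm,
          Finset.card_erase_of_mem hi, hcard] at hle
        omega
    set rich : V → Prop := fun v => 3 ≤ (ExtS v).card with hrichdef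
    set R1 : Finset (Fin n) := I₀.filter (fun i => rich (xx i) ∨ rich (yy i)) with hR1def
    set R2 : Finset (Fin n) := I₀.filter (fun i => ¬(rich (xx i) ∨ rich (yy i))) with hR2def
    have hr12 : R1.card + R2.card = r := by
      rw [hR1def, hR2def, Finset.card_filter_add_card_filter_not, hcard]
    have hPoor : ∀ i ∈ I₀, ∀ v w, c₀ i = s(v, w) → rich v → ExtS w = ∅ := by
      intro i hi v w hvw hrich
      by_contra hnem
      obtain ⟨b, hbmem⟩ := Finset.nonempty_of_ne_empty hnem
      obtain ⟨hbU, hbext⟩ := Finset.mem_filter.mp hbmem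
      have hrich' : 3 ≤ (ExtS v).card := hrich
      have hnonem : ((ExtS v).erase b).Nonempty := by
        rw [← Finset.card_pos]
        rcases em (b ∈ ExtS v) with h | h
        · rw [Finset.card_erase_of_mem h]
          omega
        · rw [Finset.erase_eq_of_notMem h]
          omega
      obtain ⟨a, hamem⟩ := hnonem
      have hab : a ≠ b := Finset.ne_of_mem_erase hamem
      obtain ⟨haU, haext⟩ := Finset.mem_filter.mp (Finset.mem_of_mem_erase hamem)
      exact hAUGB i hi v w hvw a haU b hbU hab haext hbext
    set covp : Fin n → V → Prop := fun a v => ∃ g ∈ F a, v ∈ g with hcovpdef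
    set intp : Fin n → Sym2 V → Prop := fun a g => ∀ z ∈ g, z ∈ W with hintpdef
    have hK2 : ∀ a ∈ U, (W.filter (covp a)).card =
        ∑ g ∈ F a, (W.filter (fun v => v ∈ g)).card := by
      intro a ha
      have hsplit : W.filter (covp a) = (F a).biUnion (fun g => W.filter (fun v => v ∈ g)) := by
        ext z
        simp only [Finset.mem_filter, Finset.mem_biUnion, hcovpdef]
        tauto
      rw [hsplit]
      exact Finset.card_biUnion (fun g hg g' hg' hgg' => Finset.disjoint_left.mpr
        (fun z hz hz' => hmatch a g hg g' hg' hgg' z (Finset.mem_filter.mp hz).2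
          (Finset.mem_filter.mp hz').2))
    have hK4 : ∀ a ∈ U, n + ((F a).filter (intp a)).card ≤ (W.filter (covp a)).card := by
      intro a ha
      rw [hK2 a ha]
      have hbound : ∀ g ∈ F a,
          (if intp a g then 2 else 1) ≤ (W.filter (fun v => v ∈ g)).card := by
        intro g hg
        by_cases hint : intp a g
        · rw [if_pos hint]
          have hgne : (g.out.1 : V) ≠ g.out.2 := by
            intro hh
            exact (G.not_isDiag_of_mem_edgeSet (hedges a g hg))
              (by rw [← g.out_eq]; exact Sym2.mk_isDiag_iff.mpr hh)
          have hg1 : g.out.1 ∈ g := Sym2.out_fst_mem g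
          have hg2 : g.out.2 ∈ g := Sym2.out_snd_mem g
          have hsub : ({g.out.1, g.out.2} : Finset V) ⊆ W.filter (fun v => v ∈ g) := by
            intro z hz
            rcases Finset.mem_insert.mp hz with rfl | hz'
            · exact Finset.mem_filter.mpr ⟨hint _ hg1, hg1⟩
            · rw [Finset.mem_singleton] at hz'
              subst hz'
              exact Finset.mem_filter.mpr ⟨hint _ hg2, hg2⟩
          calc 2 = ({g.out.1, g.out.2} : Finset V).card := by
                rw [Finset.card_insert_of_notMem (by simpa using hgne), Finset.card_singleton]
            _ ≤ _ := Finset.card_le_card hsub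
        · rw [if_neg hint]
          obtain ⟨x, hxg, hxW⟩ := hHit a ha g hg
          exact Finset.card_pos.mpr ⟨x, Finset.mem_filter.mpr ⟨hxW, hxg⟩⟩
      have hidsum : ∑ g ∈ F a, (if intp a g then 2 else 1) =
          n + ((F a).filter (intp a)).card := by
        have hsame : ∀ g, (if intp a g then 2 else 1) = 1 + (if intp a g then 1 else 0) :=
          fun g => by split <;> rfl
        rw [Finset.sum_congr rfl (fun g _ => hsame g), Finset.sum_add_distrib,
          Finset.sum_const, smul_eq_mul, mul_one, hsize a, ← Finset.card_filter]
      rw [← hidsum]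
      exact Finset.sum_le_sum hbound
    have hbetle : ∀ a ∈ U, n + ((F a).filter (intp a)).card ≤ 2 * r := fun a ha =>
      (hK4 a ha).trans ((Finset.card_filter_le _ _).trans (le_of_eq hWcard))
    have hext_ge : ∀ a ∈ U, n ≤ ((F a).filter (intp a)).card + (W.filter (extV a)).card := by
      intro a ha
      have hNI := Finset.card_filter_add_card_filter_not (s := F a) (p := intp a)
      rw [hsize a] at hNI
      have hinj : ((F a).filter (fun g => ¬ intp a g)).card ≤ (W.filter (extV a)).card := by
        apply Finset.card_le_card_of_injOn
          (fun g => if h : ∃ x ∈ g, x ∈ W then h.choose else e₀.out.1)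
        · intro g hg
          obtain ⟨hgF, hgni⟩ := Finset.mem_filter.mp hg
          have hex : ∃ x ∈ g, x ∈ W := hHit a ha g hgF
          beta_reduce
          rw [dif_pos hex]
          obtain ⟨hxg, hxW⟩ := hex.choose_spec
          obtain ⟨q, hq⟩ := Sym2.mem_iff_exists.mp hxg
          have hqW : q ∉ W := by
            intro hqW'
            apply hgni
            intro z hz
            rw [hq] at hz
            rcases Sym2.mem_iff.mp hz with rfl | rfl
            · exact hxW
            · exact hqW'
          exact Finset.mem_filter.mpr ⟨hxW, ⟨q, hqW, hq ▸ hgF⟩⟩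
        · intro g hg g' hg' heq
          by_contra hne'
          have hgF := (Finset.mem_filter.mp (Finset.mem_coe.mp hg)).1
          have hg'F := (Finset.mem_filter.mp (Finset.mem_coe.mp hg')).1
          have hex : ∃ x ∈ g, x ∈ W := hHit a ha g hgF
          have hex' : ∃ x ∈ g', x ∈ W := hHit a ha g' hg'F
          have heq' : (if h : ∃ x ∈ g, x ∈ W then h.choose else e₀.out.1) =
              (if h : ∃ x ∈ g', x ∈ W then h.choose else e₀.out.1) := heq
          rw [dif_pos hex, dif_pos hex'] at heq'
          exact hmatch a g hgF g' hg'F hne' hex.choose hex.choose_spec.1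
            (heq' ▸ hex'.choose_spec.1)
      omega
    have hL1 : ∀ a ∈ U, 2 * u ≤ (W.filter (extV a)).card := by
      intro a ha
      have h1 := hbetle a ha
      have h2 := hext_ge a ha
      omega
    have hr2c : u ≤ R2.card := by
      obtain ⟨a, ha⟩ := Finset.card_pos.mp (show 0 < U.card by rw [hUcard]; omega)
      set Fu : Finset (Fin n) := I₀.filter (fun i => covp a (xx i) ∧ covp a (yy i)) with hFudef
      have hCcard : (W.filter (covp a)).card =
          ∑ i ∈ I₀, (({xx i, yy i} : Finset V).filter (covp a)).card := by
        have hCsplit : W.filter (covp a) =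
            I₀.biUnion (fun i => ({xx i, yy i} : Finset V).filter (covp a)) := by
          rw [hWdef, Finset.filter_biUnion]
        rw [hCsplit]
        exact Finset.card_biUnion (fun i hi j hj hij =>
          Finset.disjoint_filter_filter (hpairdisj i hi j hj hij))
      have hperedge : ∀ i ∈ I₀, (({xx i, yy i} : Finset V).filter (covp a)).card ≤
          if covp a (xx i) ∧ covp a (yy i) then 2 else 1 := by
        intro i hi
        by_cases hful : covp a (xx i) ∧ covp a (yy i)
        · rw [if_pos hful]
          calc _ ≤ ({xx i, yy i} : Finset V).card := Finset.card_filter_le _ _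
            _ ≤ 2 := by
              rw [Finset.card_insert_of_notMem (by simpa using hne i hi),
                Finset.card_singleton]
        · rw [if_neg hful]
          rw [Finset.card_le_one]
          intro z hz z' hz'
          obtain ⟨hz1, hz2⟩ := Finset.mem_filter.mp hz
          obtain ⟨hz1', hz2'⟩ := Finset.mem_filter.mp hz'
          rcases not_and_or.mp hful with hnx | hny
          · have hzy : ∀ s, s ∈ ({xx i, yy i} : Finset V) → covp a s → s = yy i := by
              intro s hs hcs
              rcases Finset.mem_insert.mp hs with rfl | hs'
              · exact absurd hcs hnx
              · simpa using hs'
            rw [hzy z hz1 hz2, hzy z' hz1' hz2']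
          · have hzx : ∀ s, s ∈ ({xx i, yy i} : Finset V) → covp a s → s = xx i := by
              intro s hs hcs
              rcases Finset.mem_insert.mp hs with rfl | hs'
              · rfl
              · rw [Finset.mem_singleton] at hs'
                subst hs'
                exact absurd hcs hny
            rw [hzx z hz1 hz2, hzx z' hz1' hz2']
      have hsum2 : ∑ i ∈ I₀, (if covp a (xx i) ∧ covp a (yy i) then 2 else 1) =
          r + Fu.card := by
        have hsame : ∀ i0 : Fin n, (if covp a (xx i0) ∧ covp a (yy i0) then 2 else 1) =
            1 + (if covp a (xx i0) ∧ covp a (yy i0) then 1 else 0) := fun i0 => by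
          split <;> rfl
        rw [Finset.sum_congr rfl (fun i0 _ => hsame i0), Finset.sum_add_distrib,
          Finset.sum_const, smul_eq_mul, mul_one, hcard, ← Finset.card_filter]
      have hchain : n + ((F a).filter (intp a)).card ≤ r + Fu.card := by
        have h4 := hK4 a ha
        rw [hCcard] at h4
        calc n + ((F a).filter (intp a)).card ≤ _ := h4
          _ ≤ ∑ i ∈ I₀, (if covp a (xx i) ∧ covp a (yy i) then 2 else 1) :=
            Finset.sum_le_sum hperedge
          _ = r + Fu.card := hsum2
      have hFu1 : (Fu.filter (fun i => rich (xx i) ∨ rich (yy i))).card ≤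
          ((F a).filter (intp a)).card := by
        set pv : Fin n → V := fun i => if rich (xx i) then yy i else xx i with hpvdef
        set rv : Fin n → V := fun i => if rich (xx i) then xx i else yy i with hrvdef
        have hSfact : ∀ i ∈ Fu.filter (fun i => rich (xx i) ∨ rich (yy i)),
            i ∈ I₀ ∧ covp a (pv i) ∧ rich (rv i) ∧ c₀ i = s(pv i, rv i) := by
          intro i hiS
          obtain ⟨hiFu, hpred⟩ := Finset.mem_filter.mp hiS
          obtain ⟨hiI0, hful⟩ := Finset.mem_filter.mp hiFu
          by_cases hr : rich (xx i)
          · refine ⟨hiI0, ?_, ?_, ?_⟩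
            · simp only [hpvdef]
              rw [if_pos hr]
              exact hful.2
            · simp only [hrvdef]
              rw [if_pos hr]
              exact hr
            · simp only [hpvdef, hrvdef]
              rw [if_pos hr, if_pos hr, hxy i]
              exact Sym2.eq_swap
          · refine ⟨hiI0, ?_, ?_, ?_⟩
            · simp only [hpvdef]
              rw [if_neg hr]
              exact hful.1
            · simp only [hrvdef]
              rw [if_neg hr]
              rcases hpred with h | h
              · exact absurd h hr
              · exact h
            · simp only [hpvdef, hrvdef]
              rw [if_neg hr, if_neg hr]
              exact hxy i
        apply Finset.card_le_card_of_injOn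
          (fun i => if h : covp a (pv i) then h.choose else e₀)
        · intro i hiS
          obtain ⟨hiI0, hcov, hrich, hedgei⟩ := hSfact i hiS
          beta_reduce
          rw [dif_pos hcov]
          obtain ⟨hgF, hpvg⟩ := hcov.choose_spec
          refine Finset.mem_filter.mpr ⟨hgF, ?_⟩
          obtain ⟨qq, hq⟩ := Sym2.mem_iff_exists.mp hpvg
          have hpvW : pv i ∈ W := hinW i hiI0 _ (by rw [hedgei]; simp)
          have hqqW : qq ∈ W := by
            by_contra hqq
            have haext : extV a (pv i) := ⟨qq, hqq, hq ▸ hgF⟩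
            have hempty := hPoor i hiI0 (rv i) (pv i)
              (by rw [hedgei]; exact Sym2.eq_swap) hrich
            have hmem3 : a ∈ ExtS (pv i) := Finset.mem_filter.mpr ⟨ha, haext⟩
            rw [hempty] at hmem3
            exact Finset.notMem_empty a hmem3
          intro z hz
          rw [hq] at hz
          rcases Sym2.mem_iff.mp hz with rfl | rfl
          · exact hpvW
          · exact hqqW
        · intro i hiS i' hi'S heq
          by_contra hne2
          obtain ⟨hiI0, hcov, hrich, hedgei⟩ := hSfact i (Finset.mem_coe.mp hiS)
          obtain ⟨hi'I0, hcov', hrich', hedgei'⟩ := hSfact i' (Finset.mem_coe.mp hi'S)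
          have heq' : (if h : covp a (pv i) then h.choose else e₀) =
              (if h : covp a (pv i') then h.choose else e₀) := heq
          rw [dif_pos hcov, dif_pos hcov'] at heq'
          obtain ⟨hgF, hpvg⟩ := hcov.choose_spec
          obtain ⟨hg'F, hpv'g⟩ := hcov'.choose_spec
          rw [← heq'] at hpv'g
          have hpvC : pv i ∈ c₀ i := by rw [hedgei]; simp
          have hpv'C : pv i' ∈ c₀ i' := by rw [hedgei']; simp
          have hpvne : pv i ≠ pv i' :=
            fun h => hdisj i hiI0 i' hi'I0 hne2 (pv i) hpvC (h ▸ hpv'C)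
          obtain ⟨qq, hq⟩ := Sym2.mem_iff_exists.mp hpvg
          have hqq : qq = pv i' := by
            rw [hq] at hpv'g
            rcases Sym2.mem_iff.mp hpv'g with h | h
            · exact absurd h.symm hpvne
            · exact h.symm
          have hgeq : s(pv i, pv i') ∈ F a := by
            rw [← hqq, ← hq]
            exact hgF
          have hb2 : 2 ≤ ((ExtS (rv i)).erase a).card := by
            have h3 : 3 ≤ (ExtS (rv i)).card := hrich
            have h4 := card_erase_ge (ExtS (rv i)) a
            omega
          obtain ⟨b, hbm⟩ := Finset.card_pos.mp
            (show 0 < ((ExtS (rv i)).erase a).card by omega)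
          have hba : b ≠ a := Finset.ne_of_mem_erase hbm
          obtain ⟨hbU, hbext⟩ := Finset.mem_filter.mp (Finset.mem_of_mem_erase hbm)
          have hd1c : 0 < (((ExtS (rv i')).erase a).erase b).card := by
            have h3 : 3 ≤ (ExtS (rv i')).card := hrich'
            have h5 := card_erase_ge (ExtS (rv i')) a
            have h6 := card_erase_ge ((ExtS (rv i')).erase a) b
            omega
          obtain ⟨d, hdm⟩ := Finset.card_pos.mp hd1c
          have hdb : d ≠ b := Finset.ne_of_mem_erase hdm
          have hda : d ≠ a := Finset.ne_of_mem_erase (Finset.mem_of_mem_erase hdm)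
          obtain ⟨hdU, hdext⟩ := Finset.mem_filter.mp
            (Finset.mem_of_mem_erase (Finset.mem_of_mem_erase hdm))
          exact hAUGC i hiI0 i' hi'I0 hne2 (pv i) (rv i) hedgei (pv i') (rv i') hedgei'
            a ha b hbU d hdU hba.symm hda.symm hdb.symm hgeq hbext hdext
      have hFu2 : (Fu.filter (fun i => ¬(rich (xx i) ∨ rich (yy i)))).card ≤ R2.card := by
        apply Finset.card_le_card
        intro k hk
        obtain ⟨hk1, hk2⟩ := Finset.mem_filter.mp hk
        exact Finset.mem_filter.mpr ⟨(Finset.mem_filter.mp hk1).1, hk2⟩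
      have hFusplit := Finset.card_filter_add_card_filter_not (s := Fu)
        (p := fun i => rich (xx i) ∨ rich (yy i))
      have hbetr : ((F a).filter (intp a)).card + n ≤ 2 * r := by
        have := hbetle a ha
        omega
      omega
    have hsumc : 2 * u * u ≤ u * R1.card + 2 * R2.card := by
      have hdc : ∑ a ∈ U, (W.filter (extV a)).card = ∑ v ∈ W, (ExtS v).card := by
        have h1 : ∀ a : Fin n, (W.filter (extV a)).card =
            ∑ v ∈ W, (if extV a v then 1 else 0) := fun a => Finset.card_filter _ _
        have h2 : ∀ v : V, (ExtS v).card = ∑ a ∈ U, (if extV a v then 1 else 0) := fun v =>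
          Finset.card_filter _ _
        calc ∑ a ∈ U, (W.filter (extV a)).card
            = ∑ a ∈ U, ∑ v ∈ W, (if extV a v then 1 else 0) :=
              Finset.sum_congr rfl (fun a _ => h1 a)
          _ = ∑ v ∈ W, ∑ a ∈ U, (if extV a v then 1 else 0) := Finset.sum_comm
          _ = ∑ v ∈ W, (ExtS v).card := Finset.sum_congr rfl (fun v _ => (h2 v).symm)
      have hlower : 2 * u * u ≤ ∑ a ∈ U, (W.filter (extV a)).card := by
        calc 2 * u * u = u * (2 * u) := by ring
          _ = U.card • (2 * u) := by rw [hUcard, smul_eq_mul]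
          _ ≤ ∑ a ∈ U, (W.filter (extV a)).card := Finset.card_nsmul_le_sum U _ _ hL1
      have hWsum : ∑ v ∈ W, (ExtS v).card =
          ∑ i ∈ I₀, ((ExtS (xx i)).card + (ExtS (yy i)).card) := by
        rw [hWdef, Finset.sum_biUnion (fun i hi j hj hij => hpairdisj i hi j hj hij)]
        exact Finset.sum_congr rfl (fun i hi => Finset.sum_pair (hne i hi))
      have hperedge2 : ∀ i ∈ I₀, (ExtS (xx i)).card + (ExtS (yy i)).card ≤
          if rich (xx i) ∨ rich (yy i) then u else 2 := by
        intro i hi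
        have hsubU : ∀ v : V, (ExtS v).card ≤ u := fun v => by
          rw [← hUcard]
          exact Finset.card_le_card (Finset.filter_subset _ _)
        by_cases hp : rich (xx i) ∨ rich (yy i)
        · rw [if_pos hp]
          rcases hp with h | h
          · have h0 : ExtS (yy i) = ∅ := hPoor i hi (xx i) (yy i) (hxy i) h
            rw [h0]
            simpa using hsubU (xx i)
          · have h0 : ExtS (xx i) = ∅ := hPoor i hi (yy i) (xx i)
              (by rw [hxy i]; exact Sym2.eq_swap) h
            rw [h0]
            simpa using hsubU (yy i)
        · rw [if_neg hp]
          push_neg at hp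
          have hx2 : (ExtS (xx i)).card ≤ 2 := by
            by_contra hc
            exact hp.1 (show 3 ≤ (ExtS (xx i)).card by omega)
          have hy2 : (ExtS (yy i)).card ≤ 2 := by
            by_contra hc
            exact hp.2 (show 3 ≤ (ExtS (yy i)).card by omega)
          rcases em ((ExtS (xx i)).Nonempty) with hxne | hxne
          · rcases em ((ExtS (yy i)).Nonempty) with hyne | hyne
            · obtain ⟨b0, hb0⟩ := hyne
              obtain ⟨hb0U, hb0ext⟩ := Finset.mem_filter.mp hb0
              obtain ⟨a0, ha0⟩ := hxne
              obtain ⟨ha0U, ha0ext⟩ := Finset.mem_filter.mp ha0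
              have hxsub : ExtS (xx i) ⊆ {b0} := by
                intro a' ha'
                obtain ⟨ha'U, ha'ext⟩ := Finset.mem_filter.mp ha'
                rw [Finset.mem_singleton]
                by_contra hab
                exact hAUGB i hi (xx i) (yy i) (hxy i) a' ha'U b0 hb0U hab ha'ext hb0ext
              have hysub : ExtS (yy i) ⊆ {a0} := by
                intro b' hb'
                obtain ⟨hb'U, hb'ext⟩ := Finset.mem_filter.mp hb'
                rw [Finset.mem_singleton]
                by_contra hab
                exact hAUGB i hi (xx i) (yy i) (hxy i) a0 ha0U b' hb'U
                  (Ne.symm hab) ha0ext hb'ext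
              have h1 := Finset.card_le_card hxsub
              have h2 := Finset.card_le_card hysub
              rw [Finset.card_singleton] at h1 h2
              omega
            · rw [Finset.not_nonempty_iff_eq_empty.mp hyne]
              simpa using hx2
          · rw [Finset.not_nonempty_iff_eq_empty.mp hxne]
            simpa using hy2
      have hupper : ∑ i ∈ I₀, ((ExtS (xx i)).card + (ExtS (yy i)).card) ≤
          u * R1.card + 2 * R2.card := by
        calc ∑ i ∈ I₀, ((ExtS (xx i)).card + (ExtS (yy i)).card)
            ≤ ∑ i ∈ I₀, (if rich (xx i) ∨ rich (yy i) then u else 2) :=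
              Finset.sum_le_sum hperedge2
          _ = R1.card * u + R2.card * 2 := by
            rw [hR1def, hR2def, Finset.sum_ite, Finset.sum_const, Finset.sum_const,
              smul_eq_mul, smul_eq_mul]
          _ = u * R1.card + 2 * R2.card := by ring
      omega
    -- final arithmetic contradiction
    have h1 : (2 * u * u : ℤ) ≤ u * R1.card + 2 * R2.card := by exact_mod_cast hsumc
    have h2 : (u : ℤ) ≤ R2.card := by exact_mod_cast hr2c
    have h3 : ((R1.card : ℤ) + R2.card) = r := by exact_mod_cast hr12
    have h4 : (4 : ℤ) ≤ u := by exact_mod_cast hu4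
    have h5 : (r : ℤ) + 9 < 3 * u := by
      have : (4 * r + 9 : ℤ) < 3 * n := by exact_mod_cast hlt
      have hn' : (n : ℤ) = r + u := by
        have : n = r + u := by omega
        exact_mod_cast this
      linarith [hn' ▸ this]
    have h6 : (u : ℤ) * R1.card + u * R2.card = u * r := by rw [← h3]; ring
    nlinarith [mul_le_mul_of_nonneg_left h2 (by linarith : (0:ℤ) ≤ (u:ℤ) - 2),
      mul_lt_mul_of_pos_left h5 (by linarith : (0:ℤ) < (u:ℤ))]
  rw [hcard]
  have hkey : (3 * n : ℝ) ≤ 4 * r + 9 := by exact_mod_cast key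
  linarith
end

section
/- Let F_1, …, F_n be pairwise disjoint matchings in a graph, each of size n (disjoint as edge sets: F_i ∩ F_j = ∅ for i ≠ j). Then there exists a rainbow matching of size at least (3/4)n − 9/2. -/
noncomputable def s2f {V : Type*} [DecidableEq V] (e : Sym2 V) : Finset V :=
  {(Quot.out e).1, (Quot.out e).2}

lemma mem_s2f {V : Type*} [DecidableEq V] {e : Sym2 V} {v : V} : v ∈ s2f e ↔ v ∈ e := by
  have h : Quot.mk _ (Quot.out e) = e := Quot.out_eq e
  conv_rhs => rw [← h, show Quot.mk _ (Quot.out e) = s((Quot.out e).1,(Quot.out e).2) from rfl]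
  rw [Sym2.mem_iff]; simp [s2f]

lemma s2f_card_le {V : Type*} [DecidableEq V] (e : Sym2 V) : (s2f e).card ≤ 2 :=
  (Finset.card_insert_le _ _).trans (by simp)

lemma s2f_mk {V : Type*} [DecidableEq V] (u v : V) : s2f s(u,v) = {u, v} := by
  ext w; simp [mem_s2f, Sym2.mem_iff, Finset.mem_insert]

lemma sym2_decomp {V : Type*} (e : Sym2 V) : ∃ u v, e = s(u,v) :=
  ⟨(Quot.out e).1, (Quot.out e).2, by
    conv_lhs => rw [← Quot.out_eq e]⟩

/-- If `F₁, …, Fₙ` are pairwise disjoint matchings of size `n` in a graph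
`G`, then there is a rainbow matching of size at least `(3/4)n - 9/2`. -/
theorem stmt_3 {V : Type*} (G : SimpleGraph V) (n : ℕ)
    (F : Fin n → Finset (Sym2 V))
    (hedges : ∀ i, ∀ e ∈ F i, e ∈ G.edgeSet)
    (hmatch : ∀ i, ∀ e ∈ F i, ∀ f ∈ F i, e ≠ f → ∀ v, v ∈ e → v ∉ f)
    (hsize : ∀ i, (F i).card = n)
    (hdisj : ∀ i j, i ≠ j → Disjoint (F i) (F j)) :
    ∃ (I : Finset (Fin n)) (c : Fin n → Sym2 V),
      (∀ i ∈ I, c i ∈ F i) ∧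
      (∀ i ∈ I, ∀ j ∈ I, i ≠ j → ∀ v, v ∈ c i → v ∉ c j) ∧
      (3 / 4 : ℝ) * n - 9 / 2 ≤ (I.card : ℝ) := by
  classical
  rcases Nat.eq_zero_or_pos n with hn0 | hn
  · refine ⟨∅, fun i => absurd i.isLt (by omega), by simp, by simp, by simp [hn0]; norm_num⟩
  -- a default edge and vertex
  obtain ⟨e₀, he₀⟩ : ∃ e, e ∈ F ⟨0, hn⟩ := Finset.card_pos.mp (by rw [hsize]; exact hn)
  obtain ⟨v0, -, -⟩ := sym2_decomp e₀
  -- basic reformulations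
  have hmatch' : ∀ i, ∀ e ∈ F i, ∀ f ∈ F i, ∀ v, v ∈ e → v ∈ f → e = f := by
    intro i e he f hf v hv hv'
    by_contra hne
    exact hmatch i e he f hf hne v hv hv'
  have hdisj' : ∀ i j, ∀ f, f ∈ F i → f ∈ F j → i = j := by
    intro i j f hi hj
    by_contra hne
    exact absurd hj (Finset.disjoint_left.mp (hdisj i j hne) hi)
  have hndiag : ∀ i, ∀ f ∈ F i, ¬ f.IsDiag := fun i f hf =>
    G.not_isDiag_of_mem_edgeSet (hedges i f hf)
  -- rainbow matchings and a maximum one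
  set RM : Finset (Fin n) → (Fin n → Sym2 V) → Prop := fun I c =>
    (∀ i ∈ I, c i ∈ F i) ∧ (∀ i ∈ I, ∀ j ∈ I, i ≠ j → ∀ v, v ∈ c i → v ∉ c j) with hRMdef
  set P : ℕ → Prop := fun k => ∃ I c, RM I c ∧ k ≤ I.card with hPdef
  have hP0 : P 0 := ⟨∅, fun _ => e₀, ⟨by simp, by simp⟩, by simp⟩
  set r : ℕ := Nat.findGreatest P n with hrdef
  have hcardn : ∀ (I : Finset (Fin n)), I.card ≤ n := fun I => by
    simpa using Finset.card_le_univ I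
  have hPr : P r := Nat.findGreatest_spec (Nat.zero_le n) hP0
  have hmax : ∀ I c, RM I c → I.card ≤ r := fun I c h =>
    Nat.le_findGreatest (hcardn I) ⟨I, c, h, le_rfl⟩
  obtain ⟨I₀, c₀, hRM₀, hrle⟩ := hPr
  have hcard : I₀.card = r := le_antisymm (hmax _ _ hRM₀) hrle
  have hrn : r ≤ n := Nat.findGreatest_le n
  set m : ℕ := n - r with hmdef
  have hnm : n = r + m := by omega
  -- the vertex set of the maximum rainbow matching
  set VR : Finset V := I₀.biUnion (fun ℓ => s2f (c₀ ℓ)) with hVRdef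
  have hVRmem : ∀ v : V, v ∈ VR ↔ ∃ ℓ ∈ I₀, v ∈ c₀ ℓ := by
    intro v; simp [hVRdef, mem_s2f]
  have hVRcard : VR.card ≤ 2 * r := by
    calc VR.card ≤ ∑ ℓ ∈ I₀, (s2f (c₀ ℓ)).card := Finset.card_biUnion_le
    _ ≤ ∑ ℓ ∈ I₀, 2 := Finset.sum_le_sum (fun ℓ _ => s2f_card_le _)
    _ = 2 * r := by rw [Finset.sum_const, hcard]; ring
  -- every edge of a free colour meets VR
  have hmeet : ∀ i, i ∉ I₀ → ∀ f ∈ F i, ∃ v, v ∈ f ∧ v ∈ VR := by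
    intro i hi f hf
    by_contra hcon
    push_neg at hcon
    have hRM' : RM (insert i I₀) (Function.update c₀ i f) := by
      constructor
      · intro j hj
        rcases Finset.mem_insert.mp hj with h | h
        · subst h; rw [Function.update_self]; exact hf
        · rw [Function.update_of_ne (by rintro rfl; exact hi h)]; exact hRM₀.1 j h
      · intro p hp q hq hpq w hwp
        rcases Finset.mem_insert.mp hp with h | h
        · subst h
          rw [Function.update_self] at hwp
          rcases Finset.mem_insert.mp hq with h' | h'
          · exact (hpq h'.symm).elim
          · rw [Function.update_of_ne (by rintro rfl; exact hi h')]
            intro hwq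
            exact hcon w hwp ((hVRmem w).mpr ⟨q, h', hwq⟩)
        · rw [Function.update_of_ne (by rintro rfl; exact hi h)] at hwp
          rcases Finset.mem_insert.mp hq with h' | h'
          · subst h'
            rw [Function.update_self]
            intro hwq
            exact hcon w hwq ((hVRmem w).mpr ⟨p, h, hwp⟩)
          · rw [Function.update_of_ne (by rintro rfl; exact hi h')]
            exact hRM₀.2 p h q h' hpq w hwp
    have := hmax _ _ hRM'
    rw [Finset.card_insert_of_notMem hi, hcard] at this
    omega
  -- pendants
  set pendAt : Fin n → V → Prop := fun i v =>
    v ∈ VR ∧ ∃ f ∈ F i, v ∈ f ∧ ∀ w, w ∈ f → w ≠ v → w ∉ VR with hpenddef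
  set Free : Finset (Fin n) := Finset.univ \ I₀ with hFreedef
  have hFreecard : Free.card = m := by
    rw [hFreedef, Finset.card_sdiff_of_subset (Finset.subset_univ _)]
    simp [hcard, hmdef]
  set S : V → Finset (Fin n) := fun v => Free.filter (fun i => pendAt i v) with hSdef
  have hSmem : ∀ v i, i ∈ S v ↔ (i ∉ I₀ ∧ pendAt i v) := by
    intro v i; simp [hSdef, hFreedef]
  have hScard_le : ∀ v, (S v).card ≤ m := fun v =>
    le_trans (Finset.card_le_card (Finset.filter_subset _ _)) (le_of_eq hFreecard)
  have hpend : ∀ i v, pendAt i v → ∃ a, s(v,a) ∈ F i ∧ a ∉ VR ∧ a ≠ v := by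
    rintro i v ⟨hvVR, f, hf, hvf, hoth⟩
    refine ⟨Sym2.Mem.other hvf, ?_, ?_, ?_⟩
    · rw [Sym2.other_spec hvf]; exact hf
    · exact hoth _ (Sym2.other_mem hvf) (Sym2.other_ne (hndiag i f hf) hvf)
    · exact Sym2.other_ne (hndiag i f hf) hvf
  -- distinct colours pendant at the same vertex have distinct outer ends
  have hdistinct : ∀ (v a b : V) (i j : Fin n), i ≠ j → s(v,a) ∈ F i → s(v,b) ∈ F j →
      a ≠ b := by
    intro v a b i j hij ha hb h
    subst h
    exact hij (hdisj' i j _ ha hb)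
  -- the two-for-one swap
  have hSW2 : ∀ ℓ ∈ I₀, ∀ i j : Fin n, i ∉ I₀ → j ∉ I₀ → i ≠ j → ∀ u v a b : V,
      u ∈ c₀ ℓ → v ∈ c₀ ℓ → u ≠ v → s(u,a) ∈ F i → s(v,b) ∈ F j →
      a ∉ VR → b ∉ VR → a ≠ b → False := by
    intro ℓ hℓ i j hiI hjI hij u v a b hu hv huv hia hjb haVR hbVR hab
    have huVR : u ∈ VR := (hVRmem u).mpr ⟨ℓ, hℓ, hu⟩
    have hvVR : v ∈ VR := (hVRmem v).mpr ⟨ℓ, hℓ, hv⟩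
    have hold : ∀ p ∈ I₀, p ≠ ℓ → u ∉ c₀ p ∧ v ∉ c₀ p := by
      intro p hp hpℓ
      exact ⟨hRM₀.2 ℓ hℓ p hp (fun h => hpℓ h.symm) u hu,
             hRM₀.2 ℓ hℓ p hp (fun h => hpℓ h.symm) v hv⟩
    have haC : ∀ p ∈ I₀, a ∉ c₀ p := fun p hp hc => haVR ((hVRmem a).mpr ⟨p, hp, hc⟩)
    have hbC : ∀ p ∈ I₀, b ∉ c₀ p := fun p hp hc => hbVR ((hVRmem b).mpr ⟨p, hp, hc⟩)
    set c' := Function.update (Function.update c₀ j s(v,b)) i s(u,a) with hc'def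
    set I' := insert i (insert j (I₀.erase ℓ)) with hI'def
    have hci : c' i = s(u,a) := by rw [hc'def, Function.update_self]
    have hcj : c' j = s(v,b) := by
      rw [hc'def, Function.update_of_ne (Ne.symm hij), Function.update_self]
    have hcold : ∀ p ∈ I₀, c' p = c₀ p := by
      intro p hp
      rw [hc'def, Function.update_of_ne (by rintro rfl; exact hiI hp),
          Function.update_of_ne (by rintro rfl; exact hjI hp)]
    have hmemI' : ∀ p, p ∈ I' ↔ p = i ∨ p = j ∨ (p ∈ I₀ ∧ p ≠ ℓ) := by
      intro p
      rw [hI'def]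
      constructor
      · intro hp
        rcases Finset.mem_insert.mp hp with h | h
        · exact Or.inl h
        rcases Finset.mem_insert.mp h with h' | h'
        · exact Or.inr (Or.inl h')
        · exact Or.inr (Or.inr ⟨Finset.mem_of_mem_erase h', (Finset.mem_erase.mp h').1⟩)
      · rintro (rfl | rfl | ⟨h1, h2⟩)
        · exact Finset.mem_insert_self _ _
        · exact Finset.mem_insert_of_mem (Finset.mem_insert_self _ _)
        · exact Finset.mem_insert_of_mem (Finset.mem_insert_of_mem
            (Finset.mem_erase.mpr ⟨h2, h1⟩))
    -- the new edges avoid old vertices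
    have hau : a ≠ u := fun h => haVR (h ▸ huVR)
    have hav : a ≠ v := fun h => haVR (h ▸ hvVR)
    have hbu : b ≠ u := fun h => hbVR (h ▸ huVR)
    have hbv : b ≠ v := fun h => hbVR (h ▸ hvVR)
    have hRM' : RM I' c' := by
      constructor
      · intro p hp
        rcases (hmemI' p).mp hp with rfl | rfl | ⟨hp₀, -⟩
        · rw [hci]; exact hia
        · rw [hcj]; exact hjb
        · rw [hcold p hp₀]; exact hRM₀.1 p hp₀
      · intro p hp q hq hpq w hwp hwq
        rcases (hmemI' p).mp hp with rfl | rfl | ⟨hp₀, hpℓ⟩ <;>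
          rcases (hmemI' q).mp hq with rfl | rfl | ⟨hq₀, hqℓ⟩
        · exact hpq rfl
        · rw [hci, Sym2.mem_iff] at hwp
          rw [hcj, Sym2.mem_iff] at hwq
          rcases hwp with rfl | rfl <;> rcases hwq with h | h
          · exact huv h
          · exact hbu h.symm
          · exact hav h
          · exact hab h
        · rw [hci, Sym2.mem_iff] at hwp
          rw [hcold q hq₀] at hwq
          rcases hwp with rfl | rfl
          · exact (hold q hq₀ hqℓ).1 hwq
          · exact haC q hq₀ hwq
        · rw [hcj, Sym2.mem_iff] at hwp
          rw [hci, Sym2.mem_iff] at hwq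
          rcases hwp with rfl | rfl <;> rcases hwq with h | h
          · exact huv h.symm
          · exact hav h.symm
          · exact hbu h
          · exact hab h.symm
        · exact hpq rfl
        · rw [hcj, Sym2.mem_iff] at hwp
          rw [hcold q hq₀] at hwq
          rcases hwp with rfl | rfl
          · exact (hold q hq₀ hqℓ).2 hwq
          · exact hbC q hq₀ hwq
        · rw [hcold p hp₀] at hwp
          rw [hci, Sym2.mem_iff] at hwq
          rcases hwq with rfl | rfl
          · exact (hold p hp₀ hpℓ).1 hwp
          · exact haC p hp₀ hwp
        · rw [hcold p hp₀] at hwp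
          rw [hcj, Sym2.mem_iff] at hwq
          rcases hwq with rfl | rfl
          · exact (hold p hp₀ hpℓ).2 hwp
          · exact hbC p hp₀ hwp
        · rw [hcold p hp₀] at hwp
          rw [hcold q hq₀] at hwq
          exact hRM₀.2 p hp₀ q hq₀ hpq w hwp hwq
    have hcardI' : I'.card = r + 1 := by
      rw [hI'def, Finset.card_insert_of_notMem, Finset.card_insert_of_notMem,
          Finset.card_erase_of_mem hℓ, hcard]
      · have : 1 ≤ r := by rw [← hcard]; exact Finset.card_pos.mpr ⟨ℓ, hℓ⟩
        omega
      · intro h; exact hjI (Finset.mem_of_mem_erase h)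
      · intro h
        rcases Finset.mem_insert.mp h with h' | h'
        · exact hij h'
        · exact hiI (Finset.mem_of_mem_erase h')
    have := hmax _ _ hRM'
    rw [hcardI'] at this
    omega
  -- Claim C: an endpoint with ≥ 3 pendant colours forces the other endpoint empty
  have hCS : ∀ ℓ ∈ I₀, ∀ u v : V, u ∈ c₀ ℓ → v ∈ c₀ ℓ → u ≠ v →
      3 ≤ (S u).card → S v = ∅ := by
    intro ℓ hℓ u v hu hv huv h3
    by_contra hne
    obtain ⟨j, hj⟩ := Finset.nonempty_iff_ne_empty.mpr hne
    obtain ⟨hjI, hjp⟩ := (hSmem v j).mp hj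
    obtain ⟨b, hjb, hbVR, hbv⟩ := hpend j v hjp
    have hforced : ∀ i ∈ (S u).erase j, s(u,b) ∈ F i := by
      intro i hi
      obtain ⟨hij, hiu⟩ := Finset.mem_erase.mp hi
      obtain ⟨hiI, hip⟩ := (hSmem u i).mp hiu
      obtain ⟨a, hia, haVR, hau⟩ := hpend i u hip
      have hab : a = b := by
        by_contra hab
        exact hSW2 ℓ hℓ i j hiI hjI hij u v a b hu hv huv hia hjb haVR hbVR hab
      rwa [hab] at hia
    have hc2 : 1 < ((S u).erase j).card := by
      have := Finset.pred_card_le_card_erase (s := S u) (a := j)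
      omega
    obtain ⟨i₁, hi₁, i₂, hi₂, hne'⟩ := Finset.one_lt_card.mp hc2
    exact hne' (hdisj' i₁ i₂ _ (hforced i₁ hi₁) (hforced i₂ hi₂))
  -- endpoints of matching edges
  have hends : ∀ ℓ ∈ I₀, ∃ u v : V, u ≠ v ∧ c₀ ℓ = s(u,v) := by
    intro ℓ hℓ
    obtain ⟨u, v, huv⟩ := sym2_decomp (c₀ ℓ)
    refine ⟨u, v, ?_, huv⟩
    rintro rfl
    exact hndiag ℓ _ (hRM₀.1 ℓ hℓ) (huv ▸ Sym2.mk_isDiag_iff.mpr rfl)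
  -- each free colour has at least 2m pendant vertices
  have hPv : ∀ i, i ∉ I₀ → 2*m ≤ (VR.filter (fun v => pendAt i v)).card := by
    intro i hi
    have hcard1 : ∀ f ∈ F i, 1 ≤ (s2f f ∩ VR).card := by
      intro f hf
      obtain ⟨v, hvf, hvVR⟩ := hmeet i hi f hf
      exact Finset.card_pos.mpr ⟨v, Finset.mem_inter.mpr ⟨mem_s2f.mpr hvf, hvVR⟩⟩
    have hpd : (↑(F i) : Set (Sym2 V)).PairwiseDisjoint (fun f => s2f f ∩ VR) := by
      intro x hx y hy hxy
      simp only [Finset.disjoint_left]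
      intro w hw hw'
      exact hxy (hmatch' i x hx y hy w
        (mem_s2f.mp (Finset.mem_inter.mp hw).1) (mem_s2f.mp (Finset.mem_inter.mp hw').1))
    have hsum_le : ∑ f ∈ F i, (s2f f ∩ VR).card ≤ 2*r := by
      rw [← Finset.card_biUnion hpd]
      exact le_trans (Finset.card_le_card (by
        intro w hw
        obtain ⟨f, -, hwf⟩ := Finset.mem_biUnion.mp hw
        exact (Finset.mem_inter.mp hwf).2)) hVRcard
    have hsum_ge : 2*n ≤ ∑ f ∈ F i, (s2f f ∩ VR).card +
        ((F i).filter (fun f => (s2f f ∩ VR).card = 1)).card := by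
      have hsplit := Finset.sum_filter_add_sum_filter_not (F i)
        (fun f => (s2f f ∩ VR).card = 1) (fun f => (s2f f ∩ VR).card)
      have h1 : ∑ f ∈ (F i).filter (fun f => (s2f f ∩ VR).card = 1), (s2f f ∩ VR).card =
          ((F i).filter (fun f => (s2f f ∩ VR).card = 1)).card := by
        rw [Finset.card_eq_sum_ones]
        exact Finset.sum_congr rfl (fun f hf => (Finset.mem_filter.mp hf).2)
      have h2 : ∀ f ∈ (F i).filter (fun f => ¬ (s2f f ∩ VR).card = 1),
          2 ≤ (s2f f ∩ VR).card := by
        intro f hf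
        obtain ⟨hf₁, hf₂⟩ := Finset.mem_filter.mp hf
        have := hcard1 f hf₁
        omega
      have h2' : 2 * ((F i).filter (fun f => ¬ (s2f f ∩ VR).card = 1)).card ≤
          ∑ f ∈ (F i).filter (fun f => ¬ (s2f f ∩ VR).card = 1), (s2f f ∩ VR).card := by
        calc 2 * _ = ∑ _f ∈ (F i).filter (fun f => ¬ (s2f f ∩ VR).card = 1), 2 := by
              rw [Finset.sum_const]; ring
        _ ≤ _ := Finset.sum_le_sum h2
      have hcards := Finset.card_filter_add_card_filter_not
        (s := F i) (p := fun f => (s2f f ∩ VR).card = 1)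
      rw [hsize i] at hcards
      omega
    -- inject pendant edges into pendant vertices
    have hinj : ((F i).filter (fun f => (s2f f ∩ VR).card = 1)).card ≤
        (VR.filter (fun v => pendAt i v)).card := by
      set pick : Sym2 V → V := fun f =>
        if h : ∃ v, v ∈ f ∧ v ∈ VR then h.choose else v0 with hpickdef
      apply Finset.card_le_card_of_injOn pick
      · intro f hf
        obtain ⟨hf₁, hf₂⟩ := Finset.mem_filter.mp hf
        have hex : ∃ v, v ∈ f ∧ v ∈ VR := by
          obtain ⟨v, hv1, hv2⟩ := hmeet i hi f hf₁
          exact ⟨v, hv1, hv2⟩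
        have hspec := hex.choose_spec
        rw [hpickdef]
        simp only [dif_pos hex]
        refine Finset.mem_filter.mpr ⟨hspec.2, hspec.2, f, hf₁, hspec.1, ?_⟩
        intro w hwf hwne hwVR
        have h1lt : 1 < (s2f f ∩ VR).card := by
          apply Finset.one_lt_card.mpr
          exact ⟨w, Finset.mem_inter.mpr ⟨mem_s2f.mpr hwf, hwVR⟩,
                 hex.choose, Finset.mem_inter.mpr ⟨mem_s2f.mpr hspec.1, hspec.2⟩, hwne⟩
        omega
      · intro f hf g hg hfg
        obtain ⟨hf₁, -⟩ := Finset.mem_filter.mp hf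
        obtain ⟨hg₁, -⟩ := Finset.mem_filter.mp hg
        have hexf : ∃ v, v ∈ f ∧ v ∈ VR := by
          obtain ⟨v, hv1, hv2⟩ := hmeet i hi f hf₁; exact ⟨v, hv1, hv2⟩
        have hexg : ∃ v, v ∈ g ∧ v ∈ VR := by
          obtain ⟨v, hv1, hv2⟩ := hmeet i hi g hg₁; exact ⟨v, hv1, hv2⟩
        rw [hpickdef] at hfg
        simp only [dif_pos hexf, dif_pos hexg] at hfg
        exact hmatch' i f hf₁ g hg₁ _ hexf.choose_spec.1 (hfg ▸ hexg.choose_spec.1)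
    omega
  -- double counting: total pendant incidences
  have hsum_eq : ∑ v ∈ VR, (S v).card = ∑ i ∈ Free, (VR.filter (fun v => pendAt i v)).card := by
    have h1 : ∀ v, (S v).card = ∑ i ∈ Free, if pendAt i v then 1 else 0 := by
      intro v; rw [hSdef]; exact Finset.card_filter _ _
    have h2 : ∀ i, (VR.filter (fun v => pendAt i v)).card
        = ∑ v ∈ VR, if pendAt i v then 1 else 0 := by
      intro i; exact Finset.card_filter _ _
    simp only [h1, h2]
    exact Finset.sum_comm
  have hsupply : 2*m*m ≤ ∑ v ∈ VR, (S v).card := by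
    rw [hsum_eq]
    calc 2*m*m = ∑ _i ∈ Free, 2*m := by rw [Finset.sum_const, hFreecard]; ring
    _ ≤ _ := Finset.sum_le_sum (fun i hi => hPv i (Finset.mem_sdiff.mp hi).2)
  -- decompose the sum over edges
  have hpdI : (↑I₀ : Set (Fin n)).PairwiseDisjoint (fun ℓ => s2f (c₀ ℓ)) := by
    intro x hx y hy hxy
    simp only [Finset.disjoint_left]
    intro w hw hw'
    exact hRM₀.2 x hx y hy hxy w (mem_s2f.mp hw) (mem_s2f.mp hw')
  have hdec : ∑ v ∈ VR, (S v).card = ∑ ℓ ∈ I₀, ∑ v ∈ s2f (c₀ ℓ), (S v).card := by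
    rw [hVRdef]; exact Finset.sum_biUnion hpdI
  -- rich edges
  set K : Finset (Fin n) := I₀.filter (fun ℓ => ∃ w, w ∈ c₀ ℓ ∧ 4 ≤ (S w).card) with hKdef
  have hKsub : K ⊆ I₀ := Finset.filter_subset _ _
  have hKcard : K.card ≤ r := hcard ▸ Finset.card_le_card hKsub
  have hedgeK : ∀ ℓ ∈ K, ∑ v ∈ s2f (c₀ ℓ), (S v).card ≤ m := by
    intro ℓ hℓK
    obtain ⟨hℓ, w, hw, h4⟩ := Finset.mem_filter.mp hℓK
    obtain ⟨u, v, huv, hc⟩ := hends ℓ hℓ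
    have hu : u ∈ c₀ ℓ := by rw [hc]; exact Sym2.mem_mk_left _ _
    have hv : v ∈ c₀ ℓ := by rw [hc]; exact Sym2.mem_mk_right _ _
    rw [hc, s2f_mk, Finset.sum_pair huv]
    rcases Sym2.mem_iff.mp (hc ▸ hw) with rfl | rfl
    · have h0 : S v = ∅ := hCS ℓ hℓ w v hu hv huv (by omega)
      rw [h0]
      simpa using hScard_le w
    · have h0 : S u = ∅ := hCS ℓ hℓ w u hv hu (Ne.symm huv) (by omega)
      rw [h0]
      simpa using hScard_le w
  have hedgeNK : ∀ ℓ ∈ I₀, ℓ ∉ K → ∑ v ∈ s2f (c₀ ℓ), (S v).card ≤ 4 := by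
    intro ℓ hℓ hℓK
    have hsmall : ∀ w, w ∈ c₀ ℓ → (S w).card ≤ 3 := by
      intro w hw
      by_contra hcon
      exact hℓK (Finset.mem_filter.mpr ⟨hℓ, w, hw, by omega⟩)
    obtain ⟨u, v, huv, hc⟩ := hends ℓ hℓ
    have hu : u ∈ c₀ ℓ := by rw [hc]; exact Sym2.mem_mk_left _ _
    have hv : v ∈ c₀ ℓ := by rw [hc]; exact Sym2.mem_mk_right _ _
    rw [hc, s2f_mk, Finset.sum_pair huv]
    rcases Nat.lt_or_ge (S u).card 3 with h3 | h3
    · rcases Nat.lt_or_ge (S v).card 3 with h3' | h3'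
      · omega
      · have h0 : S u = ∅ := hCS ℓ hℓ v u hv hu (Ne.symm huv) h3'
        have := hsmall v hv
        rw [h0]
        simp
        omega
    · have h0 : S v = ∅ := hCS ℓ hℓ u v hu hv huv h3
      have := hsmall u hu
      rw [h0]
      simp
      omega
  have hα : 2*m*m + 4*K.card ≤ K.card * m + 4*r := by
    have hsplit : ∑ ℓ ∈ I₀ \ K, (∑ v ∈ s2f (c₀ ℓ), (S v).card)
        + ∑ ℓ ∈ K, (∑ v ∈ s2f (c₀ ℓ), (S v).card)
        = ∑ ℓ ∈ I₀, ∑ v ∈ s2f (c₀ ℓ), (S v).card := Finset.sum_sdiff hKsub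
    have h1 : ∑ ℓ ∈ K, (∑ v ∈ s2f (c₀ ℓ), (S v).card) ≤ K.card * m := by
      calc _ ≤ ∑ _ℓ ∈ K, m := Finset.sum_le_sum hedgeK
      _ = K.card * m := by rw [Finset.sum_const]; ring
    have h2 : ∑ ℓ ∈ I₀ \ K, (∑ v ∈ s2f (c₀ ℓ), (S v).card) ≤ (r - K.card) * 4 := by
      calc _ ≤ ∑ _ℓ ∈ I₀ \ K, 4 := Finset.sum_le_sum (fun ℓ hℓ =>
            hedgeNK ℓ (Finset.mem_sdiff.mp hℓ).1 (Finset.mem_sdiff.mp hℓ).2)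
      _ = (r - K.card) * 4 := by
            rw [Finset.sum_const, Finset.card_sdiff_of_subset hKsub, hcard]; ring
    have := hsupply
    rw [hdec, ← hsplit] at this
    omega
  -- the three-for-two swap
  have hSW3 : ∀ ℓ₁ ∈ I₀, ∀ ℓ₂ ∈ I₀, ℓ₁ ≠ ℓ₂ → ∀ t i j : Fin n, t ∉ I₀ → i ∉ I₀ → j ∉ I₀ →
      t ≠ i → t ≠ j → i ≠ j → ∀ x y u₁ u₂ a b : V,
      x ∈ c₀ ℓ₁ → y ∈ c₀ ℓ₂ → u₁ ∈ c₀ ℓ₁ → u₂ ∈ c₀ ℓ₂ → u₁ ≠ x → u₂ ≠ y →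
      s(x,y) ∈ F t → s(u₁,a) ∈ F i → s(u₂,b) ∈ F j → a ∉ VR → b ∉ VR → a ≠ b → False := by
    intro ℓ₁ hℓ₁ ℓ₂ hℓ₂ hℓ t i j htI hiI hjI hti htj hij x y u₁ u₂ a b
      hx hy hu₁ hu₂ hu1x hu2y hft hfi hfj haVR hbVR hab
    have hxVR : x ∈ VR := (hVRmem x).mpr ⟨ℓ₁, hℓ₁, hx⟩
    have hyVR : y ∈ VR := (hVRmem y).mpr ⟨ℓ₂, hℓ₂, hy⟩
    have hu1VR : u₁ ∈ VR := (hVRmem u₁).mpr ⟨ℓ₁, hℓ₁, hu₁⟩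
    have hu2VR : u₂ ∈ VR := (hVRmem u₂).mpr ⟨ℓ₂, hℓ₂, hu₂⟩
    have hxy : x ≠ y := fun h => hRM₀.2 ℓ₁ hℓ₁ ℓ₂ hℓ₂ hℓ x hx (h ▸ hy)
    have hu12 : u₁ ≠ u₂ := fun h => hRM₀.2 ℓ₁ hℓ₁ ℓ₂ hℓ₂ hℓ u₁ hu₁ (h ▸ hu₂)
    have hu1y : u₁ ≠ y := fun h => hRM₀.2 ℓ₁ hℓ₁ ℓ₂ hℓ₂ hℓ u₁ hu₁ (h ▸ hy)
    have hu2x : u₂ ≠ x := fun h => hRM₀.2 ℓ₂ hℓ₂ ℓ₁ hℓ₁ (Ne.symm hℓ) u₂ hu₂ (h ▸ hx)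
    have haX : ∀ w : V, w ∈ VR → a ≠ w := fun w hw h => haVR (h ▸ hw)
    have hbX : ∀ w : V, w ∈ VR → b ≠ w := fun w hw h => hbVR (h ▸ hw)
    have hold1 : ∀ p ∈ I₀, p ≠ ℓ₁ → x ∉ c₀ p ∧ u₁ ∉ c₀ p := by
      intro p hp hpℓ
      exact ⟨hRM₀.2 ℓ₁ hℓ₁ p hp (fun h => hpℓ h.symm) x hx,
             hRM₀.2 ℓ₁ hℓ₁ p hp (fun h => hpℓ h.symm) u₁ hu₁⟩
    have hold2 : ∀ p ∈ I₀, p ≠ ℓ₂ → y ∉ c₀ p ∧ u₂ ∉ c₀ p := by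
      intro p hp hpℓ
      exact ⟨hRM₀.2 ℓ₂ hℓ₂ p hp (fun h => hpℓ h.symm) y hy,
             hRM₀.2 ℓ₂ hℓ₂ p hp (fun h => hpℓ h.symm) u₂ hu₂⟩
    have haC : ∀ p ∈ I₀, a ∉ c₀ p := fun p hp hc => haVR ((hVRmem a).mpr ⟨p, hp, hc⟩)
    have hbC : ∀ p ∈ I₀, b ∉ c₀ p := fun p hp hc => hbVR ((hVRmem b).mpr ⟨p, hp, hc⟩)
    set c' := Function.update (Function.update (Function.update c₀ t s(x,y)) i s(u₁,a))
      j s(u₂,b) with hc'def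
    set I' := insert t (insert i (insert j ((I₀.erase ℓ₁).erase ℓ₂))) with hI'def
    have hct : c' t = s(x,y) := by
      rw [hc'def, Function.update_of_ne htj, Function.update_of_ne hti,
        Function.update_self]
    have hci : c' i = s(u₁,a) := by
      rw [hc'def, Function.update_of_ne hij, Function.update_self]
    have hcj : c' j = s(u₂,b) := by rw [hc'def, Function.update_self]
    have hcold : ∀ p ∈ I₀, c' p = c₀ p := by
      intro p hp
      rw [hc'def, Function.update_of_ne (by rintro rfl; exact hjI hp),
          Function.update_of_ne (by rintro rfl; exact hiI hp),
          Function.update_of_ne (by rintro rfl; exact htI hp)]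
    have hmemI' : ∀ p, p ∈ I' ↔ p = t ∨ p = i ∨ p = j ∨ (p ∈ I₀ ∧ p ≠ ℓ₁ ∧ p ≠ ℓ₂) := by
      intro p
      rw [hI'def]
      simp only [Finset.mem_insert, Finset.mem_erase]
      constructor
      · rintro (h | h | h | h)
        · exact Or.inl h
        · exact Or.inr (Or.inl h)
        · exact Or.inr (Or.inr (Or.inl h))
        · exact Or.inr (Or.inr (Or.inr ⟨h.2.2, h.2.1, h.1⟩))
      · rintro (h | h | h | ⟨h1, h2, h3⟩)
        · exact Or.inl h
        · exact Or.inr (Or.inl h)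
        · exact Or.inr (Or.inr (Or.inl h))
        · exact Or.inr (Or.inr (Or.inr ⟨h3, h2, h1⟩))
    have hRM' : RM I' c' := by
      constructor
      · intro p hp
        rcases (hmemI' p).mp hp with rfl | rfl | rfl | ⟨hp₀, -, -⟩
        · rw [hct]; exact hft
        · rw [hci]; exact hfi
        · rw [hcj]; exact hfj
        · rw [hcold p hp₀]; exact hRM₀.1 p hp₀
      · intro p hp q hq hpq w hwp hwq
        rcases (hmemI' p).mp hp with rfl | rfl | rfl | ⟨hp₀, hpℓ₁, hpℓ₂⟩ <;>
          rcases (hmemI' q).mp hq with rfl | rfl | rfl | ⟨hq₀, hqℓ₁, hqℓ₂⟩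
        · exact hpq rfl
        · rw [hct, Sym2.mem_iff] at hwp
          rw [hci, Sym2.mem_iff] at hwq
          rcases hwp with h1 | h1 <;> rcases hwq with h2 | h2
          · exact absurd (h1.symm.trans h2) (Ne.symm hu1x)
          · exact absurd (h1.symm.trans h2) (Ne.symm (haX x hxVR))
          · exact absurd (h1.symm.trans h2) (Ne.symm hu1y)
          · exact absurd (h1.symm.trans h2) (Ne.symm (haX y hyVR))
        · rw [hct, Sym2.mem_iff] at hwp
          rw [hcj, Sym2.mem_iff] at hwq
          rcases hwp with h1 | h1 <;> rcases hwq with h2 | h2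
          · exact absurd (h1.symm.trans h2) (Ne.symm hu2x)
          · exact absurd (h1.symm.trans h2) (Ne.symm (hbX x hxVR))
          · exact absurd (h1.symm.trans h2) (Ne.symm hu2y)
          · exact absurd (h1.symm.trans h2) (Ne.symm (hbX y hyVR))
        · rw [hct, Sym2.mem_iff] at hwp
          rw [hcold q hq₀] at hwq
          rcases hwp with h1 | h1
          · exact (hold1 q hq₀ hqℓ₁).1 (h1 ▸ hwq)
          · exact (hold2 q hq₀ hqℓ₂).1 (h1 ▸ hwq)
        · rw [hci, Sym2.mem_iff] at hwp
          rw [hct, Sym2.mem_iff] at hwq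
          rcases hwp with h1 | h1 <;> rcases hwq with h2 | h2
          · exact absurd (h1.symm.trans h2) hu1x
          · exact absurd (h1.symm.trans h2) hu1y
          · exact absurd (h1.symm.trans h2) (haX x hxVR)
          · exact absurd (h1.symm.trans h2) (haX y hyVR)
        · exact hpq rfl
        · rw [hci, Sym2.mem_iff] at hwp
          rw [hcj, Sym2.mem_iff] at hwq
          rcases hwp with h1 | h1 <;> rcases hwq with h2 | h2
          · exact absurd (h1.symm.trans h2) hu12
          · exact absurd (h1.symm.trans h2) (Ne.symm (hbX u₁ hu1VR))
          · exact absurd (h1.symm.trans h2) (haX u₂ hu2VR)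
          · exact absurd (h1.symm.trans h2) hab
        · rw [hci, Sym2.mem_iff] at hwp
          rw [hcold q hq₀] at hwq
          rcases hwp with h1 | h1
          · exact (hold1 q hq₀ hqℓ₁).2 (h1 ▸ hwq)
          · exact haC q hq₀ (h1 ▸ hwq)
        · rw [hcj, Sym2.mem_iff] at hwp
          rw [hct, Sym2.mem_iff] at hwq
          rcases hwp with h1 | h1 <;> rcases hwq with h2 | h2
          · exact absurd (h1.symm.trans h2) hu2x
          · exact absurd (h1.symm.trans h2) hu2y
          · exact absurd (h1.symm.trans h2) (hbX x hxVR)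
          · exact absurd (h1.symm.trans h2) (hbX y hyVR)
        · rw [hcj, Sym2.mem_iff] at hwp
          rw [hci, Sym2.mem_iff] at hwq
          rcases hwp with h1 | h1 <;> rcases hwq with h2 | h2
          · exact absurd (h1.symm.trans h2) (Ne.symm hu12)
          · exact absurd (h1.symm.trans h2) (Ne.symm (haX u₂ hu2VR))
          · exact absurd (h1.symm.trans h2) (hbX u₁ hu1VR)
          · exact absurd (h1.symm.trans h2) (Ne.symm hab)
        · exact hpq rfl
        · rw [hcj, Sym2.mem_iff] at hwp
          rw [hcold q hq₀] at hwq
          rcases hwp with h1 | h1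
          · exact (hold2 q hq₀ hqℓ₂).2 (h1 ▸ hwq)
          · exact hbC q hq₀ (h1 ▸ hwq)
        · rw [hcold p hp₀] at hwp
          rw [hct, Sym2.mem_iff] at hwq
          rcases hwq with h2 | h2
          · exact (hold1 p hp₀ hpℓ₁).1 (h2 ▸ hwp)
          · exact (hold2 p hp₀ hpℓ₂).1 (h2 ▸ hwp)
        · rw [hcold p hp₀] at hwp
          rw [hci, Sym2.mem_iff] at hwq
          rcases hwq with h2 | h2
          · exact (hold1 p hp₀ hpℓ₁).2 (h2 ▸ hwp)
          · exact haC p hp₀ (h2 ▸ hwp)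
        · rw [hcold p hp₀] at hwp
          rw [hcj, Sym2.mem_iff] at hwq
          rcases hwq with h2 | h2
          · exact (hold2 p hp₀ hpℓ₂).2 (h2 ▸ hwp)
          · exact hbC p hp₀ (h2 ▸ hwp)
        · rw [hcold p hp₀] at hwp
          rw [hcold q hq₀] at hwq
          exact hRM₀.2 p hp₀ q hq₀ hpq w hwp hwq
    have hℓ₂e : ℓ₂ ∈ I₀.erase ℓ₁ := Finset.mem_erase.mpr ⟨Ne.symm hℓ, hℓ₂⟩
    have hcardI' : I'.card = r + 1 := by
      rw [hI'def, Finset.card_insert_of_notMem, Finset.card_insert_of_notMem,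
          Finset.card_insert_of_notMem, Finset.card_erase_of_mem hℓ₂e,
          Finset.card_erase_of_mem hℓ₁, hcard]
      · have h2r : 2 ≤ r := by
          rw [← hcard]
          exact Finset.one_lt_card.mpr ⟨ℓ₁, hℓ₁, ℓ₂, hℓ₂, hℓ⟩
        omega
      · intro h
        exact hjI (Finset.mem_of_mem_erase (Finset.mem_of_mem_erase h))
      · intro h
        rcases Finset.mem_insert.mp h with h' | h'
        · exact hij h'
        · exact hiI (Finset.mem_of_mem_erase (Finset.mem_of_mem_erase h'))
      · intro h
        rcases Finset.mem_insert.mp h with h' | h'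
        · exact hti h'
        rcases Finset.mem_insert.mp h' with h'' | h''
        · exact htj h''
        · exact htI (Finset.mem_of_mem_erase (Finset.mem_of_mem_erase h''))
    have := hmax _ _ hRM'
    rw [hcardI'] at this
    omega
  -- the second count: n + K.card ≤ 2r
  have hβ : n + K.card ≤ 2*r := by
    rcases Nat.eq_zero_or_pos m with hm0 | hm1
    · omega
    obtain ⟨t, ht⟩ := Finset.card_pos.mp (hFreecard ▸ hm1)
    have htI : t ∉ I₀ := (Finset.mem_sdiff.mp ht).2
    set RB : Finset V := VR.filter (fun v => S v = ∅ ∧ ∃ ℓ ∈ K, v ∈ c₀ ℓ) with hRBdef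
    have hRBsub : RB ⊆ VR := Finset.filter_subset _ _
    -- each rich edge contributes its empty endpoint
    have hbotex : ∀ ℓ ∈ K, ∃ v, v ∈ c₀ ℓ ∧ v ∈ VR ∧ S v = ∅ := by
      intro ℓ hℓK
      obtain ⟨hℓ, w, hw, h4⟩ := Finset.mem_filter.mp hℓK
      obtain ⟨u, v, huv, hc⟩ := hends ℓ hℓ
      have hu : u ∈ c₀ ℓ := by rw [hc]; exact Sym2.mem_mk_left _ _
      have hv : v ∈ c₀ ℓ := by rw [hc]; exact Sym2.mem_mk_right _ _
      rcases Sym2.mem_iff.mp (hc ▸ hw) with rfl | rfl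
      · exact ⟨v, hv, (hVRmem v).mpr ⟨ℓ, hℓ, hv⟩, hCS ℓ hℓ w v hu hv huv (by omega)⟩
      · exact ⟨u, hu, (hVRmem u).mpr ⟨ℓ, hℓ, hu⟩, hCS ℓ hℓ w u hv hu (Ne.symm huv) (by omega)⟩
    have hRBk : K.card ≤ RB.card := by
      set bot : Fin n → V := fun ℓ =>
        if h : ∃ v, v ∈ c₀ ℓ ∧ v ∈ VR ∧ S v = ∅ then h.choose else v0 with hbotdef
      apply Finset.card_le_card_of_injOn bot
      · intro ℓ hℓK
        have hex := hbotex ℓ hℓK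
        have hspec := hex.choose_spec
        rw [hbotdef]
        simp only [dif_pos hex]
        exact Finset.mem_filter.mpr ⟨hspec.2.1, hspec.2.2, ℓ, hℓK, hspec.1⟩
      · intro ℓ hℓ ℓ' hℓ' heq
        have hex := hbotex ℓ hℓ
        have hex' := hbotex ℓ' hℓ'
        rw [hbotdef] at heq
        simp only [dif_pos hex, dif_pos hex'] at heq
        by_contra hne
        exact hRM₀.2 ℓ (hKsub hℓ) ℓ' (hKsub hℓ') hne _ hex.choose_spec.1
          (heq ▸ hex'.choose_spec.1)
    -- inject the edges of the free colour t into VR \ RB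
    have hnle : n ≤ (VR \ RB).card := by
      rw [← hsize t]
      set pick2 : Sym2 V → V := fun f =>
        if h : ∃ v, v ∈ f ∧ v ∈ VR ∧ v ∉ RB then h.choose else v0 with hpick2def
      have hexall : ∀ f ∈ F t, ∃ v, v ∈ f ∧ v ∈ VR ∧ v ∉ RB := by
        intro f hf
        by_contra hcon
        · skip
          push_neg at hcon
          obtain ⟨x, y, hcxy⟩ := sym2_decomp f
          have hxyne : x ≠ y := by
            rintro rfl
            exact hndiag t f hf (hcxy ▸ Sym2.mk_isDiag_iff.mpr rfl)
          have hxf : x ∈ f := by rw [hcxy]; exact Sym2.mem_mk_left _ _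
          have hyf : y ∈ f := by rw [hcxy]; exact Sym2.mem_mk_right _ _
          -- f meets VR
          obtain ⟨z, hzf, hzVR⟩ := hmeet t htI f hf
          -- both endpoints in VR?
          by_cases hxVR : x ∈ VR <;> by_cases hyVR : y ∈ VR
          · -- both endpoints lie in RB : apply the 3-for-2 swap
            have hxRB := hcon x hxf hxVR
            have hyRB := hcon y hyf hyVR
            obtain ⟨-, hSx, ℓ₁, hℓ₁K, hxc⟩ := Finset.mem_filter.mp hxRB
            obtain ⟨-, hSy, ℓ₂, hℓ₂K, hyc⟩ := Finset.mem_filter.mp hyRB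
            have hℓne : ℓ₁ ≠ ℓ₂ := by
              rintro rfl
              -- then f equals the matching edge of colour ℓ₁, impossible
              obtain ⟨u, v, huv, hc⟩ := hends ℓ₁ (hKsub hℓ₁K)
              have hfeq : f = c₀ ℓ₁ := by
                rw [hc, hcxy]
                rcases Sym2.mem_iff.mp (hc ▸ hxc) with h1 | h1 <;>
                  rcases Sym2.mem_iff.mp (hc ▸ hyc) with h2 | h2
                · exact absurd (h1.symm ▸ h2.symm ▸ rfl : x = y) hxyne
                · rw [h1, h2]
                · rw [h1, h2]; exact Sym2.eq_swap
                · exact absurd (h1.symm ▸ h2.symm ▸ rfl : x = y) hxyne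
              have : t = ℓ₁ := hdisj' t ℓ₁ f hf (by rw [hfeq]; exact hRM₀.1 ℓ₁ (hKsub hℓ₁K))
              exact htI (this ▸ hKsub hℓ₁K)
            -- rich tops
            obtain ⟨hℓ₁I, w₁, hw₁, h4₁⟩ := Finset.mem_filter.mp hℓ₁K
            obtain ⟨hℓ₂I, w₂, hw₂, h4₂⟩ := Finset.mem_filter.mp hℓ₂K
            have hw₁x : w₁ ≠ x := by
              rintro rfl
              rw [hSx] at h4₁
              simp at h4₁
            have hw₂y : w₂ ≠ y := by
              rintro rfl
              rw [hSy] at h4₂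
              simp at h4₂
            -- choose the pendant colours
            have hc₁ : 3 ≤ ((S w₁).erase t).card := by
              have := Finset.pred_card_le_card_erase (s := S w₁) (a := t)
              omega
            obtain ⟨i, hi⟩ := Finset.card_pos.mp (show 0 < ((S w₁).erase t).card by omega)
            obtain ⟨hit, hiS⟩ := Finset.mem_erase.mp hi
            obtain ⟨hiI, hip⟩ := (hSmem w₁ i).mp hiS
            obtain ⟨a, hia, haVR, haw⟩ := hpend i w₁ hip
            have hc₂ : 2 ≤ (((S w₂).erase t).erase i).card := by
              have h1 := Finset.pred_card_le_card_erase (s := S w₂) (a := t)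
              have h2 := Finset.pred_card_le_card_erase (s := (S w₂).erase t) (a := i)
              omega
            obtain ⟨j₁, hj₁, j₂, hj₂, hjne⟩ := Finset.one_lt_card.mp (by omega :
              1 < (((S w₂).erase t).erase i).card)
            have hj₁i := (Finset.mem_erase.mp hj₁).1
            have hj₁t := (Finset.mem_erase.mp (Finset.mem_erase.mp hj₁).2).1
            have hj₁S := (Finset.mem_erase.mp (Finset.mem_erase.mp hj₁).2).2
            have hj₂i := (Finset.mem_erase.mp hj₂).1
            have hj₂t := (Finset.mem_erase.mp (Finset.mem_erase.mp hj₂).2).1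
            have hj₂S := (Finset.mem_erase.mp (Finset.mem_erase.mp hj₂).2).2
            obtain ⟨hj₁I, hj₁p⟩ := (hSmem w₂ j₁).mp hj₁S
            obtain ⟨hj₂I, hj₂p⟩ := (hSmem w₂ j₂).mp hj₂S
            obtain ⟨b₁, hjb₁, hb₁VR, hb₁w⟩ := hpend j₁ w₂ hj₁p
            obtain ⟨b₂, hjb₂, hb₂VR, hb₂w⟩ := hpend j₂ w₂ hj₂p
            have hbne : b₁ ≠ b₂ := hdistinct w₂ b₁ b₂ j₁ j₂ hjne hjb₁ hjb₂
            -- one of b₁, b₂ differs from a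
            rcases ne_or_eq b₁ a with hba | hba
            · exact hSW3 ℓ₁ hℓ₁I ℓ₂ hℓ₂I hℓne t i j₁ htI hiI hj₁I
                (Ne.symm hit) (Ne.symm hj₁t) (Ne.symm hj₁i) x y w₁ w₂ a b₁
                hxc hyc hw₁ hw₂ hw₁x hw₂y (hcxy ▸ hf) hia hjb₁ haVR hb₁VR
                hba.symm
            · exact hSW3 ℓ₁ hℓ₁I ℓ₂ hℓ₂I hℓne t i j₂ htI hiI hj₂I
                (Ne.symm hit) (Ne.symm hj₂t) (Ne.symm hj₂i) x y w₁ w₂ a b₂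
                hxc hyc hw₁ hw₂ hw₁x hw₂y (hcxy ▸ hf) hia hjb₂ haVR hb₂VR
                (fun h => hbne (hba.trans h))
          · -- x ∈ VR, y ∉ VR : f is a pendant of t at x, so S x ≠ ∅
            have hpx : pendAt t x := by
              refine ⟨hxVR, f, hf, hxf, ?_⟩
              intro w' hw' hwne
              rcases Sym2.mem_iff.mp (hcxy ▸ hw') with h | h
              · exact absurd h hwne
              · exact h ▸ hyVR
            have htS : t ∈ S x := (hSmem x t).mpr ⟨htI, hpx⟩
            have hxRB := hcon x hxf hxVR
            obtain ⟨-, hSx, -⟩ := Finset.mem_filter.mp hxRB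
            rw [hSx] at htS
            simp at htS
          · -- y ∈ VR, x ∉ VR
            have hpy : pendAt t y := by
              refine ⟨hyVR, f, hf, hyf, ?_⟩
              intro w' hw' hwne
              rcases Sym2.mem_iff.mp (hcxy ▸ hw') with h | h
              · exact h ▸ hxVR
              · exact absurd h hwne
            have htS : t ∈ S y := (hSmem y t).mpr ⟨htI, hpy⟩
            have hyRB := hcon y hyf hyVR
            obtain ⟨-, hSy, -⟩ := Finset.mem_filter.mp hyRB
            rw [hSy] at htS
            simp at htS
          · -- neither endpoint in VR : contradicts hmeet
            rcases Sym2.mem_iff.mp (hcxy ▸ hzf) with h | h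
            · exact hxVR (h ▸ hzVR)
            · exact hyVR (h ▸ hzVR)
      apply Finset.card_le_card_of_injOn pick2
      · intro f hf
        have hex := hexall f hf
        have hspec := hex.choose_spec
        rw [hpick2def]
        simp only [dif_pos hex]
        exact Finset.mem_sdiff.mpr ⟨hspec.2.1, hspec.2.2⟩
      · intro f hf g hg hfg
        have hexf := hexall f hf
        have hexg := hexall g hg
        rw [hpick2def] at hfg
        simp only [dif_pos hexf, dif_pos hexg] at hfg
        exact hmatch' t f hf g hg _ hexf.choose_spec.1 (hfg ▸ hexg.choose_spec.1)
    have h1 : (VR \ RB).card = VR.card - RB.card := Finset.card_sdiff_of_subset hRBsub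
    have h2 : RB.card ≤ VR.card := Finset.card_le_card hRBsub
    omega
  -- final arithmetic: 3m ≤ r + 18
  have hfinal : 3*m ≤ r + 18 := by
    rcases le_or_gt m 4 with h4 | h5
    · omega
    · have hk : K.card + m ≤ r := by omega
      have h1 : 2*(m:ℤ)*m + 4*(K.card:ℤ) ≤ (K.card:ℤ)*m + 4*(r:ℤ) := by exact_mod_cast hα
      have h2 : (K.card:ℤ) + (m:ℤ) ≤ (r:ℤ) := by exact_mod_cast hk
      have h5' : (5:ℤ) ≤ (m:ℤ) := by exact_mod_cast h5
      have hk0 : (0:ℤ) ≤ (K.card:ℤ) := Int.ofNat_nonneg _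
      have hprod : 0 ≤ ((r:ℤ) - (m:ℤ) - (K.card:ℤ)) * ((m:ℤ) - 4) := by
        apply mul_nonneg <;> linarith
      have key : 3*(m:ℤ) ≤ (r:ℤ) + 4 := by nlinarith [hprod, h1, h5']
      have key' : 3*m ≤ r + 4 := by exact_mod_cast key
      omega
  refine ⟨I₀, c₀, hRM₀.1, hRM₀.2, ?_⟩
  rw [hcard]
  have hn' : (n:ℝ) = (r:ℝ) + (m:ℝ) := by exact_mod_cast hnm
  have hfin' : 3*(m:ℝ) ≤ (r:ℝ) + 18 := by exact_mod_cast hfinal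
  rw [hn']
  linarith
end

section
/- Let the vertex set of a graph be partitioned into two sets S and Y, and let P_1, …, P_m be a sequence of directed S–S paths with m ≥ 2|Y| + 1. Then there exists a rainbow-monotone directed S–S path: a directed path P from a vertex of S to a vertex of S with all internal vertices in Y, whose edges, in the order they appear along P, are e_1, …, e_k with e_t an edge of P_{j_t} for indices j_1 < j_2 < … < j_k. -/
def dEdges {V : Type*} (l : List V) : List (V × V) :=
  l.zip l.tail

def IsSSPathList {V : Type*} (G : SimpleGraph V) (S : Set V) (l : List V) : Prop :=
  l.Nodup ∧ l.Chain' G.Adj ∧ 2 ≤ l.length ∧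
  (∀ x ∈ l.head?, x ∈ S) ∧ (∀ x ∈ l.getLast?, x ∈ S) ∧
  ∀ v ∈ l, (∀ x ∈ l.head?, v ≠ x) → (∀ x ∈ l.getLast?, v ≠ x) → v ∉ S

namespace Stmt5

variable {V : Type*}

lemma dEdges_cons₂ (a b : V) (l : List V) :
    dEdges (a :: b :: l) = (a, b) :: dEdges (b :: l) := rfl

lemma dEdges_pair (a b : V) : dEdges [a, b] = [(a, b)] := rfl

lemma rel_of_mem_dEdges {R : V → V → Prop} :
    ∀ {l : List V} {a b : V}, l.Chain' R → (a, b) ∈ dEdges l → R a b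
  | [], _, _, _, h => by simp [dEdges] at h
  | [_], _, _, _, h => by simp [dEdges] at h
  | (x :: y :: l), a, b, hc, h => by
      rw [dEdges_cons₂] at h
      rcases List.mem_cons.1 h with h | h
      · obtain ⟨rfl, rfl⟩ := Prod.mk.injEq .. ▸ (Prod.ext_iff.1 h)
        exact hc.rel_head
      · exact rel_of_mem_dEdges hc.tail h

lemma dEdges_prefix_of_prefix : ∀ (l r : List V), dEdges l <+: dEdges (l ++ r)
  | [], r => by simp [dEdges]
  | [a], r => by simp [dEdges]
  | (a :: b :: l), r => by
      rw [List.cons_append, List.cons_append, dEdges_cons₂, dEdges_cons₂, ← List.cons_append]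
      exact List.cons_prefix_cons.mpr ⟨rfl, dEdges_prefix_of_prefix (b :: l) r⟩

lemma mem_dEdges_of_suffix {l₁ l₂ : List V} {e : V × V} (h : l₁ <:+ l₂)
    (he : e ∈ dEdges l₁) : e ∈ dEdges l₂ := by
  obtain ⟨r, rfl⟩ := h
  induction r with
  | nil => simpa using he
  | cons a r ih =>
      rcases hr : r ++ l₁ with _ | ⟨b, t⟩
      · rcases List.append_eq_nil_iff.1 hr with ⟨rfl, rfl⟩
        simp [dEdges] at he
      · rw [List.cons_append, hr, dEdges_cons₂]
        exact List.mem_cons_of_mem _ (hr ▸ ih)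

end Stmt5

set_option linter.unusedSectionVars false
namespace Stmt5X
open Stmt5

lemma dEdges_concat {V : Type*} : ∀ {l : List V} {v : V}, l.getLast? = some v → ∀ (w : V),
    dEdges (l ++ [w]) = dEdges l ++ [(v, w)]
  | [], v, h, w => by simp at h
  | [a], v, h, w => by simp at h; subst h; rfl
  | (a :: b :: l), v, h, w => by
      rw [List.getLast?_cons_cons] at h
      rw [show a :: b :: l ++ [w] = a :: b :: (l ++ [w]) from rfl,
        dEdges_cons₂ a b (l ++ [w]), show b :: (l ++ [w]) = (b :: l) ++ [w] from rfl,
        dEdges_concat h w]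
      rfl

variable {V : Type*} [DecidableEq V] (G : SimpleGraph V) (S : Finset V) {m : ℕ}
  (P : Fin m → List V)

def WitL (i : ℕ) (s v : V) (l : List V) (js : List (Fin m)) : Prop :=
  l.Nodup ∧ l.Chain' G.Adj ∧ 2 ≤ l.length ∧
  l.head? = some s ∧ l.getLast? = some v ∧ s ∈ S ∧
  (∀ x ∈ l.tail, x ∉ S) ∧
  List.Forall₂ (fun e j => e ∈ dEdges (P j)) (dEdges l) js ∧
  js.Chain' (· < ·) ∧ ∀ j ∈ js, (j : ℕ) < i

def Wit (i : ℕ) (s v : V) : Prop := ∃ l js, WitL G S P i s v l js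

def Good : Prop :=
  ∃ l js, IsSSPathList G (S : Set V) l ∧
    List.Forall₂ (fun e j => e ∈ dEdges (P j)) (dEdges l) js ∧ js.Chain' (· < ·)

lemma Wit.mono {i i' : ℕ} (h : i ≤ i') {s v : V} (hw : Wit G S P i s v) :
    Wit G S P i' s v := by
  obtain ⟨l, js, h1, h2, h3, h4, h5, h6, h7, h8, h9, h10⟩ := hw
  exact ⟨l, js, h1, h2, h3, h4, h5, h6, h7, h8, h9, fun j hj => lt_of_lt_of_le (h10 j hj) h⟩

lemma witL_prefix {i : ℕ} {s v w : V} {l : List V} {js : List (Fin m)}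
    (h : WitL G S P i s v l js) (hwl : w ∈ l) (hws : w ≠ s) : Wit G S P i s w := by
  obtain ⟨hnd, hch, hlen, hhd, hlast, hsS, htl, hf, hjs, hbd⟩ := h
  obtain ⟨l₁, l₂, rfl⟩ := List.append_of_mem hwl
  have hl₁ : l₁ ≠ [] := by
    rintro rfl
    simp at hhd
    exact hws hhd
  have hassoc : l₁ ++ w :: l₂ = (l₁ ++ [w]) ++ l₂ := by simp
  have hpre : (l₁ ++ [w]) <+: (l₁ ++ w :: l₂) := ⟨l₂, hassoc.symm⟩
  have hconcat : l₁ ++ [w] ≠ [] := by simp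
  have hdpre : dEdges (l₁ ++ [w]) <+: dEdges (l₁ ++ w :: l₂) := by
    rw [hassoc]; exact dEdges_prefix_of_prefix _ _
  set n := (dEdges (l₁ ++ [w])).length with hn
  refine ⟨l₁ ++ [w], js.take n, ?_, ?_, ?_, ?_, ?_, hsS, ?_, ?_, ?_, ?_⟩
  · exact hnd.sublist hpre.sublist
  · exact hch.prefix hpre
  · have : 1 ≤ l₁.length := List.length_pos_iff.2 hl₁
    simp only [List.length_append, List.length_cons, List.length_nil]; omega
  · rw [List.head?_append_of_ne_nil _ hl₁]
    rw [List.head?_append_of_ne_nil _ hl₁] at hhd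
    exact hhd
  · exact List.getLast?_concat
  · intro x hx
    apply htl
    rw [List.tail_append_of_ne_nil hl₁] at hx ⊢
    rcases List.mem_append.1 hx with hx | hx
    · exact List.mem_append_left _ hx
    · simp at hx; subst hx; exact List.mem_append_right _ (List.mem_cons_self)
  · have heq : dEdges (l₁ ++ [w]) = (dEdges (l₁ ++ w :: l₂)).take n :=
      List.prefix_iff_eq_take.1 hdpre
    rw [heq]
    exact List.forall₂_take n hf
  · exact hjs.prefix (List.take_prefix _ _)
  · intro j hj
    exact hbd j (List.mem_of_mem_take hj)

lemma witL_extend {i : ℕ} (hi : i < m) {s v w : V} {l : List V} {js : List (Fin m)}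
    (h : WitL G S P i s v l js) (hwl : w ∉ l) (hwS : w ∉ S) (hadj : G.Adj v w)
    (he : (v, w) ∈ dEdges (P ⟨i, hi⟩)) : Wit G S P (i + 1) s w := by
  obtain ⟨hnd, hch, hlen, hhd, hlast, hsS, htl, hf, hjs, hbd⟩ := h
  have hlne : l ≠ [] := by rintro rfl; simp at hhd
  refine ⟨l ++ [w], js ++ [⟨i, hi⟩], ?_, ?_, ?_, ?_, ?_, hsS, ?_, ?_, ?_, ?_⟩
  · simp [List.nodup_append, hnd, hwl]; intro a ha h; exact hwl (h ▸ ha)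
  · refine List.isChain_append.2 ⟨hch, List.isChain_singleton _, ?_⟩
    intro x hx y hy
    simp at hy; subst hy
    rw [hlast] at hx; simp at hx; subst hx
    exact hadj
  · rw [List.length_append]; omega
  · rw [List.head?_append_of_ne_nil _ hlne]; exact hhd
  · exact List.getLast?_concat
  · intro x hx
    rw [List.tail_append_of_ne_nil hlne] at hx
    rcases List.mem_append.1 hx with hx | hx
    · exact htl x hx
    · simp at hx; subst hx; exact hwS
  · rw [dEdges_concat hlast w]
    exact List.rel_append hf (List.forall₂_cons.2 ⟨he, List.Forall₂.nil⟩)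
  · refine List.isChain_append.2 ⟨hjs, List.isChain_singleton _, ?_⟩
    intro x hx y hy
    simp at hy; subst hy
    exact Fin.lt_def.2 (hbd x (List.mem_of_mem_getLast? hx))
  · intro j hj
    rcases List.mem_append.1 hj with hj | hj
    · exact Nat.lt_succ_of_lt (hbd j hj)
    · simp at hj; subst hj; exact Nat.lt_succ_self i

lemma witL_good {i : ℕ} (hi : i < m) {s v w : V} {l : List V} {js : List (Fin m)}
    (h : WitL G S P i s v l js) (hwl : w ∉ l) (hwS : w ∈ S) (hws : w ≠ s)
    (hadj : G.Adj v w) (he : (v, w) ∈ dEdges (P ⟨i, hi⟩)) : Good G S P := by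
  obtain ⟨hnd, hch, hlen, hhd, hlast, hsS, htl, hf, hjs, hbd⟩ := h
  have hlne : l ≠ [] := by rintro rfl; simp at hhd
  have hhd' : (l ++ [w]).head? = some s := by
    rw [List.head?_append_of_ne_nil _ hlne]; exact hhd
  have hlast' : (l ++ [w]).getLast? = some w := List.getLast?_concat
  refine ⟨l ++ [w], js ++ [⟨i, hi⟩], ⟨?_, ?_, ?_, ?_, ?_, ?_⟩, ?_, ?_⟩
  · simp [List.nodup_append, hnd, hwl]; intro a ha h; exact hwl (h ▸ ha)
  · refine List.isChain_append.2 ⟨hch, List.isChain_singleton _, ?_⟩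
    intro x hx y hy
    simp at hy; subst hy
    rw [hlast] at hx; simp at hx; subst hx
    exact hadj
  · rw [List.length_append]; omega
  · intro x hx; rw [hhd'] at hx; simp at hx; subst hx; exact hsS
  · intro x hx; rw [hlast'] at hx; simp at hx; subst hx; exact hwS
  · intro u hu hu1 hu2
    have hus : u ≠ s := hu1 s (by rw [hhd']; rfl)
    have huw : u ≠ w := hu2 w (by rw [hlast']; rfl)
    rcases List.mem_append.1 hu with hu | hu
    · rcases l with _ | ⟨a, t⟩
      · simp at hu
      · have ha : a = s := by simp at hhd; exact hhd
        rcases List.mem_cons.1 hu with hu | hu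
        · exact absurd (hu.trans ha) hus
        · exact htl u hu
    · simp at hu; exact absurd hu huw
  · rw [dEdges_concat hlast w]
    exact List.rel_append hf (List.forall₂_cons.2 ⟨he, List.Forall₂.nil⟩)
  · refine List.isChain_append.2 ⟨hjs, List.isChain_singleton _, ?_⟩
    intro x hx y hy
    simp at hy; subst hy
    exact Fin.lt_def.2 (hbd x (List.mem_of_mem_getLast? hx))

lemma wit_base {i : ℕ} (hi : i < m) {s y : V} (hsS : s ∈ S) (hyS : y ∉ S)
    (hadj : G.Adj s y) (he : (s, y) ∈ dEdges (P ⟨i, hi⟩)) : Wit G S P (i + 1) s y := by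
  refine ⟨[s, y], [⟨i, hi⟩], ?_, ?_, ?_, rfl, rfl, hsS, ?_, ?_, ?_, ?_⟩
  · simp [hadj.ne]
  · exact List.isChain_pair.2 hadj
  · simp
  · intro x hx; simp at hx; subst hx; exact hyS
  · exact List.forall₂_cons.2 ⟨he, List.Forall₂.nil⟩
  · exact List.isChain_singleton _
  · intro j hj; simp at hj; subst hj; exact Nat.lt_succ_self i

lemma good_base {i : ℕ} (hi : i < m) {s s' : V} (hsS : s ∈ S) (hs'S : s' ∈ S)
    (hne : s ≠ s') (hadj : G.Adj s s') (he : (s, s') ∈ dEdges (P ⟨i, hi⟩)) :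
    Good G S P := by
  refine ⟨[s, s'], [⟨i, hi⟩], ⟨?_, ?_, ?_, ?_, ?_, ?_⟩, ?_, ?_⟩
  · simp [hne]
  · exact List.isChain_pair.2 hadj
  · simp
  · intro x hx; simp at hx; subst hx; exact hsS
  · intro x hx; simp at hx; subst hx; exact hs'S
  · intro u hu hu1 hu2
    rcases List.mem_cons.1 hu with hu | hu
    · exact absurd hu (hu1 s rfl)
    · simp at hu; exact absurd hu (hu2 s' rfl)
  · exact List.forall₂_cons.2 ⟨he, List.Forall₂.nil⟩
  · exact List.isChain_singleton _

open Classical in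
noncomputable def wSet (i : ℕ) (v : V) : Finset V :=
  S.filter (fun s => Wit G S P i s v)

noncomputable def cW (i : ℕ) (v : V) : ℕ := min (wSet G S P i v).card 2

lemma mem_wSet {i : ℕ} {s v : V} : s ∈ wSet G S P i v ↔ s ∈ S ∧ Wit G S P i s v := by
  classical
  simp [wSet]

lemma cW_le_two (i : ℕ) (v : V) : cW G S P i v ≤ 2 := min_le_right _ _

lemma cW_mono {i i' : ℕ} (h : i ≤ i') (v : V) : cW G S P i v ≤ cW G S P i' v := by
  apply min_le_min _ le_rfl
  apply Finset.card_le_card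
  intro s hs
  rw [mem_wSet] at hs ⊢
  exact ⟨hs.1, hs.2.mono G S P h⟩

lemma one_le_cW {i : ℕ} {s v : V} (hs : s ∈ S) (hw : Wit G S P i s v) :
    1 ≤ cW G S P i v := by
  refine le_min ?_ (by norm_num)
  exact Finset.card_pos.2 ⟨s, (mem_wSet G S P).2 ⟨hs, hw⟩⟩

lemma cW_eq_two {i : ℕ} {s s' v : V} (hs : s ∈ S) (hs' : s' ∈ S) (hne : s ≠ s')
    (hw : Wit G S P i s v) (hw' : Wit G S P i s' v) : cW G S P i v = 2 := by
  have : 1 < (wSet G S P i v).card :=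
    Finset.one_lt_card.2 ⟨s, (mem_wSet G S P).2 ⟨hs, hw⟩, s', (mem_wSet G S P).2 ⟨hs', hw'⟩, hne⟩
  unfold cW; omega

lemma exists_of_one_le_cW {i : ℕ} {v : V} (h : 1 ≤ cW G S P i v) :
    ∃ s, s ∈ S ∧ Wit G S P i s v := by
  have : 0 < (wSet G S P i v).card := by unfold cW at h; omega
  obtain ⟨s, hs⟩ := Finset.card_pos.1 this
  exact ⟨s, ((mem_wSet G S P).1 hs).1, ((mem_wSet G S P).1 hs).2⟩

lemma cW_le_one {i : ℕ} {v x : V} (h : ∀ u, u ∈ S → Wit G S P i u v → u = x) :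
    cW G S P i v ≤ 1 := by
  have : (wSet G S P i v).card ≤ 1 := by
    apply Finset.card_le_one.2
    intro a ha b hb
    rw [mem_wSet] at ha hb
    rw [h a ha.1 ha.2, h b hb.1 hb.2]
  unfold cW; omega

noncomputable def phi [Fintype V] (i : ℕ) : ℕ := ∑ v ∈ Sᶜ, cW G S P i v

lemma good_imp (hg : Good G S P) :
    ∃ l : List V, IsSSPathList G (S : Set V) l ∧
      ∃ j : Fin (dEdges l).length → Fin m,
        StrictMono j ∧ ∀ t, (dEdges l).get t ∈ dEdges (P (j t)) := by
  obtain ⟨l, js, hss, hf, hch⟩ := hg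
  have hlen : (dEdges l).length = js.length := hf.length_eq
  refine ⟨l, hss, fun t => js.get (Fin.cast hlen t), ?_, ?_⟩
  · intro a b hab
    have hp : js.Pairwise (· < ·) := List.isChain_iff_pairwise.1 hch
    exact List.pairwise_iff_get.1 hp _ _ (Fin.lt_def.2 (Fin.lt_def.1 hab))
  · intro t
    exact (List.forall₂_iff_get.1 hf).2 t.val t.isLt (hlen ▸ t.isLt)

lemma step [Fintype V] (hpaths : ∀ i, IsSSPathList G (S : Set V) (P i))
    (hno : ¬ Good G S P) {i : ℕ} (hi : i < m) :
    phi G S P i < phi G S P (i + 1) := by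
  -- reduce to existence of a strictly increasing coordinate
  have hmono : ∀ v ∈ Sᶜ, cW G S P i v ≤ cW G S P (i + 1) v :=
    fun v _ => cW_mono G S P (Nat.le_succ i) v
  by_contra hcon
  have hns : ∀ v ∈ Sᶜ, ¬ (cW G S P i v < cW G S P (i + 1) v) := by
    intro v hv hlt
    exact hcon (Finset.sum_lt_sum hmono ⟨v, hv, hlt⟩)
  have heq : ∀ v, v ∉ S → cW G S P (i + 1) v = cW G S P i v := by
    intro v hv
    have h1 := hmono v (Finset.mem_compl.2 hv)
    have h2 := hns v (Finset.mem_compl.2 hv)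
    omega
  -- decompose the path P ⟨i, hi⟩
  obtain ⟨hnd, hch, hlen2, hhd, hlast, hint⟩ := hpaths ⟨i, hi⟩
  obtain ⟨s, rest, hl⟩ : ∃ s rest, P ⟨i, hi⟩ = s :: rest := by
    rcases hP : P ⟨i, hi⟩ with _ | ⟨a, t⟩
    · rw [hP] at hlen2; simp at hlen2
    · exact ⟨a, t, rfl⟩
  have hrest : rest ≠ [] := by
    rintro rfl; rw [hl] at hlen2; simp at hlen2
  obtain ⟨ys, s', hl'⟩ : ∃ ys s', P ⟨i, hi⟩ = s :: (ys ++ [s']) := by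
    refine ⟨rest.dropLast, rest.getLast hrest, ?_⟩
    rw [hl, List.dropLast_append_getLast hrest]
  clear hl hrest
  have hhd' : (P ⟨i, hi⟩).head? = some s := by rw [hl']; rfl
  have hlast' : (P ⟨i, hi⟩).getLast? = some s' := by
    rw [hl', show s :: (ys ++ [s']) = (s :: ys) ++ [s'] from rfl]
    exact List.getLast?_concat
  have hs : s ∈ S := hhd s hhd'
  have hs' : s' ∈ S := hlast s' hlast'
  have hnds : s ∉ ys ++ [s'] ∧ (ys ++ [s']).Nodup := by
    rw [hl'] at hnd; exact ⟨(List.nodup_cons.1 hnd).1, (List.nodup_cons.1 hnd).2⟩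
  have hss' : s ≠ s' := by
    intro h; exact hnds.1 (h ▸ List.mem_append_right _ (List.mem_cons_self))
  have hys : ∀ y ∈ ys, y ∉ S := by
    intro y hy
    have hys' : y ≠ s := by
      intro h; exact hnds.1 (h ▸ List.mem_append_left _ hy)
    have hyss' : y ≠ s' := by
      intro h
      have := (List.nodup_append.1 hnds.2).2.2
      exact this y hy s' (List.mem_singleton_self _) h
    refine hint y (by rw [hl']; exact List.mem_cons_of_mem _ (List.mem_append_left _ hy)) ?_ ?_
    · intro x hx; rw [hhd'] at hx; simp at hx; subst hx; exact hys'
    · intro x hx; rw [hlast'] at hx; simp at hx; subst hx; exact hyss'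
  -- the "D" invariant and the upgrade argument
  set D : V → Prop :=
    fun v => ∀ x, x ≠ s → ∃ u, u ∈ S ∧ u ≠ x ∧ Wit G S P i u v with hD_def
  have upgrade : ∀ w, w ∉ S →
      (∀ x, x ≠ s →
        ((∃ u, u ∈ S ∧ u ≠ x ∧ Wit G S P i u w) ∨
         (∃ u, u ∈ S ∧ u ≠ x ∧ Wit G S P (i + 1) u w))) →
      D w := by
    intro w hwS hstep x hx
    by_contra hb
    push_neg at hb
    have hbad : ∀ u, u ∈ S → Wit G S P i u w → u = x := by
      intro u hu hw
      by_contra hne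
      exact hb u hu hne hw
    rcases hstep x hx with ⟨u, huS, hux, huw⟩ | ⟨u, huS, hux, huw⟩
    · exact hb u huS hux huw
    · have h1 : 1 ≤ cW G S P i w := by
        rw [← heq w hwS]; exact one_le_cW G S P huS huw
      obtain ⟨u₀, hu₀S, hu₀⟩ := exists_of_one_le_cW G S P h1
      have hux0 : u₀ = x := hbad u₀ hu₀S hu₀
      subst hux0
      have h2 : cW G S P (i + 1) w = 2 :=
        cW_eq_two G S P huS hu₀S hux huw (hu₀.mono G S P (Nat.le_succ i))
      have h3 : cW G S P i w ≤ 1 := cW_le_one G S P hbad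
      rw [heq w hwS] at h2
      omega
  -- the walk along the path
  have walk : ∀ zs v, (v :: (zs ++ [s'])) <:+ P ⟨i, hi⟩ → v ∉ S →
      (∀ z ∈ zs, z ∉ S) → D v → False := by
    intro zs
    induction zs with
    | nil =>
        intro v hsuf hvS _ hDv
        have hedge : (v, s') ∈ dEdges (P ⟨i, hi⟩) :=
          mem_dEdges_of_suffix hsuf (by simp [dEdges_pair])
        have hadj : G.Adj v s' := rel_of_mem_dEdges hch hedge
        obtain ⟨u, huS, hus', huw⟩ := hDv s' (Ne.symm hss')
        obtain ⟨lw, jsw, hwit⟩ := huw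
        have hs'mem : s' ∉ lw := by
          intro hmem
          rcases hlw : lw with _ | ⟨a, t⟩
          · rw [hlw] at hmem; simp at hmem
          · have ha : a = u := by
              have := hwit.2.2.2.1; rw [hlw] at this; simpa using this
            rw [hlw] at hmem
            rcases List.mem_cons.1 hmem with h | h
            · exact hus' (ha ▸ h.symm)
            · have := hwit.2.2.2.2.2.2.1
              rw [hlw] at this
              exact this s' h hs'
        exact hno (witL_good G S P hi hwit hs'mem hs' (Ne.symm hus') hadj hedge)
    | cons w zs' ih =>
        intro v hsuf hvS hzs hDv
        have hedge : (v, w) ∈ dEdges (P ⟨i, hi⟩) :=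
          mem_dEdges_of_suffix hsuf (by rw [List.cons_append, dEdges_cons₂]; exact List.mem_cons_self)
        have hadj : G.Adj v w := rel_of_mem_dEdges hch hedge
        have hwS : w ∉ S := hzs w (List.mem_cons_self)
        have hDw : D w := by
          apply upgrade w hwS
          intro x hx
          obtain ⟨u, huS, hux, huw⟩ := hDv x hx
          obtain ⟨lw, jsw, hwit⟩ := huw
          by_cases hmem : w ∈ lw
          · left
            refine ⟨u, huS, hux, witL_prefix G S P hwit hmem ?_⟩
            intro h; exact hwS (h ▸ huS)
          · right
            exact ⟨u, huS, hux, witL_extend G S P hi hwit hmem hwS hadj hedge⟩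
        refine ih w ?_ hwS (fun z hz => hzs z (List.mem_cons_of_mem _ hz)) hDw
        exact (List.suffix_cons v _).trans hsuf
  -- start the walk
  rcases hys0 : ys with _ | ⟨y0, ys'⟩
  · subst hys0
    have hedge : (s, s') ∈ dEdges (P ⟨i, hi⟩) := by
      rw [hl']; simp [dEdges_pair]
    exact hno (good_base G S P hi hs hs' hss' (rel_of_mem_dEdges hch hedge) hedge)
  · subst hys0
    have hedge : (s, y0) ∈ dEdges (P ⟨i, hi⟩) := by
      rw [hl', List.cons_append, dEdges_cons₂]
      exact List.mem_cons_self
    have hy0S : y0 ∉ S := hys y0 (List.mem_cons_self)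
    have hadj : G.Adj s y0 := rel_of_mem_dEdges hch hedge
    have hDy0 : D y0 := by
      apply upgrade y0 hy0S
      intro x hx
      exact Or.inr ⟨s, hs, Ne.symm hx, wit_base G S P hi hs hy0S hadj hedge⟩
    refine walk ys' y0 ?_ hy0S (fun z hz => hys z (List.mem_cons_of_mem _ hz)) hDy0
    rw [hl', List.cons_append]
    exact List.suffix_cons s _

end Stmt5X

/-- If the vertex set of a graph is partitioned into `S` and `Y = Sᶜ` and
`P₁, …, Pₘ` are directed `S`–`S` paths with `m ≥ 2|Y| + 1`, then there exists a
rainbow-monotone directed `S`–`S` path: its edges, in order, are `e₁, …, e_k` with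
`e_t` an edge of `P_{j_t}` for indices `j₁ < j₂ < … < j_k`. -/
theorem stmt_5 {V : Type*} [Fintype V] [DecidableEq V]
    (G : SimpleGraph V) (S : Finset V) (m : ℕ)
    (P : Fin m → List V)
    (hpaths : ∀ i, IsSSPathList G (S : Set V) (P i))
    (hm : 2 * Sᶜ.card + 1 ≤ m) :
    ∃ l : List V, IsSSPathList G (S : Set V) l ∧
      ∃ j : Fin (dEdges l).length → Fin m,
        StrictMono j ∧
        ∀ t, (dEdges l).get t ∈ dEdges (P (j t)) := by
  classical
  by_contra hno'
  have hno : ¬ Stmt5X.Good G S P := fun hg => hno' (Stmt5X.good_imp G S P hg)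
  have key : ∀ n, n ≤ m → n ≤ Stmt5X.phi G S P n := by
    intro n
    induction n with
    | zero => intro _; exact Nat.zero_le _
    | succ k ih =>
        intro hk
        have h1 : k ≤ Stmt5X.phi G S P k := ih (Nat.le_of_succ_le hk)
        have h2 : Stmt5X.phi G S P k < Stmt5X.phi G S P (k + 1) :=
          Stmt5X.step G S P hpaths hno (Nat.lt_of_succ_le hk)
        omega
  have h3 : m ≤ Stmt5X.phi G S P m := key m le_rfl
  have h4 : Stmt5X.phi G S P m ≤ 2 * Sᶜ.card := by
    calc Stmt5X.phi G S P m ≤ ∑ _v ∈ Sᶜ, 2 :=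
          Finset.sum_le_sum (fun v _ => Stmt5X.cW_le_two G S P m v)
      _ = Sᶜ.card * 2 := by rw [Finset.sum_const, smul_eq_mul]
      _ = 2 * Sᶜ.card := mul_comm _ _
  omega
end

section
/- Let F_1, …, F_n be matchings of size n in an r-uniform hypergraph, and let R be a rainbow matching of maximum size. For e ∈ R, then the number of indices i such that F_i is not represented in R and there exist r edges of F_i each intersecting e and intersecting no other edge of R, is at most r. -/
/-- Auxiliary counting lemma: if `s` consists of `r` pairwise disjoint finsets, each meeting
the `r`-element finset `t`, then each meets `t` in exactly one vertex and `t` is covered. -/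
lemma stmt7_key {V : Type*} [DecidableEq V] {r : ℕ} (s : Finset (Finset V)) (t : Finset V)
    (hdisj : ∀ a ∈ s, ∀ b ∈ s, a ≠ b → Disjoint a b)
    (hs : s.card = r) (ht : t.card = r)
    (hmeet : ∀ a ∈ s, (a ∩ t).Nonempty) :
    (∀ a ∈ s, (a ∩ t).card = 1) ∧ ∀ v ∈ t, ∃ a ∈ s, v ∈ a := by
  have hdisj' : ∀ a ∈ s, ∀ b ∈ s, a ≠ b → Disjoint (a ∩ t) (b ∩ t) := fun a ha b hb hab =>
    (hdisj a ha b hb hab).mono Finset.inter_subset_left Finset.inter_subset_left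
  have hsub : s.biUnion (· ∩ t) ⊆ t := Finset.biUnion_subset.mpr fun a _ => Finset.inter_subset_right
  have hcard1 : (s.biUnion (· ∩ t)).card = ∑ a ∈ s, (a ∩ t).card := Finset.card_biUnion hdisj'
  have hone : ∀ a ∈ s, 1 ≤ (a ∩ t).card := fun a ha => Finset.card_pos.mpr (hmeet a ha)
  have hge : s.card ≤ ∑ a ∈ s, (a ∩ t).card := by
    rw [Finset.card_eq_sum_ones s]
    exact Finset.sum_le_sum hone
  have hle : ∑ a ∈ s, (a ∩ t).card ≤ t.card := hcard1 ▸ Finset.card_le_card hsub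
  have hsum : ∑ a ∈ s, (a ∩ t).card = r := le_antisymm (ht ▸ hle) (hs ▸ hge)
  constructor
  · intro a ha
    by_contra hne
    have h2 : 2 ≤ (a ∩ t).card := by have := hone a ha; omega
    have : ∑ b ∈ s, 1 < ∑ b ∈ s, (b ∩ t).card :=
      Finset.sum_lt_sum hone ⟨a, ha, by omega⟩
    rw [Finset.sum_const, smul_eq_mul, mul_one, hsum, hs] at this
    omega
  · intro v hv
    have heq : s.biUnion (· ∩ t) = t :=
      Finset.eq_of_subset_of_card_le hsub (by rw [hcard1, hsum, ht])
    rw [← heq] at hv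
    obtain ⟨a, ha, hva⟩ := Finset.mem_biUnion.mp hv
    exact ⟨a, ha, (Finset.mem_inter.mp hva).1⟩

/-- Let `F₁, …, Fₙ` be matchings of size `n` in an `r`-uniform
hypergraph and let `R` (given by indices `I` and choice `c`) be a rainbow matching of
maximum size. For `e ∈ R`, the number of indices `i` such that `Fᵢ` is not represented in
`R` and there exist `r` edges of `Fᵢ`, each intersecting `e` and no other edge of `R`, is
at most `r`. -/
theorem stmt_7 {V : Type*} [DecidableEq V] (r n : ℕ)
    (E : Set (Finset V)) (hunifE : ∀ e ∈ E, e.card = r)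
    (F : Fin n → Finset (Finset V))
    (hedges : ∀ i, ∀ e ∈ F i, e ∈ E)
    (hmatch : ∀ i, ∀ e ∈ F i, ∀ f ∈ F i, e ≠ f → Disjoint e f)
    (hsize : ∀ i, (F i).card = n)
    (I : Finset (Fin n)) (c : Fin n → Finset V)
    (hc : ∀ i ∈ I, c i ∈ F i)
    (hdisj : ∀ i ∈ I, ∀ j ∈ I, i ≠ j → Disjoint (c i) (c j))
    (hmax : ∀ (J : Finset (Fin n)) (d : Fin n → Finset V),
      (∀ i ∈ J, d i ∈ F i) →
      (∀ i ∈ J, ∀ j ∈ J, i ≠ j → Disjoint (d i) (d j)) →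
      J.card ≤ I.card)
    (e : Finset V) (he : e ∈ I.image c) :
    {i : Fin n | i ∉ I ∧ ∃ g : Finset (Finset V), g ⊆ F i ∧ g.card = r ∧
      ∀ a ∈ g, (a ∩ e).Nonempty ∧ ∀ f ∈ I.image c, f ≠ e → Disjoint a f}.ncard ≤ r := by
  classical
  by_contra hcon
  push_neg at hcon
  set S : Set (Fin n) := {i : Fin n | i ∉ I ∧ ∃ g : Finset (Finset V), g ⊆ F i ∧ g.card = r ∧
      ∀ a ∈ g, (a ∩ e).Nonempty ∧ ∀ f ∈ I.image c, f ≠ e → Disjoint a f} with hS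
  obtain ⟨i₀, hi₀I, hi₀e⟩ := Finset.mem_image.mp he
  have her : e.card = r := hunifE e (hedges i₀ e (hi₀e ▸ hc i₀ hi₀I))
  -- extension lemma: no edge of an unrepresented matching can be disjoint from all of R
  have hext : ∀ i ∉ I, ∀ f ∈ F i, (∀ k ∈ I, Disjoint f (c k)) → False := by
    intro i hiI f hf hdis
    have hmem : ∀ k ∈ insert i I, Function.update c i f k ∈ F k := by
      intro k hk
      rcases Finset.mem_insert.mp hk with rfl | hk
      · rw [Function.update_self]; exact hf
      · rw [Function.update_of_ne (ne_of_mem_of_not_mem hk hiI)]; exact hc k hk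
    have hdd : ∀ k ∈ insert i I, ∀ l ∈ insert i I, k ≠ l →
        Disjoint (Function.update c i f k) (Function.update c i f l) := by
      intro k hk l hl hkl
      rcases Finset.mem_insert.mp hk with rfl | hkI
      · rcases Finset.mem_insert.mp hl with rfl | hlI
        · exact absurd rfl hkl
        · rw [Function.update_self, Function.update_of_ne (Ne.symm hkl)]
          exact hdis l hlI
      · rcases Finset.mem_insert.mp hl with rfl | hlI
        · rw [Function.update_self, Function.update_of_ne hkl]
          exact (hdis k hkI).symm
        · rw [Function.update_of_ne (ne_of_mem_of_not_mem hkI hiI),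
            Function.update_of_ne (ne_of_mem_of_not_mem hlI hiI)]
          exact hdisj k hkI l hlI hkl
    have := hmax _ _ hmem hdd
    rw [Finset.card_insert_of_notMem hiI] at this
    omega
  rcases Nat.lt_or_ge r 2 with hr | hr
  · -- case r ≤ 1
    have hSne : S.Nonempty := Set.nonempty_of_ncard_ne_zero (by omega)
    obtain ⟨i, hiS⟩ := hSne
    rw [hS, Set.mem_setOf_eq] at hiS
    obtain ⟨hiI, -⟩ := hiS
    set B := I.biUnion (fun k => (F i).filter (fun f => (f ∩ c k).Nonempty)) with hB
    have hBsub : B ⊆ F i := Finset.biUnion_subset.mpr fun k _ => Finset.filter_subset _ _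
    have hBcard : B.card ≤ I.card := by
      calc B.card ≤ ∑ k ∈ I, ((F i).filter (fun f => (f ∩ c k).Nonempty)).card :=
            Finset.card_biUnion_le
        _ ≤ ∑ _k ∈ I, 1 := by
            refine Finset.sum_le_sum fun k hk => Finset.card_le_one.mpr ?_
            intro f hf f' hf'
            rw [Finset.mem_filter] at hf hf'
            obtain ⟨v, hv⟩ := hf.2
            obtain ⟨w, hw⟩ := hf'.2
            rw [Finset.mem_inter] at hv hw
            have hck : (c k).card ≤ 1 := by
              rw [hunifE (c k) (hedges k (c k) (hc k hk))]; omega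
            have hvw : v = w := Finset.card_le_one.mp hck v hv.2 w hw.2
            by_contra hne
            exact Finset.disjoint_left.mp (hmatch i f hf.1 f' hf'.1 hne) hv.1 (hvw ▸ hw.1)
        _ = I.card := by simp
    have hIcard : I.card < n := by
      have hsub : I ⊆ Finset.univ.erase i := fun k hk =>
        Finset.mem_erase.mpr ⟨ne_of_mem_of_not_mem hk hiI, Finset.mem_univ k⟩
      have h1 := Finset.card_le_card hsub
      rw [Finset.card_erase_of_mem (Finset.mem_univ i), Finset.card_univ,
        Fintype.card_fin] at h1
      have h2 := i.isLt
      omega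
    have hFB : (F i \ B).Nonempty := by
      rw [← Finset.card_pos, Finset.card_sdiff_of_subset hBsub, hsize i]
      omega
    obtain ⟨f, hf⟩ := hFB
    rw [Finset.mem_sdiff] at hf
    refine hext i hiI f hf.1 fun k hk => ?_
    by_contra hnd
    rw [Finset.not_disjoint_iff_nonempty_inter] at hnd
    exact hf.2 (Finset.mem_biUnion.mpr ⟨k, hk, Finset.mem_filter.mpr ⟨hf.1, hnd⟩⟩)
  · -- case r ≥ 2
    have hene : e.Nonempty := Finset.card_pos.mp (by rw [her]; omega)
    have hcinj : ∀ k ∈ I, c k = e → k = i₀ := by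
      intro k hk hke
      by_contra hne
      have hd := hdisj k hk i₀ hi₀I hne
      rw [hke, hi₀e] at hd
      obtain ⟨v, hv⟩ := hene
      exact Finset.disjoint_left.mp hd hv hv
    have hswap : ∀ i j : Fin n, i ≠ j → i ∉ I → j ∉ I →
        ∀ a ∈ F i, ∀ b ∈ F j,
        (∀ f ∈ I.image c, f ≠ e → Disjoint a f) →
        (∀ f ∈ I.image c, f ≠ e → Disjoint b f) →
        Disjoint a b → False := by
      intro i j hij hiI hjI a ha b hb haR hbR hab
      set J : Finset (Fin n) := insert i (insert j (I.erase i₀)) with hJ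
      set d : Fin n → Finset V := Function.update (Function.update c j b) i a with hd
      have hdi : d i = a := by rw [hd, Function.update_self]
      have hdj : d j = b := by
        rw [hd, Function.update_of_ne (Ne.symm hij), Function.update_self]
      have hdk : ∀ k ∈ I.erase i₀, d k = c k := by
        intro k hk
        have hkI := Finset.mem_erase.mp hk
        rw [hd, Function.update_of_ne (ne_of_mem_of_not_mem hkI.2 hiI),
          Function.update_of_ne (ne_of_mem_of_not_mem hkI.2 hjI)]
      have hkne : ∀ k ∈ I.erase i₀, c k ≠ e := by
        intro k hk hke
        exact (Finset.mem_erase.mp hk).1 (hcinj k (Finset.mem_erase.mp hk).2 hke)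
      have haC : ∀ k ∈ I.erase i₀, Disjoint a (c k) := fun k hk =>
        haR (c k) (Finset.mem_image_of_mem c (Finset.mem_erase.mp hk).2) (hkne k hk)
      have hbC : ∀ k ∈ I.erase i₀, Disjoint b (c k) := fun k hk =>
        hbR (c k) (Finset.mem_image_of_mem c (Finset.mem_erase.mp hk).2) (hkne k hk)
      have hmemJ : ∀ k, k ∈ J ↔ (k = i ∨ k = j ∨ k ∈ I.erase i₀) := by
        intro k
        rw [hJ]
        simp [Finset.mem_insert]
      have hmem : ∀ k ∈ J, d k ∈ F k := by
        intro k hk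
        rcases (hmemJ k).mp hk with h1 | h1 | h1
        · rw [h1, hdi]; exact ha
        · rw [h1, hdj]; exact hb
        · rw [hdk k h1]; exact hc k (Finset.mem_erase.mp h1).2
      have hdd : ∀ k ∈ J, ∀ l ∈ J, k ≠ l → Disjoint (d k) (d l) := by
        intro k hk l hl hkl
        rcases (hmemJ k).mp hk with h1 | h1 | h1 <;>
          rcases (hmemJ l).mp hl with h2 | h2 | h2
        · exact absurd (h1.trans h2.symm) hkl
        · rw [h1, h2, hdi, hdj]; exact hab
        · rw [h1, hdi, hdk l h2]; exact haC l h2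
        · rw [h1, h2, hdi, hdj]; exact hab.symm
        · exact absurd (h1.trans h2.symm) hkl
        · rw [h1, hdj, hdk l h2]; exact hbC l h2
        · rw [h2, hdi, hdk k h1]; exact (haC k h1).symm
        · rw [h2, hdj, hdk k h1]; exact (hbC k h1).symm
        · rw [hdk k h1, hdk l h2]
          exact hdisj k (Finset.mem_erase.mp h1).2 l (Finset.mem_erase.mp h2).2 hkl
      have hiJ : i ∉ insert j (I.erase i₀) := by
        intro h
        rcases Finset.mem_insert.mp h with h' | h'
        · exact hij h'
        · exact hiI (Finset.mem_erase.mp h').2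
      have hjJ : j ∉ I.erase i₀ := fun h => hjI (Finset.mem_erase.mp h).2
      have hcJ : J.card = I.card + 1 := by
        rw [hJ, Finset.card_insert_of_notMem hiJ, Finset.card_insert_of_notMem hjJ,
          Finset.card_erase_of_mem hi₀I]
        have : 1 ≤ I.card := Finset.card_pos.mpr ⟨i₀, hi₀I⟩
        omega
      have := hmax J d hmem hdd
      omega
    -- extract r+1 indices from S
    have hfin : S.Finite := Set.toFinite S
    have hScard : r + 1 ≤ hfin.toFinset.card := by
      rw [← Set.ncard_eq_toFinset_card S hfin]
      omega
    obtain ⟨T, hTsub, hTcard⟩ := Finset.exists_subset_card_eq hScard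
    have hTS : ∀ j ∈ T, j ∉ I ∧ ∃ g : Finset (Finset V), g ⊆ F j ∧ g.card = r ∧
        ∀ a ∈ g, (a ∩ e).Nonempty ∧ ∀ f ∈ I.image c, f ≠ e → Disjoint a f := by
      intro j hj
      have hj' := hTsub hj
      rw [Set.Finite.mem_toFinset, hS, Set.mem_setOf_eq] at hj'
      exact hj'
    have hTI : ∀ j ∈ T, j ∉ I := fun j hj => (hTS j hj).1
    have hgex : ∀ j : Fin n, ∃ gg : Finset (Finset V), j ∈ T → gg ⊆ F j ∧ gg.card = r ∧
        ∀ a ∈ gg, (a ∩ e).Nonempty ∧ ∀ f ∈ I.image c, f ≠ e → Disjoint a f := by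
      intro j
      by_cases hj : j ∈ T
      · obtain ⟨-, gg, h⟩ := hTS j hj
        exact ⟨gg, fun _ => h⟩
      · exact ⟨∅, fun h => absurd h hj⟩
    choose g hg using hgex
    have hgF : ∀ j ∈ T, g j ⊆ F j := fun j hj => (hg j hj).1
    have hgcard : ∀ j ∈ T, (g j).card = r := fun j hj => (hg j hj).2.1
    have hacard : ∀ j ∈ T, ∀ a ∈ g j, a.card = r := fun j hj a ha =>
      hunifE a (hedges j a (hgF j hj ha))
    have hpair : ∀ j ∈ T, ∀ a ∈ g j, ∀ b ∈ g j, a ≠ b → Disjoint a b :=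
      fun j hj a ha b hb hab => hmatch j a (hgF j hj ha) b (hgF j hj hb) hab
    have hmeet_e : ∀ j ∈ T, ∀ a ∈ g j, (a ∩ e).Nonempty :=
      fun j hj a ha => ((hg j hj).2.2 a ha).1
    have haRp : ∀ j ∈ T, ∀ a ∈ g j, ∀ f ∈ I.image c, f ≠ e → Disjoint a f :=
      fun j hj a ha => ((hg j hj).2.2 a ha).2
    have hcross : ∀ i' ∈ T, ∀ j ∈ T, i' ≠ j → ∀ a ∈ g i', ∀ b ∈ g j, (a ∩ b).Nonempty := by
      intro i' hi' j hj hij a ha b hb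
      rw [← Finset.not_disjoint_iff_nonempty_inter]
      intro hd
      exact hswap i' j hij (hTI i' hi') (hTI j hj) a (hgF i' hi' ha) b (hgF j hj hb)
        (haRp i' hi' a ha) (haRp j hj b hb) hd
    have hKe : ∀ j ∈ T, (∀ a ∈ g j, (a ∩ e).card = 1) ∧ ∀ v ∈ e, ∃ a ∈ g j, v ∈ a :=
      fun j hj => stmt7_key (g j) e (hpair j hj) (hgcard j hj) her (hmeet_e j hj)
    have hKcross : ∀ i' ∈ T, ∀ j ∈ T, i' ≠ j → ∀ b ∈ g j,
        (∀ a ∈ g i', (a ∩ b).card = 1) ∧ ∀ v ∈ b, ∃ a ∈ g i', v ∈ a :=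
      fun i' hi' j hj hij b hb => stmt7_key (g i') b (hpair i' hi') (hgcard i' hi')
        (hacard j hj b hb) (fun a ha => hcross i' hi' j hj hij a ha b hb)
    have hTne : T.Nonempty := by
      rw [← Finset.card_pos, hTcard]; omega
    obtain ⟨i₁, hi₁⟩ := hTne
    set X : Finset V := (g i₁).biUnion (fun a => a) with hX
    have hXcard : X.card = r * r := by
      rw [hX, Finset.card_biUnion (fun a ha b hb hab => hpair i₁ hi₁ a ha b hb hab)]
      have hcc : ∀ a ∈ g i₁, a.card = r := fun a ha => hacard i₁ hi₁ a ha
      rw [Finset.sum_congr rfl hcc, Finset.sum_const, smul_eq_mul, hgcard i₁ hi₁]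
    obtain ⟨x, hx, y, hy, hxyne⟩ := Finset.one_lt_card.mp (show 1 < e.card by rw [her]; omega)
    have hLex : ∀ j : Fin n, ∃ a : Finset V, j ∈ T → a ∈ g j ∧ x ∈ a := by
      intro j
      by_cases hj : j ∈ T
      · obtain ⟨a, ha, hxa⟩ := (hKe j hj).2 x hx
        exact ⟨a, fun _ => ⟨ha, hxa⟩⟩
      · exact ⟨∅, fun h => absurd h hj⟩
    choose L hL using hLex
    have hLg : ∀ j ∈ T, L j ∈ g j := fun j hj => (hL j hj).1
    have hxL : ∀ j ∈ T, x ∈ L j := fun j hj => (hL j hj).2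
    have hLsub : ∀ j ∈ T, L j ⊆ X := by
      intro j hj v hv
      by_cases hji : j = i₁
      · refine Finset.mem_biUnion.mpr ⟨L j, ?_, hv⟩
        rw [← hji]
        exact hLg j hj
      · obtain ⟨a, ha, hva⟩ := (hKcross i₁ hi₁ j hj (fun h => hji h.symm) (L j) (hLg j hj)).2 v hv
        exact Finset.mem_biUnion.mpr ⟨a, ha, hva⟩
    have hLX1 : ∀ j ∈ T, ∀ k ∈ T, j ≠ k → L j ∩ L k = {x} := by
      intro j hj k hk hjk
      have h1 : (L j ∩ L k).card = 1 :=
        (hKcross j hj k hk hjk (L k) (hLg k hk)).1 (L j) (hLg j hj)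
      obtain ⟨z, hz⟩ := Finset.card_eq_one.mp h1
      have hxz : x ∈ L j ∩ L k := Finset.mem_inter.mpr ⟨hxL j hj, hxL k hk⟩
      rw [hz] at hxz ⊢
      rw [Finset.mem_singleton] at hxz
      rw [hxz]
    set U : Finset V := T.biUnion (fun j => L j \ {x}) with hU
    have hUdisj : ∀ j ∈ T, ∀ k ∈ T, j ≠ k → Disjoint (L j \ {x}) (L k \ {x}) := by
      intro j hj k hk hjk
      rw [Finset.disjoint_left]
      intro v hv hv'
      rw [Finset.mem_sdiff, Finset.mem_singleton] at hv hv'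
      have hvm : v ∈ L j ∩ L k := Finset.mem_inter.mpr ⟨hv.1, hv'.1⟩
      rw [hLX1 j hj k hk hjk, Finset.mem_singleton] at hvm
      exact hv.2 hvm
    have hUcard : U.card = (r + 1) * (r - 1) := by
      rw [hU, Finset.card_biUnion hUdisj]
      have hcc : ∀ j ∈ T, (L j \ {x}).card = r - 1 := by
        intro j hj
        rw [Finset.card_sdiff_of_subset (Finset.singleton_subset_iff.mpr (hxL j hj)),
          Finset.card_singleton, hacard j hj (L j) (hLg j hj)]
      rw [Finset.sum_congr rfl hcc, Finset.sum_const, smul_eq_mul, hTcard]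
    have hUsub : U ⊆ X \ {x} := by
      rw [hU]
      refine Finset.biUnion_subset.mpr fun j hj => ?_
      exact Finset.sdiff_subset_sdiff (hLsub j hj) (Finset.Subset.refl _)
    have hxX : x ∈ X := hLsub i₁ hi₁ (hxL i₁ hi₁)
    have hXxcard : (X \ {x}).card = r * r - 1 := by
      rw [Finset.card_sdiff_of_subset (Finset.singleton_subset_iff.mpr hxX), Finset.card_singleton,
        hXcard]
    have hUX : U = X \ {x} := by
      refine Finset.eq_of_subset_of_card_le hUsub ?_
      rw [hXxcard, hUcard]
      obtain ⟨m, rfl⟩ : ∃ m, r = m + 2 := ⟨r - 2, by omega⟩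
      have h9 : (m + 2 + 1) * (m + 2 - 1) + 1 = (m + 2) * (m + 2) := by
        have e1 : m + 2 - 1 = m + 1 := by omega
        rw [e1]; ring
      omega
    have hyU : y ∈ U := by
      rw [hUX, Finset.mem_sdiff, Finset.mem_singleton]
      constructor
      · obtain ⟨a, ha, hya⟩ := (hKe i₁ hi₁).2 y hy
        exact Finset.mem_biUnion.mpr ⟨a, ha, hya⟩
      · exact fun h => hxyne h.symm
    rw [hU] at hyU
    obtain ⟨j, hjT, hyj⟩ := Finset.mem_biUnion.mp hyU
    rw [Finset.mem_sdiff] at hyj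
    have hy1 : (L j ∩ e).card = 1 := (hKe j hjT).1 (L j) (hLg j hjT)
    have hsub2 : ({x, y} : Finset V) ⊆ L j ∩ e := by
      intro v hv
      rcases Finset.mem_insert.mp hv with rfl | hv
      · exact Finset.mem_inter.mpr ⟨hxL j hjT, hx⟩
      · rw [Finset.mem_singleton] at hv
        subst hv
        exact Finset.mem_inter.mpr ⟨hyj.1, hy⟩
    have h2 : 2 ≤ (L j ∩ e).card := by
      have hcle := Finset.card_le_card hsub2
      rw [Finset.card_insert_of_notMem (by simpa using hxyne), Finset.card_singleton] at hcle
      omega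
    omega
end

section
/- Let r ≥ 2 be an integer and let n, q be nonnegative real numbers satisfying (2r−1)q² − (n + 2rn + r)q + 2n² ≤ 0 together with q ≥ (n + 2rn + r − √((n+2rn+r)² − 8(2r−1)n²))/(2(2r−1)). Then q > (n − 1/2 − 3/(4r−6))/(r − 1/2). -/
/-- Purely arithmetic claim: if `r ≥ 2` is an integer, `n, q ≥ 0` are
reals with `(2r-1)q² - (n + 2rn + r)q + 2n² ≤ 0` and `q` at least the smaller root of
this quadratic, then `q > (n - 1/2 - 3/(4r-6)) / (r - 1/2)`. -/
theorem stmt_8 (r : ℕ) (hr : 2 ≤ r) (n q : ℝ) (hn : 0 ≤ n) (hq : 0 ≤ q)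
    (h1 : (2 * (r : ℝ) - 1) * q ^ 2 - (n + 2 * r * n + r) * q + 2 * n ^ 2 ≤ 0)
    (h2 : (n + 2 * (r : ℝ) * n + r -
        Real.sqrt ((n + 2 * r * n + r) ^ 2 - 8 * (2 * r - 1) * n ^ 2)) /
        (2 * (2 * r - 1)) ≤ q) :
    (n - 1 / 2 - 3 / (4 * (r : ℝ) - 6)) / ((r : ℝ) - 1 / 2) < q := by
  have hR : (2:ℝ) ≤ (r:ℝ) := by exact_mod_cast hr
  have h3 : (0:ℝ) < 4*(r:ℝ) - 6 := by linarith
  have h4 : (0:ℝ) < (r:ℝ) - 1/2 := by linarith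
  have h5 : (0:ℝ) < 2*(2*(r:ℝ)-1) := by linarith
  set s : ℝ := 6 / (4*(r:ℝ) - 6) with hs
  have hs0 : 0 < s := by positivity
  have hs6 : s * (4*(r:ℝ)-6) = 6 := div_mul_cancel₀ 6 (ne_of_gt h3)
  have key : Real.sqrt ((n + 2*(r:ℝ)*n + r)^2 - 8*(2*r-1)*n^2)
      < (2*(r:ℝ)-3)*n + r + 2 + 2*s := by
    apply (Real.sqrt_lt' (by nlinarith)).mpr
    have h8 : n * (s * (4*(r:ℝ)-6) - 6) = 0 := by rw [hs6]; ring
    nlinarith [h8, hs0, hR, mul_pos hs0 hs0,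
      mul_nonneg hs0.le (by linarith : (0:ℝ) ≤ (r:ℝ))]
  rw [div_lt_iff₀ h4]
  rw [div_le_iff₀ h5] at h2
  have h7 : 3 / (4*(r:ℝ)-6) = s / 2 := by rw [hs]; ring
  linarith [key, h2]
end
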